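/- arXiv:1011.5318 — 7 statements merged into one kernel-verified Lean document; each statement's English description precedes it below -/
import Mathlib

section
/- If limsup_{k→∞} k P_k < |C|/(2e), then there exist ε > 0 and K such that for all k ≥ K: |f(z)| ≥ (1+ε) r_{k+1} whenever |z| = (1 − 1/k) r_k, and |f(z)| ≥ (1+ε) r_{k+1} whenever |z − a_k| = r_k/k. -/
open Filter Finset Topology

section auxlemmas

lemma auxA {M : Type*} [CommMonoid M] (h : ℕ → M) (k : ℕ) :
    ∏ j ∈ Finset.Icc 1 k, h j = ∏ j ∈ Finset.range k, h (j + 1) := by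
  induction k with
  | zero => simp
  | succ n ih =>
      rw [Finset.prod_Icc_succ_top (Nat.le_add_left 1 n), ih, Finset.prod_range_succ]

lemma auxW {ι : Type*} (s : Finset ι) (x : ι → ℝ) (h0 : ∀ i ∈ s, 0 ≤ x i)
    (h1 : ∀ i ∈ s, x i ≤ 1) : 1 - ∑ i ∈ s, x i ≤ ∏ i ∈ s, (1 - x i) := by
  induction s using Finset.cons_induction with
  | empty => simp
  | cons a s ha ih =>
      rw [Finset.prod_cons, Finset.sum_cons]
      have hs0 : (0:ℝ) ≤ ∑ i ∈ s, x i :=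
        Finset.sum_nonneg fun i hi => h0 i (Finset.mem_cons_of_mem hi)
      have h0a : 0 ≤ x a := h0 a (Finset.mem_cons_self a s)
      have h1a : x a ≤ 1 := h1 a (Finset.mem_cons_self a s)
      have ih' := ih (fun i hi => h0 i (Finset.mem_cons_of_mem hi))
        (fun i hi => h1 i (Finset.mem_cons_of_mem hi))
      calc 1 - (x a + ∑ i ∈ s, x i) ≤ (1 - x a) * (1 - ∑ i ∈ s, x i) := by nlinarith
        _ ≤ (1 - x a) * ∏ i ∈ s, (1 - x i) := by
            apply mul_le_mul_of_nonneg_left ih' (by linarith)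

lemma auxG (k : ℕ) (t : Finset ℕ) (ht : ∀ j ∈ t, k ≤ j) :
    ∑ j ∈ t, ((2:ℝ)⁻¹) ^ (j - k) ≤ 2 := by
  have hinj : Set.InjOn (fun j => j - k) t := by
    intro x hx y hy hxy
    have h1 := ht x hx; have h2 := ht y hy
    have hxy' : x - k = y - k := hxy
    omega
  have := Finset.sum_image (f := fun i : ℕ => ((2:ℝ)⁻¹) ^ i) (g := fun j : ℕ => j - k)
    (s := t) (by intro x hx y hy hxy; exact hinj hx hy hxy)
  rw [← this]
  calc ∑ i ∈ t.image (fun j => j - k), ((2:ℝ)⁻¹) ^ i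
      ≤ ∑' i : ℕ, ((2:ℝ)⁻¹) ^ i := by
        exact Summable.sum_le_tsum _ (fun i _ => by positivity)
          (summable_geometric_of_lt_one (by norm_num) (by norm_num))
    _ = 2 := by
        rw [tsum_geometric_of_lt_one (by norm_num) (by norm_num)]; norm_num

lemma auxG1 (m : ℕ) : ∑ j ∈ Finset.range m, ((2:ℝ)⁻¹) ^ (m - j) ≤ 1 := by
  induction m with
  | zero => simp
  | succ n ih =>
      rw [Finset.sum_range_succ]
      have : ∀ j ∈ Finset.range n, ((2:ℝ)⁻¹) ^ (n + 1 - j) = 2⁻¹ * ((2:ℝ)⁻¹) ^ (n - j) := by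
        intro j hj
        have hj' := Finset.mem_range.mp hj
        rw [show n + 1 - j = (n - j) + 1 by omega, pow_succ]
        ring
      rw [Finset.sum_congr rfl this, ← Finset.mul_sum]
      have : (2:ℝ)⁻¹ * ∑ j ∈ Finset.range n, ((2:ℝ)⁻¹) ^ (n - j) ≤ 2⁻¹ * 1 :=
        mul_le_mul_of_nonneg_left ih (by norm_num)
      simp only [Nat.add_sub_cancel_left] at *
      norm_num at this ⊢
      linarith

lemma auxG2 (m : ℕ) : ∑ j ∈ Finset.range m, ((2:ℝ)⁻¹) ^ (m - 1 - j) ≤ 2 := by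
  cases m with
  | zero => simp
  | succ n =>
      rw [Finset.sum_range_succ]
      simp only [Nat.add_sub_cancel]
      have : ∀ j ∈ Finset.range n, ((2:ℝ)⁻¹) ^ (n + 1 - 1 - j) = ((2:ℝ)⁻¹) ^ (n - j) := by
        intro j hj; norm_num
      calc ∑ j ∈ Finset.range n, ((2:ℝ)⁻¹) ^ (n + 1 - 1 - j) + ((2:ℝ)⁻¹) ^ (n - n)
          = ∑ j ∈ Finset.range n, ((2:ℝ)⁻¹) ^ (n - j) + 1 := by
            rw [Finset.sum_congr rfl this]; simp
        _ ≤ 2 := by have := auxG1 n; linarith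

lemma auxAlg {k t : ℝ} (hk : 2 ≤ k) (ht : 0 ≤ t) :
    (1 - 1/k) * (1 - 5*t) * (1 + t) ≤ 1 - 1/k - t := by
  have hk0 : 0 < k := by linarith
  have h1 : 1/k ≤ 1/2 := by
    rw [div_le_div_iff₀ hk0 (by norm_num)]; linarith
  have h2 : 0 < 1/k := by positivity
  nlinarith [sq_nonneg t, mul_nonneg ht ht]

lemma auxE (N : ℕ) : Tendsto (fun k : ℕ => (1 - 1/(k:ℝ)) ^ (N + k - 1)) atTop
    (𝓝 (Real.exp 1)⁻¹) := by
  have h1 : Tendsto (fun k : ℕ => (1 + (-1)/(k:ℝ)) ^ k) atTop (𝓝 (Real.exp (-1))) :=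
    Real.tendsto_one_add_div_pow_exp (-1)
  have hx : Tendsto (fun k : ℕ => 1 - 1/(k:ℝ)) atTop (𝓝 1) := by
    have : Tendsto (fun n : ℕ => 1 / (n:ℝ)) atTop (𝓝 0) := tendsto_one_div_atTop_nhds_zero_nat
    have h := (tendsto_const_nhds (x := (1:ℝ)) (f := atTop)).sub this
    simpa using h
  have h2 : Tendsto (fun k : ℕ => (1 - 1/(k:ℝ)) ^ k * ((1 - 1/(k:ℝ)) ^ N * (1 - 1/(k:ℝ))⁻¹))
      atTop (𝓝 (Real.exp (-1) * (1 * 1))) := by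
    refine Tendsto.mul ?_ (Tendsto.mul ?_ ?_)
    · refine h1.congr fun k => by rw [neg_div]; ring_nf
    · simpa using hx.pow N
    · simpa using hx.inv₀ one_ne_zero
  rw [Real.exp_neg] at h2
  refine Tendsto.congr' ?_ (by simpa using h2)
  filter_upwards [eventually_ge_atTop 2] with k hk
  have hk2 : (2:ℝ) ≤ (k:ℝ) := by exact_mod_cast hk
  have hx0 : (1 - 1/(k:ℝ)) ≠ 0 := by
    have h3 : 1/(k:ℝ) ≤ 1/2 := by
      rw [div_le_div_iff₀ (by linarith) (by norm_num)]; linarith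
    have h4 : 1/(k:ℝ) > 0 := by positivity
    intro h; rw [sub_eq_zero] at h; linarith [h ▸ h3]
  have hNk : N + k - 1 + 1 = k + N := by omega
  have := pow_succ (1 - 1/(k:ℝ)) (N + k - 1)
  rw [hNk] at this
  simp only [one_div] at this hx0 ⊢
  rw [← mul_assoc, ← pow_add, this, mul_assoc, mul_inv_cancel₀ hx0, mul_one]

noncomputable def auxAbsHom : ℂ →* ℝ :=
  { toFun := fun x => ‖x‖, map_one' := by simp, map_mul' := by simp }

end auxlemmas

set_option maxHeartbeats 3200000 in
/-- if `limsup k P_k < |C|/(2e)`, then there are `ε > 0` and `K` such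
that for `k ≥ K`, `|f(z)| ≥ (1+ε) r_{k+1}` on the circles `|z| = (1 - 1/k) r_k`
and `|z - a_k| = r_k / k`. -/
theorem stmt_11 (N : ℕ) (C : ℂ) (hC : C ≠ 0)
    (P r : ℕ → ℝ)
    (hP : ∀ k, 1 ≤ k → 0 < P k)
    (hPlim : Tendsto (fun k : ℕ => (P k) ^ ((1 : ℝ) / k)) atTop (nhds 1))
    (hrpos : ∀ k, 1 ≤ k → 0 < r k)
    (hr2 : ∀ᶠ k in atTop, 2 * r k ≤ r (k + 1))
    (hrec : ∀ k, 1 ≤ k →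
      r (k + 1) = P k * (r k) ^ N * ∏ j ∈ Finset.Icc 1 k, (1 + r k / r j))
    (a : ℕ → ℂ) (ha : ∀ k, 1 ≤ k → ‖a k‖ = r k)
    (f : ℂ → ℂ)
    (hmul : ∀ z : ℂ, Multipliable (fun k : ℕ => 1 - z / a (k + 1)))
    (hf : ∀ z : ℂ, f z = C * z ^ N * ∏' k : ℕ, (1 - z / a (k + 1)))
    (hsup : Filter.limsup (fun k : ℕ => (((k : ℝ) * P k : ℝ) : EReal)) atTop <
      ((‖C‖ / (2 * Real.exp 1) : ℝ) : EReal)) :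
    ∃ ε : ℝ, 0 < ε ∧ ∃ K : ℕ, ∀ k, K ≤ k →
      (∀ z : ℂ, ‖z‖ = (1 - 1 / (k : ℝ)) * r k →
        (1 + ε) * r (k + 1) ≤ ‖f z‖) ∧
      (∀ z : ℂ, ‖z - a k‖ = r k / (k : ℝ) →
        (1 + ε) * r (k + 1) ≤ ‖f z‖) := by
  have hcC0 : 0 < ‖C‖ := norm_pos_iff.mpr hC
  set cC := ‖C‖ with hcCdef
  have he : (0:ℝ) < Real.exp 1 := Real.exp_pos 1
  -- extract L
  obtain ⟨L, hsupL, hLlt'⟩ := EReal.exists_between_coe_real hsup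
  have hLlt : L < cC / (2 * Real.exp 1) := by exact_mod_cast hLlt'
  have hLev : ∀ᶠ k : ℕ in atTop, (k:ℝ) * P k < L := by
    have h := Filter.eventually_lt_of_limsup_lt hsupL
    filter_upwards [h] with k hk
    exact_mod_cast hk
  have hL0 : 0 < L := by
    obtain ⟨k, hklt, hk1⟩ := (hLev.and (eventually_ge_atTop 1)).exists
    have h1 : (0:ℝ) < (k:ℝ) * P k := by
      have := hP k hk1
      have hk0 : (0:ℝ) < (k:ℝ) := by exact_mod_cast hk1
      positivity
    linarith
  -- K0
  obtain ⟨K0', hK0'⟩ := eventually_atTop.mp hr2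
  set K0 := max K0' 1 with hK0def
  have hK01 : 1 ≤ K0 := le_max_right _ _
  have hK0 : ∀ m, K0 ≤ m → 2 * r m ≤ r (m + 1) :=
    fun m hm => hK0' m (le_trans (le_max_left _ _) hm)
  -- growth
  have hgrow : ∀ j, K0 ≤ j → ∀ m, j ≤ m → r j * 2 ^ (m - j) ≤ r m := by
    intro j hj m hm
    induction m, hm using Nat.le_induction with
    | base => simp
    | succ m hm ih =>
        have h2 : 2 * r m ≤ r (m + 1) := hK0 m (le_trans hj hm)
        calc r j * 2 ^ (m + 1 - j) = (r j * 2 ^ (m - j)) * 2 := by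
              rw [show m + 1 - j = (m - j) + 1 by omega, pow_succ]; ring
          _ ≤ r m * 2 := by
              have := hrpos j (le_trans hK01 hj)
              nlinarith
          _ ≤ r (m + 1) := by linarith
  have hrK0pos : 0 < r K0 := hrpos K0 hK01
  -- r tends to infinity
  have hrtop : Tendsto r atTop atTop := by
    apply tendsto_atTop_mono' atTop
      (show ∀ᶠ m in atTop, r K0 * 2 ^ (m - K0) ≤ r m from
        eventually_atTop.mpr ⟨K0, fun m hm => hgrow K0 le_rfl m hm⟩)
    have h2 : Tendsto (fun m : ℕ => (2:ℝ) ^ m) atTop atTop :=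
      tendsto_pow_atTop_atTop_of_one_lt one_lt_two
    have h3 : Tendsto (fun m : ℕ => m - K0) atTop atTop := tendsto_sub_atTop_nat K0
    have h4 := (h2.comp h3).const_mul_atTop hrK0pos
    simpa [Function.comp] using h4
  -- the constant A
  set M := ∑ i ∈ Finset.Icc 1 K0, r i with hMdef
  have hM : ∀ j, 1 ≤ j → j ≤ K0 → r j ≤ M := by
    intro j h1 h2
    apply Finset.single_le_sum (f := r) (fun i hi => (hrpos i (Finset.mem_Icc.mp hi).1).le)
    exact Finset.mem_Icc.mpr ⟨h1, h2⟩
  have hMpos : 0 < M := lt_of_lt_of_le hrK0pos (hM K0 hK01 le_rfl)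
  set A := 1 + (M / r K0) * 2 ^ K0 with hAdef
  have hA1 : 1 ≤ A := by
    have h : 0 ≤ (M / r K0) * 2 ^ K0 := by positivity
    rw [hAdef]; linarith
  have hA0 : 0 < A := lt_of_lt_of_le one_pos hA1
  have hA : ∀ m, K0 ≤ m → ∀ j, 1 ≤ j → j ≤ m →
      r j ≤ A * ((2:ℝ)⁻¹) ^ (m - j) * r m := by
    intro m hm j hj1 hjm
    have hrm : 0 < r m := hrpos m (le_trans hK01 hm)
    by_cases hjK : K0 ≤ j
    · have h1 := hgrow j hjK m hjm
      have h2 : (0:ℝ) < 2 ^ (m - j) := by positivity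
      have h3 : r j ≤ ((2:ℝ)⁻¹) ^ (m - j) * r m := by
        rw [inv_pow, inv_mul_eq_div, le_div_iff₀ h2]
        linarith [h1]
      calc r j ≤ ((2:ℝ)⁻¹) ^ (m - j) * r m := h3
        _ ≤ A * (((2:ℝ)⁻¹) ^ (m - j) * r m) :=
            le_mul_of_one_le_left (by positivity) hA1
        _ = A * ((2:ℝ)⁻¹) ^ (m - j) * r m := by ring
    · push_neg at hjK
      have h1 : r j ≤ M := hM j hj1 (by omega)
      have h2 := hgrow K0 le_rfl m hm
      have h3 : r K0 ≤ ((2:ℝ)⁻¹) ^ (m - K0) * r m := by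
        have h4 : (0:ℝ) < 2 ^ (m - K0) := by positivity
        rw [inv_pow, inv_mul_eq_div, le_div_iff₀ h4]
        linarith [h2]
      have h5 : ((2:ℝ)⁻¹) ^ (m - K0) ≤ 2 ^ K0 * ((2:ℝ)⁻¹) ^ (m - j) := by
        have hsplit : m - j = (m - K0) + (K0 - j) := by omega
        rw [hsplit, pow_add]
        have h6 : (1:ℝ) ≤ ((2:ℝ)⁻¹) ^ (K0 - j) * 2 ^ K0 := by
          rw [inv_pow, inv_mul_eq_div, le_div_iff₀ (by positivity), one_mul]
          exact pow_le_pow_right₀ one_le_two (by omega)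
        nlinarith [pow_pos (show (0:ℝ) < 2⁻¹ by norm_num) (m - K0),
          pow_pos (show (0:ℝ) < 2⁻¹ by norm_num) (K0 - j)]
      calc r j ≤ M := h1
        _ = (M / r K0) * r K0 := by field_simp
        _ ≤ (M / r K0) * (((2:ℝ)⁻¹) ^ (m - K0) * r m) := by
            apply mul_le_mul_of_nonneg_left h3 (by positivity)
        _ ≤ (M / r K0) * ((2 ^ K0 * ((2:ℝ)⁻¹) ^ (m - j)) * r m) := by
            apply mul_le_mul_of_nonneg_left _ (by positivity)
            exact mul_le_mul_of_nonneg_right h5 hrm.le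
        _ = ((M / r K0) * 2 ^ K0) * ((2:ℝ)⁻¹) ^ (m - j) * r m := by ring
        _ ≤ A * ((2:ℝ)⁻¹) ^ (m - j) * r m := by
            have : (M / r K0) * 2 ^ K0 ≤ A := by rw [hAdef]; linarith
            apply mul_le_mul_of_nonneg_right _ hrm.le
            apply mul_le_mul_of_nonneg_right this (by positivity)
  -- eventually P k ≥ (3/4)^k
  have hP34 : ∀ᶠ k : ℕ in atTop, (3/4:ℝ) ^ k ≤ P k := by
    have h1 : ∀ᶠ k : ℕ in atTop, (3/4:ℝ) ≤ P k ^ ((1:ℝ)/k) :=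
      hPlim.eventually (eventually_ge_nhds (by norm_num))
    filter_upwards [h1, eventually_ge_atTop 1] with k hk hk1
    have hkne : ((k:ℝ)) ≠ 0 := Nat.cast_ne_zero.mpr (by omega)
    have hPk : (0:ℝ) ≤ P k := (hP k hk1).le
    have heq : ((P k ^ ((1:ℝ)/k)) : ℝ) ^ (k:ℕ) = P k := by
      rw [← Real.rpow_natCast (P k ^ ((1:ℝ)/k)) k, ← Real.rpow_mul hPk]
      rw [one_div, inv_mul_cancel₀ hkne, Real.rpow_one]
    calc (3/4:ℝ) ^ k ≤ (P k ^ ((1:ℝ)/k)) ^ k := pow_le_pow_left₀ (by norm_num) hk k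
      _ = P k := heq
  -- r k / r (k+1) → 0
  have hq : Tendsto (fun k : ℕ => r k / r (k + 1)) atTop (𝓝 0) := by
    set B := r K0 * r (K0 + 1) with hBdef
    have hrK01 : 0 < r (K0 + 1) := hrpos (K0 + 1) (by omega)
    have hBpos : 0 < B := mul_pos hrK0pos hrK01
    set D := B * 2 ^ K0 / r K0 with hDdef
    have hDpos : 0 < D := by
      rw [hDdef]; exact div_pos (mul_pos hBpos (by positivity)) hrK0pos
    apply squeeze_zero' (g := fun k : ℕ => D * (2/3:ℝ) ^ k)
    · filter_upwards [eventually_ge_atTop 1] with k hk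
      have := hrpos k hk
      have := hrpos (k + 1) (by omega)
      positivity
    · filter_upwards [eventually_ge_atTop (K0 + 2), hP34,
        hrtop.eventually_ge_atTop 1] with k hk hPk hrk1le
      have hk1 : 1 ≤ k := by omega
      have hrk : 0 < r k := hrpos k hk1
      have hrkk : 0 < r (k + 1) := hrpos (k + 1) (by omega)
      have hPkpos : 0 < P k := hP k hk1
      -- lower bound on r (k+1)
      have hpair : ({K0, K0 + 1} : Finset ℕ) ⊆ Finset.Icc 1 k := by
        intro x hx
        simp only [Finset.mem_insert, Finset.mem_singleton] at hx
        rcases hx with h | h <;> (subst h; exact Finset.mem_Icc.mpr ⟨by omega, by omega⟩)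
      have hprod_ge : (1 + r k / r K0) * (1 + r k / r (K0 + 1)) ≤
          ∏ j ∈ Finset.Icc 1 k, (1 + r k / r j) := by
        rw [← Finset.prod_sdiff hpair]
        have h1 : (1:ℝ) ≤ ∏ j ∈ Finset.Icc 1 k \ {K0, K0 + 1}, (1 + r k / r j) := by
          refine le_trans (le_of_eq (Finset.prod_const_one).symm) (Finset.prod_le_prod (fun i _ => by norm_num) ?_)
          intro i hi
          have hi1 : 1 ≤ i := (Finset.mem_Icc.mp (Finset.mem_sdiff.mp hi).1).1
          have := hrpos i hi1
          have h2 : 0 ≤ r k / r i := by positivity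
          linarith
        have h2 : ∏ j ∈ ({K0, K0 + 1} : Finset ℕ), (1 + r k / r j) =
            (1 + r k / r K0) * (1 + r k / r (K0 + 1)) :=
          Finset.prod_pair (by omega)
        rw [h2]
        have h3 : 0 < (1 + r k / r K0) * (1 + r k / r (K0 + 1)) := by positivity
        calc (1 + r k / r K0) * (1 + r k / r (K0 + 1))
            = 1 * ((1 + r k / r K0) * (1 + r k / r (K0 + 1))) := by ring
          _ ≤ (∏ j ∈ Finset.Icc 1 k \ {K0, K0 + 1}, (1 + r k / r j)) *
              ((1 + r k / r K0) * (1 + r k / r (K0 + 1))) :=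
              mul_le_mul_of_nonneg_right h1 h3.le
      have hrkN : (1:ℝ) ≤ r k ^ N := one_le_pow₀ hrk1le
      have hlow : P k * (r k * r k / B) ≤ r (k + 1) := by
        rw [hrec k hk1]
        have h4 : r k * r k / B = (r k / r K0) * (r k / r (K0 + 1)) := by
          rw [hBdef]; field_simp
        have h5 : (r k / r K0) * (r k / r (K0 + 1)) ≤
            (1 + r k / r K0) * (1 + r k / r (K0 + 1)) := by
          have p1 : 0 ≤ r k / r K0 := by positivity
          have p2 : 0 ≤ r k / r (K0 + 1) := by positivity
          nlinarith
        calc P k * (r k * r k / B) = P k * ((r k / r K0) * (r k / r (K0 + 1))) := by rw [h4]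
          _ ≤ P k * ∏ j ∈ Finset.Icc 1 k, (1 + r k / r j) := by
              apply mul_le_mul_of_nonneg_left (le_trans h5 hprod_ge) hPkpos.le
          _ ≤ P k * r k ^ N * ∏ j ∈ Finset.Icc 1 k, (1 + r k / r j) := by
              have hprodpos : (0:ℝ) < ∏ j ∈ Finset.Icc 1 k, (1 + r k / r j) := by
                apply Finset.prod_pos
                intro i hi
                have := hrpos i (Finset.mem_Icc.mp hi).1
                positivity
              rw [mul_assoc]
              apply mul_le_mul_of_nonneg_left _ hPkpos.le
              exact le_mul_of_one_le_left hprodpos.le hrkN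
      have hXpos : 0 < P k * (r k * r k / B) := by positivity
      -- so r k / r (k+1) ≤ B / (P k * r k)
      have hstep1 : r k / r (k + 1) ≤ B / (P k * r k) := by
        calc r k / r (k + 1) ≤ r k / (P k * (r k * r k / B)) :=
              div_le_div_of_nonneg_left hrk.le hXpos hlow
          _ = B / (P k * r k) := by field_simp
      -- and P k * r k ≥ (3/4)^k * 2^(k-K0) * r K0
      have hrklow : (3/4:ℝ) ^ k * (2 ^ (k - K0) * r K0) ≤ P k * r k := by
        have h7 := hgrow K0 le_rfl k (by omega)
        have h8 : (0:ℝ) ≤ (3/4:ℝ) ^ k := by positivity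
        have h9 : r K0 * 2 ^ (k - K0) ≤ r k := h7
        have h10 : (3/4:ℝ) ^ k * (2 ^ (k - K0) * r K0) ≤ (3/4:ℝ) ^ k * r k := by
          apply mul_le_mul_of_nonneg_left _ h8
          linarith
        apply le_trans h10
        exact mul_le_mul_of_nonneg_right hPk hrk.le
      have hYpos : 0 < (3/4:ℝ) ^ k * (2 ^ (k - K0) * r K0) := by positivity
      have hstep2 : B / (P k * r k) ≤ D * (2/3:ℝ) ^ k := by
        calc B / (P k * r k) ≤ B / ((3/4:ℝ) ^ k * (2 ^ (k - K0) * r K0)) :=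
              div_le_div_of_nonneg_left hBpos.le hYpos hrklow
          _ ≤ D * (2/3:ℝ) ^ k := by
              have hpow : (2:ℝ) ^ k / 2 ^ K0 ≤ (2:ℝ) ^ (k - K0) := by
                rw [div_le_iff₀ (by positivity), ← pow_add]
                exact pow_le_pow_right₀ one_le_two (by omega)
              have e1 : (0:ℝ) < (3/4:ℝ) ^ k := by positivity
              have e2 : (0:ℝ) < (2:ℝ) ^ k := by positivity
              have e3 : (0:ℝ) < (2:ℝ) ^ K0 := by positivity
              have e4 : (0:ℝ) < (2:ℝ) ^ (k - K0) := by positivity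
              rw [div_le_iff₀ (by positivity)]
              rw [hDdef]
              have hc : (3/4:ℝ) ^ k * (2/3:ℝ) ^ k * (2:ℝ) ^ k = 1 := by
                rw [← mul_pow, ← mul_pow]
                norm_num
              have hfin : (1:ℝ) ≤ (3/4:ℝ) ^ k * (2/3:ℝ) ^ k * ((2:ℝ) ^ (k - K0) * 2 ^ K0) := by
                have := mul_le_mul_of_nonneg_left hpow (le_of_lt (mul_pos e1 (by positivity : (0:ℝ) < (2/3:ℝ) ^ k)))
                calc (1:ℝ) = (3/4:ℝ) ^ k * (2/3:ℝ) ^ k * (2:ℝ) ^ k := hc.symm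
                  _ = (3/4:ℝ) ^ k * (2/3:ℝ) ^ k * ((2:ℝ) ^ k / 2 ^ K0 * 2 ^ K0) := by
                      field_simp
                  _ ≤ (3/4:ℝ) ^ k * (2/3:ℝ) ^ k * ((2:ℝ) ^ (k - K0) * 2 ^ K0) := by
                      apply mul_le_mul_of_nonneg_left _ (by positivity)
                      exact mul_le_mul_of_nonneg_right hpow e3.le
              calc B = B * 1 := by ring
                _ ≤ B * ((3/4:ℝ) ^ k * (2/3:ℝ) ^ k * ((2:ℝ) ^ (k - K0) * 2 ^ K0)) :=
                    mul_le_mul_of_nonneg_left hfin hBpos.le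
                _ = B * 2 ^ K0 / r K0 * (2/3:ℝ) ^ k * ((3/4:ℝ) ^ k * (2 ^ (k - K0) * r K0)) := by
                    field_simp
      exact le_trans hstep1 hstep2
    · have h1 : Tendsto (fun k : ℕ => (2/3:ℝ) ^ k) atTop (𝓝 0) :=
        tendsto_pow_atTop_nhds_zero_of_lt_one (by norm_num) (by norm_num)
      have := h1.const_mul D
      simpa using this
  have hu1 : Tendsto (fun k : ℕ => r (k - 1) / r k) atTop (𝓝 0) := by
    have h := hq.comp (tendsto_sub_atTop_nat 1)
    apply Tendsto.congr' _ h
    filter_upwards [eventually_ge_atTop 1] with k hk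
    simp only [Function.comp]
    rw [show k - 1 + 1 = k by omega]
  -- epsilon
  set ε := (cC / Real.exp 1 - 2 * L) / (4 * L) with hεdef
  have hnum : 0 < cC / Real.exp 1 - 2 * L := by
    have h2 : 2 * (cC / (2 * Real.exp 1)) = cC / Real.exp 1 := by
      field_simp
    linarith [hLlt, h2]
  have hε : 0 < ε := by positivity
  have hεL : 2 * (1 + ε) * L < cC / Real.exp 1 := by
    have : 2 * (1 + ε) * L = 2 * L + (cC / Real.exp 1 - 2 * L) / 2 := by
      have h4 : ε * (4 * L) = cC / Real.exp 1 - 2 * L := by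
        rw [hεdef]; exact div_mul_cancel₀ _ (by positivity)
      linarith
    rw [this]; linarith
  -- c sequence
  set w : ℕ → ℝ := fun k => 2 * A * (r (k - 1) / r k) with hwdef
  set v : ℕ → ℝ := fun k => 2 * (1 + 1/(k:ℝ)) * (r k / r (k + 1)) with hvdef
  set c : ℕ → ℝ := fun k => cC * (1 - 1/(k:ℝ)) ^ (N + k - 1) * (1 - 5 * w k) * (1 - v k)
    with hcdef
  have hwlim : Tendsto w atTop (𝓝 0) := by
    have := hu1.const_mul (2 * A)
    simpa using this
  have hvlim : Tendsto v atTop (𝓝 0) := by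
    have hone : Tendsto (fun k : ℕ => 2 * (1 + 1/(k:ℝ))) atTop (𝓝 (2 * (1 + 0))) := by
      apply Tendsto.const_mul
      exact (tendsto_const_nhds).add tendsto_one_div_atTop_nhds_zero_nat
    have h := hone.mul hq
    simpa only [mul_zero] using h
  have hclim : Tendsto c atTop (𝓝 (cC * (Real.exp 1)⁻¹)) := by
    have h1 := ((tendsto_const_nhds (x := cC) (f := (atTop : Filter ℕ))).mul (auxE N)).mul
      ((tendsto_const_nhds (x := (1:ℝ)) (f := (atTop : Filter ℕ))).sub (hwlim.const_mul 5))
    have h2 := h1.mul ((tendsto_const_nhds (x := (1:ℝ)) (f := (atTop : Filter ℕ))).sub hvlim)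
    rw [show cC * (Real.exp 1)⁻¹ = cC * (Real.exp 1)⁻¹ * (1 - 5 * 0) * (1 - 0) by ring]
    exact h2
  have hcev : ∀ᶠ k : ℕ in atTop, 2 * (1 + ε) * L < c k := by
    apply hclim.eventually (eventually_gt_nhds _)
    rw [← div_eq_mul_inv]; exact hεL
  -- collect all eventual conditions
  have hwev : ∀ᶠ k : ℕ in atTop, A * (r (k - 1) / r k) ≤ 1/10 := by
    have h := hu1.const_mul A
    simp only [mul_zero] at h
    exact h.eventually (eventually_le_nhds (by norm_num))
  have hvev : ∀ᶠ k : ℕ in atTop, v k ≤ 1/2 :=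
    hvlim.eventually (eventually_le_nhds (by norm_num))
  obtain ⟨K, hK⟩ := eventually_atTop.mp
    ((((hLev.and hcev).and (hwev.and hvev)).and (eventually_ge_atTop (K0 + 2))))
  refine ⟨ε, hε, K, fun k hk => ?_⟩
  obtain ⟨⟨⟨hkP, hck⟩, ⟨hw10, hv12⟩⟩, hkK0⟩ := hK k hk
  -- basic facts about k
  have hk1 : 1 ≤ k := by omega
  have hkR : (2:ℝ) ≤ (k:ℝ) := by exact_mod_cast (by omega : 2 ≤ k)
  have hk0R : (0:ℝ) < (k:ℝ) := by linarith
  have hrk : 0 < r k := hrpos k hk1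
  have hrk1 : 0 < r (k + 1) := hrpos (k + 1) (by omega)
  have hok1 : (0:ℝ) < 1 - 1/(k:ℝ) := by
    have : 1/(k:ℝ) ≤ 1/2 := by
      rw [div_le_div_iff₀ hk0R (by norm_num)]; linarith
    linarith
  have hak : ‖a k‖ = r k := ha k hk1
  have hakne : a k ≠ 0 := by
    intro h
    rw [h] at hak; simp at hak; exact hrk.ne' hak.symm
  -- the key pointwise estimate
  have habs_sub : ∀ u v : ℂ, ‖u‖ - ‖v‖ ≤ ‖u - v‖ := by
    intro u v
    calc ‖u‖ - ‖v‖ ≤ |‖u‖ - ‖v‖| := le_abs_self _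
      _ ≤ ‖u - v‖ := abs_norm_sub_norm_le u v
  have h1k : (0:ℝ) < 1/(k:ℝ) := by positivity
  have h1k' : 1/(k:ℝ) ≤ 1/2 := by
    rw [div_le_div_iff₀ hk0R (by norm_num)]; linarith
  have hhalf : r k / r (k + 1) ≤ 1/2 := by
    rw [div_le_iff₀ hrk1]
    have := hK0 k (by omega)
    linarith
  have hrkm1 : 0 < r (k - 1) := hrpos (k - 1) (by omega)
  have hwk5 : 5 * w k ≤ 1 := by
    simp only [hwdef]
    linarith [hw10]
  have hvnn : 0 ≤ 1 - v k := by linarith [hv12]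
  have hk1' : k - 1 + 1 = k := by omega
  have key : ∀ z : ℂ, (1 - 1/(k:ℝ)) * r k ≤ ‖z‖ →
      ‖z‖ ≤ (1 + 1/(k:ℝ)) * r k → r k / (k:ℝ) ≤ ‖z - a k‖ →
      (1 + ε) * r (k + 1) ≤ ‖f z‖ := by
    intro z hz1 hz2 hz3
    set g : ℕ → ℝ := fun j => ‖1 - z / a (j + 1)‖ with hgdef
    have hgnn : ∀ j, 0 ≤ g j := fun j => norm_nonneg _
    have hgmul : HasProd g (‖(∏' j : ℕ, (1 - z / a (j + 1)))‖) := by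
      have h2 := (hmul z).hasProd.map auxAbsHom continuous_norm
      exact h2
    have hfz : ‖f z‖ =
        cC * ‖z‖ ^ N * ‖(∏' j : ℕ, (1 - z / a (j + 1)))‖ := by
      rw [hf z, norm_mul, norm_mul, norm_pow, ← hcCdef]
    -- tail estimates
    have htailx : ∀ j, k ≤ j → ‖z‖ / r (j + 1) ≤
        (1 + 1/(k:ℝ)) * (r k / r (k + 1)) * ((2:ℝ)⁻¹) ^ (j - k) := by
      intro j hj
      have hrj1 : 0 < r (j + 1) := hrpos (j + 1) (by omega)
      have hgrowj : r (k + 1) * 2 ^ (j - k) ≤ r (j + 1) := by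
        have h := hgrow (k + 1) (by omega) (j + 1) (by omega)
        rw [show j + 1 - (k + 1) = j - k by omega] at h
        exact h
      have h3 : ‖z‖ / r (j + 1) ≤ ‖z‖ / (r (k + 1) * 2 ^ (j - k)) :=
        div_le_div_of_nonneg_left (norm_nonneg z) (by positivity) hgrowj
      apply le_trans h3
      rw [div_le_iff₀ (by positivity)]
      have h4 : (1 + 1/(k:ℝ)) * (r k / r (k + 1)) * ((2:ℝ)⁻¹) ^ (j - k) *
          (r (k + 1) * 2 ^ (j - k)) = (1 + 1/(k:ℝ)) * r k := by
        rw [inv_pow]; field_simp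
      rw [h4]; exact hz2
    have htailg : ∀ j, k ≤ j → 1 - ‖z‖ / r (j + 1) ≤ g j := by
      intro j hj
      have hrj1 : 0 < r (j + 1) := hrpos (j + 1) (by omega)
      have haj : ‖a (j + 1)‖ = r (j + 1) := ha (j + 1) (by omega)
      have h1 : ‖z / a (j + 1)‖ = ‖z‖ / r (j + 1) := by
        rw [norm_div, haj]
      calc 1 - ‖z‖ / r (j + 1)
          = ‖(1:ℂ)‖ - ‖z / a (j + 1)‖ := by rw [h1, norm_one]
        _ ≤ ‖1 - z / a (j + 1)‖ := habs_sub 1 _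
        _ = g j := rfl
    have hxnn : ∀ j, 0 ≤ ‖z‖ / r (j + 1) :=
      fun j => div_nonneg (norm_nonneg z) (hrpos (j + 1) (by omega)).le
    have hxub : ∀ j, k ≤ j → ‖z‖ / r (j + 1) ≤ 3/4 := by
      intro j hj
      have h2 : ((2:ℝ)⁻¹) ^ (j - k) ≤ 1 := pow_le_one₀ (by norm_num) (by norm_num)
      have h3 : (1 + 1/(k:ℝ)) ≤ 3/2 := by linarith
      have c1 : (0:ℝ) ≤ r k / r (k + 1) := by positivity
      have c2 : (0:ℝ) ≤ ((2:ℝ)⁻¹) ^ (j - k) := by positivity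
      calc ‖z‖ / r (j + 1)
          ≤ (1 + 1/(k:ℝ)) * (r k / r (k + 1)) * ((2:ℝ)⁻¹) ^ (j - k) := htailx j hj
        _ ≤ (3/2) * (1/2) * 1 := by
            apply mul_le_mul (mul_le_mul h3 hhalf c1 (by norm_num)) h2 c2 (by norm_num)
        _ ≤ 3/4 := by norm_num
    have htailprod : ∀ s : Finset ℕ, Finset.range k ⊆ s →
        1 - v k ≤ ∏ j ∈ s \ Finset.range k, g j := by
      intro s hs
      have hmem : ∀ j ∈ s \ Finset.range k, k ≤ j := by
        intro j hj
        have := (Finset.mem_sdiff.mp hj).2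
        simpa [Finset.mem_range, not_lt] using this
      have hsum : ∑ j ∈ s \ Finset.range k, ‖z‖ / r (j + 1) ≤ v k := by
        calc ∑ j ∈ s \ Finset.range k, ‖z‖ / r (j + 1)
            ≤ ∑ j ∈ s \ Finset.range k,
                (1 + 1/(k:ℝ)) * (r k / r (k + 1)) * ((2:ℝ)⁻¹) ^ (j - k) :=
              Finset.sum_le_sum (fun j hj => htailx j (hmem j hj))
          _ = (1 + 1/(k:ℝ)) * (r k / r (k + 1)) *
              ∑ j ∈ s \ Finset.range k, ((2:ℝ)⁻¹) ^ (j - k) := by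
              rw [Finset.mul_sum]
          _ ≤ (1 + 1/(k:ℝ)) * (r k / r (k + 1)) * 2 := by
              apply mul_le_mul_of_nonneg_left (auxG k _ hmem) (by positivity)
          _ = v k := by simp only [hvdef]; ring
      calc 1 - v k ≤ 1 - ∑ j ∈ s \ Finset.range k, ‖z‖ / r (j + 1) := by linarith
        _ ≤ ∏ j ∈ s \ Finset.range k, (1 - ‖z‖ / r (j + 1)) :=
            auxW _ _ (fun j _ => hxnn j)
              (fun j hj => le_trans (hxub j (hmem j hj)) (by norm_num))
        _ ≤ ∏ j ∈ s \ Finset.range k, g j :=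
            Finset.prod_le_prod (fun j hj => by linarith [hxub j (hmem j hj)])
              (fun j hj => htailg j (hmem j hj))
    have hPinn : (0:ℝ) ≤ ∏ j ∈ Finset.range k, g j :=
      Finset.prod_nonneg (fun j _ => hgnn j)
    have hmain : (∏ j ∈ Finset.range k, g j) * (1 - v k) ≤
        ‖(∏' j : ℕ, (1 - z / a (j + 1)))‖ := by
      have hgt : Filter.Tendsto (fun s : Finset ℕ => ∏ j ∈ s, g j) atTop
          (𝓝 (‖(∏' j : ℕ, (1 - z / a (j + 1)))‖)) := hgmul
      apply ge_of_tendsto hgt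
      filter_upwards [eventually_ge_atTop (Finset.range k)] with s hs
      have hsub : Finset.range k ⊆ s := Finset.le_iff_subset.mp hs
      rw [← Finset.prod_sdiff hsub, mul_comm (∏ j ∈ Finset.range k, g j) (1 - v k)]
      exact mul_le_mul_of_nonneg_right (htailprod s hsub) hPinn
    -- finite part
    have hrangesplit : ∏ j ∈ Finset.range k, g j =
        (∏ j ∈ Finset.range (k - 1), g j) * g (k - 1) := by
      conv_lhs => rw [← hk1']
      rw [Finset.prod_range_succ]
    have hgk1 : 1/(k:ℝ) ≤ g (k - 1) := by
      have e1 : (1:ℂ) - z / a k = (a k - z) / a k := by field_simp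
      have e2 : ‖a k - z‖ = ‖z - a k‖ := norm_sub_rev _ _
      have e3 : g (k - 1) = ‖z - a k‖ / r k := by
        show ‖1 - z / a (k - 1 + 1)‖ = _
        rw [hk1', e1, norm_div, hak, e2]
      rw [e3, le_div_iff₀ hrk]
      calc 1/(k:ℝ) * r k = r k / (k:ℝ) := by ring
        _ ≤ _ := hz3
    have ht10 : ∀ j ∈ Finset.range (k - 1), r (j + 1) / r k ≤ 1/10 := by
      intro j hj
      have hjlt := Finset.mem_range.mp hj
      have h1 := hA (k - 1) (by omega) (j + 1) (by omega) (by omega)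
      have h2 : r (j + 1) / r k ≤ A * ((2:ℝ)⁻¹) ^ (k - 1 - (j + 1)) * (r (k - 1) / r k) := by
        rw [div_le_iff₀ hrk]
        calc r (j + 1) ≤ A * ((2:ℝ)⁻¹) ^ (k - 1 - (j + 1)) * r (k - 1) := h1
          _ = A * ((2:ℝ)⁻¹) ^ (k - 1 - (j + 1)) * (r (k - 1) / r k) * r k := by
              field_simp
      apply le_trans h2
      have h3 : ((2:ℝ)⁻¹) ^ (k - 1 - (j + 1)) ≤ 1 := pow_le_one₀ (by norm_num) (by norm_num)
      have h4 : 0 ≤ r (k - 1) / r k := by positivity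
      calc A * ((2:ℝ)⁻¹) ^ (k - 1 - (j + 1)) * (r (k - 1) / r k)
          ≤ A * 1 * (r (k - 1) / r k) :=
            mul_le_mul_of_nonneg_right (mul_le_mul_of_nonneg_left h3 hA0.le) h4
        _ = A * (r (k - 1) / r k) := by ring
        _ ≤ 1/10 := hw10
    have hmid : ∀ j ∈ Finset.range (k - 1),
        (1 - 1/(k:ℝ)) * (1 - 5 * (r (j + 1) / r k)) * (1 + r k / r (j + 1)) ≤ g j := by
      intro j hj
      have hrj : 0 < r (j + 1) := hrpos (j + 1) (by omega)
      have haj : ‖a (j + 1)‖ = r (j + 1) := ha (j + 1) (by omega)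
      have ht0 : (0:ℝ) ≤ r (j + 1) / r k := by positivity
      have halg := auxAlg hkR ht0
      have hg1 : ‖z‖ / r (j + 1) - 1 ≤ g j := by
        have h1 : ‖z / a (j + 1)‖ = ‖z‖ / r (j + 1) := by
          rw [norm_div, haj]
        have h3 : ‖z / a (j + 1) - 1‖ = ‖1 - z / a (j + 1)‖ :=
          norm_sub_rev _ _
        calc ‖z‖ / r (j + 1) - 1
            = ‖z / a (j + 1)‖ - ‖(1:ℂ)‖ := by rw [h1, norm_one]
          _ ≤ ‖z / a (j + 1) - 1‖ := habs_sub _ _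
          _ = g j := h3
      have hg2 : (1 - 1/(k:ℝ)) * (r k / r (j + 1)) - 1 ≤ ‖z‖ / r (j + 1) - 1 := by
        have h5 : ((1 - 1/(k:ℝ)) * r k) / r (j + 1) ≤ ‖z‖ / r (j + 1) := by
          gcongr
        have h6 : ((1 - 1/(k:ℝ)) * r k) / r (j + 1) = (1 - 1/(k:ℝ)) * (r k / r (j + 1)) := by
          ring
        linarith [h6 ▸ h5]
      have hrkj : (0:ℝ) < r k / r (j + 1) := by positivity
      have halg2 : (1 - 1/(k:ℝ)) * (1 - 5 * (r (j + 1) / r k)) * (1 + r k / r (j + 1)) ≤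
          (1 - 1/(k:ℝ)) * (r k / r (j + 1)) - 1 := by
        have h6 := mul_le_mul_of_nonneg_right halg hrkj.le
        have e5 : (1 + r k / r (j + 1)) = (1 + r (j + 1) / r k) * (r k / r (j + 1)) := by
          field_simp; ring
        have e6 : (1 - 1/(k:ℝ) - r (j + 1) / r k) * (r k / r (j + 1)) =
            (1 - 1/(k:ℝ)) * (r k / r (j + 1)) - 1 := by
          field_simp
        calc (1 - 1/(k:ℝ)) * (1 - 5 * (r (j + 1) / r k)) * (1 + r k / r (j + 1))
            = (1 - 1/(k:ℝ)) * (1 - 5 * (r (j + 1) / r k)) *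
              ((1 + r (j + 1) / r k) * (r k / r (j + 1))) := by rw [← e5]
          _ = (1 - 1/(k:ℝ)) * (1 - 5 * (r (j + 1) / r k)) * (1 + r (j + 1) / r k) *
              (r k / r (j + 1)) := by ring
          _ ≤ (1 - 1/(k:ℝ) - r (j + 1) / r k) * (r k / r (j + 1)) := h6
          _ = (1 - 1/(k:ℝ)) * (r k / r (j + 1)) - 1 := e6
      linarith [hg1, hg2, halg2]
    have hPi0pos : (0:ℝ) < ∏ j ∈ Finset.range (k - 1), (1 + r k / r (j + 1)) := by
      apply Finset.prod_pos
      intro j hj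
      have := hrpos (j + 1) (by omega)
      positivity
    have hprodmid : (1 - 1/(k:ℝ)) ^ (k - 1) * (1 - 5 * w k) *
        (∏ j ∈ Finset.range (k - 1), (1 + r k / r (j + 1))) ≤
        ∏ j ∈ Finset.range (k - 1), g j := by
      have hfac_nn : ∀ j ∈ Finset.range (k - 1),
          0 ≤ (1 - 1/(k:ℝ)) * (1 - 5 * (r (j + 1) / r k)) * (1 + r k / r (j + 1)) := by
        intro j hj
        have h10 := ht10 j hj
        have hrj : 0 < r (j + 1) := hrpos (j + 1) (by omega)
        have h1 : (0:ℝ) ≤ 1 - 5 * (r (j + 1) / r k) := by linarith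
        have h2 : (0:ℝ) ≤ 1 + r k / r (j + 1) := by positivity
        exact mul_nonneg (mul_nonneg hok1.le h1) h2
      have step1 : ∏ j ∈ Finset.range (k - 1),
          ((1 - 1/(k:ℝ)) * (1 - 5 * (r (j + 1) / r k)) * (1 + r k / r (j + 1))) ≤
          ∏ j ∈ Finset.range (k - 1), g j :=
        Finset.prod_le_prod hfac_nn hmid
      have step2 : ∏ j ∈ Finset.range (k - 1),
          ((1 - 1/(k:ℝ)) * (1 - 5 * (r (j + 1) / r k)) * (1 + r k / r (j + 1))) =
          (1 - 1/(k:ℝ)) ^ (k - 1) *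
          (∏ j ∈ Finset.range (k - 1), (1 - 5 * (r (j + 1) / r k))) *
          ∏ j ∈ Finset.range (k - 1), (1 + r k / r (j + 1)) := by
        rw [Finset.prod_mul_distrib, Finset.prod_mul_distrib, Finset.prod_const,
          Finset.card_range]
      have hsumt : ∑ j ∈ Finset.range (k - 1), (r (j + 1) / r k) ≤ w k := by
        calc ∑ j ∈ Finset.range (k - 1), (r (j + 1) / r k)
            ≤ ∑ j ∈ Finset.range (k - 1),
              A * ((2:ℝ)⁻¹) ^ (k - 1 - 1 - j) * (r (k - 1) / r k) := by
              apply Finset.sum_le_sum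
              intro j hj
              have hjlt := Finset.mem_range.mp hj
              have h1 := hA (k - 1) (by omega) (j + 1) (by omega) (by omega)
              have e7 : k - 1 - (j + 1) = k - 1 - 1 - j := by omega
              rw [div_le_iff₀ hrk]
              calc r (j + 1) ≤ A * ((2:ℝ)⁻¹) ^ (k - 1 - (j + 1)) * r (k - 1) := h1
                _ = A * ((2:ℝ)⁻¹) ^ (k - 1 - 1 - j) * (r (k - 1) / r k) * r k := by
                    rw [e7]; field_simp
          _ = A * (r (k - 1) / r k) *
              ∑ j ∈ Finset.range (k - 1), ((2:ℝ)⁻¹) ^ (k - 1 - 1 - j) := by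
              rw [Finset.mul_sum]
              apply Finset.sum_congr rfl
              intro j _; ring
          _ ≤ A * (r (k - 1) / r k) * 2 := by
              apply mul_le_mul_of_nonneg_left (auxG2 (k - 1)) (by positivity)
          _ = w k := by simp only [hwdef]; ring
      have step3 : 1 - 5 * w k ≤ ∏ j ∈ Finset.range (k - 1), (1 - 5 * (r (j + 1) / r k)) := by
        have hW := auxW (Finset.range (k - 1)) (fun j => 5 * (r (j + 1) / r k))
          (fun j hj => by
            have := hrpos (j + 1) (by omega)
            positivity)
          (fun j hj => by linarith [ht10 j hj])
        have hsum5 : ∑ j ∈ Finset.range (k - 1), 5 * (r (j + 1) / r k) ≤ 5 * w k := by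
          rw [← Finset.mul_sum]
          linarith [hsumt]
        calc 1 - 5 * w k ≤ 1 - ∑ j ∈ Finset.range (k - 1), 5 * (r (j + 1) / r k) := by
              linarith
          _ ≤ ∏ j ∈ Finset.range (k - 1), (1 - 5 * (r (j + 1) / r k)) := hW
      calc (1 - 1/(k:ℝ)) ^ (k - 1) * (1 - 5 * w k) *
          (∏ j ∈ Finset.range (k - 1), (1 + r k / r (j + 1)))
          ≤ (1 - 1/(k:ℝ)) ^ (k - 1) *
            (∏ j ∈ Finset.range (k - 1), (1 - 5 * (r (j + 1) / r k))) *
            (∏ j ∈ Finset.range (k - 1), (1 + r k / r (j + 1))) := by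
            apply mul_le_mul_of_nonneg_right
              (mul_le_mul_of_nonneg_left step3 (pow_nonneg hok1.le _)) hPi0pos.le
        _ = ∏ j ∈ Finset.range (k - 1),
            ((1 - 1/(k:ℝ)) * (1 - 5 * (r (j + 1) / r k)) * (1 + r k / r (j + 1))) := step2.symm
        _ ≤ ∏ j ∈ Finset.range (k - 1), g j := step1
    -- recurrence in range form
    have hrecr : r (k + 1) = P k * r k ^ N *
        ((∏ j ∈ Finset.range (k - 1), (1 + r k / r (j + 1))) * (1 + r k / r k)) := by
      rw [hrec k hk1, auxA (fun j => 1 + r k / r j) k]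
      congr 1
      conv_lhs => rw [← hk1']
      rw [Finset.prod_range_succ, hk1']
    have hrkk1 : (1:ℝ) + r k / r k = 2 := by rw [div_self hrk.ne']; norm_num
    have hzN : ((1 - 1/(k:ℝ)) * r k) ^ N ≤ ‖z‖ ^ N :=
      pow_le_pow_left₀ (mul_nonneg hok1.le hrk.le) hz1 N
    have hlast_nn : 0 ≤ ((1 - 1/(k:ℝ)) ^ (k - 1) * (1 - 5 * w k) *
        (∏ j ∈ Finset.range (k - 1), (1 + r k / r (j + 1)))) * (1/(k:ℝ)) * (1 - v k) := by
      apply mul_nonneg (mul_nonneg _ h1k.le) hvnn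
      exact mul_nonneg (mul_nonneg (pow_nonneg hok1.le _) (by linarith)) hPi0pos.le
    have hGfull : ((1 - 1/(k:ℝ)) ^ (k - 1) * (1 - 5 * w k) *
        (∏ j ∈ Finset.range (k - 1), (1 + r k / r (j + 1)))) * (1/(k:ℝ)) * (1 - v k) ≤
        ‖(∏' j : ℕ, (1 - z / a (j + 1)))‖ := by
      apply le_trans _ hmain
      rw [hrangesplit]
      apply mul_le_mul_of_nonneg_right _ hvnn
      apply mul_le_mul hprodmid hgk1 h1k.le
        (Finset.prod_nonneg (fun j _ => hgnn j))
    rw [hfz]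
    calc (1 + ε) * r (k + 1)
        = (1 + ε) * (P k * r k ^ N *
          ((∏ j ∈ Finset.range (k - 1), (1 + r k / r (j + 1))) * 2)) := by
          rw [hrecr, hrkk1]
      _ ≤ (c k / (2 * (k:ℝ))) * (r k ^ N *
          ((∏ j ∈ Finset.range (k - 1), (1 + r k / r (j + 1))) * 2)) := by
          have h1 : (1 + ε) * ((k:ℝ) * P k) ≤ (1 + ε) * L :=
            mul_le_mul_of_nonneg_left hkP.le (by linarith)
          have h2 : (1 + ε) * P k ≤ c k / (2 * (k:ℝ)) := by
            rw [le_div_iff₀ (by positivity)]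
            calc (1 + ε) * P k * (2 * (k:ℝ)) = 2 * ((1 + ε) * ((k:ℝ) * P k)) := by ring
              _ ≤ 2 * ((1 + ε) * L) := by linarith
              _ = 2 * (1 + ε) * L := by ring
              _ ≤ c k := hck.le
          have h3 : (0:ℝ) ≤ r k ^ N *
              ((∏ j ∈ Finset.range (k - 1), (1 + r k / r (j + 1))) * 2) := by
            apply mul_nonneg (pow_nonneg hrk.le N)
            apply mul_nonneg hPi0pos.le (by norm_num)
          calc (1 + ε) * (P k * r k ^ N *
              ((∏ j ∈ Finset.range (k - 1), (1 + r k / r (j + 1))) * 2))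
              = ((1 + ε) * P k) * (r k ^ N *
                ((∏ j ∈ Finset.range (k - 1), (1 + r k / r (j + 1))) * 2)) := by ring
            _ ≤ (c k / (2 * (k:ℝ))) * (r k ^ N *
                ((∏ j ∈ Finset.range (k - 1), (1 + r k / r (j + 1))) * 2)) :=
                mul_le_mul_of_nonneg_right h2 h3
      _ = cC * ((1 - 1/(k:ℝ)) * r k) ^ N *
          (((1 - 1/(k:ℝ)) ^ (k - 1) * (1 - 5 * w k) *
            (∏ j ∈ Finset.range (k - 1), (1 + r k / r (j + 1)))) * (1/(k:ℝ)) * (1 - v k)) := by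
          simp only [hcdef]
          have e8 : (1 - 1/(k:ℝ)) ^ (N + k - 1) =
              (1 - 1/(k:ℝ)) ^ N * (1 - 1/(k:ℝ)) ^ (k - 1) := by
            rw [← pow_add]
            congr 1
            omega
          rw [e8, mul_pow]
          field_simp
      _ ≤ cC * ‖z‖ ^ N *
          (((1 - 1/(k:ℝ)) ^ (k - 1) * (1 - 5 * w k) *
            (∏ j ∈ Finset.range (k - 1), (1 + r k / r (j + 1)))) * (1/(k:ℝ)) * (1 - v k)) := by
          apply mul_le_mul_of_nonneg_right (mul_le_mul_of_nonneg_left hzN hcC0.le) hlast_nn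
      _ ≤ cC * ‖z‖ ^ N * ‖(∏' j : ℕ, (1 - z / a (j + 1)))‖ := by
          apply mul_le_mul_of_nonneg_left hGfull
          exact mul_nonneg hcC0.le (pow_nonneg (norm_nonneg z) N)
  constructor
  · intro z hz
    have h1k : (0:ℝ) < 1/(k:ℝ) := by positivity
    refine key z (le_of_eq hz.symm) (by nlinarith [hrk]) ?_
    have h1 := habs_sub (a k) z
    rw [hak, hz] at h1
    have h2 : ‖a k - z‖ = ‖z - a k‖ := norm_sub_rev _ _
    calc r k / (k:ℝ) = r k - (1 - 1/(k:ℝ)) * r k := by ring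
      _ ≤ ‖a k - z‖ := h1
      _ = ‖z - a k‖ := h2
  · intro z hz
    have h1k : (0:ℝ) < 1/(k:ℝ) := by positivity
    have h2 : ‖a k - z‖ = ‖z - a k‖ := norm_sub_rev _ _
    have hub : ‖z‖ ≤ (1 + 1/(k:ℝ)) * r k := by
      have h3 := habs_sub z (a k)
      rw [hak, hz] at h3
      have egoal : (1 + 1/(k:ℝ)) * r k = r k + r k / (k:ℝ) := by ring
      linarith
    have hlb : (1 - 1/(k:ℝ)) * r k ≤ ‖z‖ := by
      have h1 := habs_sub (a k) z
      rw [hak, h2, hz] at h1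
      have egoal : (1 - 1/(k:ℝ)) * r k = r k - r k / (k:ℝ) := by ring
      linarith
    exact key z hlb hub hz.ge
end

section
/- If liminf_{k→∞} k P_k > 0, then there exist δ > 0 and K such that for all k ≥ K, |f(z)| ≤ r_{k+1}/2 whenever |z − a_k| = δ r_k / k. -/
open Filter

/-- `Complex.abs` as a `MonoidHom` from `ℂ` (mult.) to `ℝ` (mult.). -/
lemma stmt12_one_le_prod (B : ℕ → ℝ) (hB : ∀ j, 1 ≤ B j) (s : Finset ℕ) :
    1 ≤ ∏ j ∈ s, B j := by
  classical
  induction s using Finset.induction with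
  | empty => simp
  | @insert x s hx ih =>
    rw [Finset.prod_insert hx]
    nlinarith [hB x]

lemma stmt12_prod_subset_le (B : ℕ → ℝ) (hB : ∀ j, 1 ≤ B j) {s t : Finset ℕ}
    (h : s ⊆ t) : ∏ j ∈ s, B j ≤ ∏ j ∈ t, B j := by
  classical
  rw [← Finset.prod_sdiff h]
  have h1 : 1 ≤ ∏ j ∈ t \ s, B j := stmt12_one_le_prod B hB _
  have h2 : 0 < ∏ j ∈ s, B j :=
    lt_of_lt_of_le one_pos (stmt12_one_le_prod B hB _)
  nlinarith

noncomputable def stmt12AbsHom : ℂ →* ℝ where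
  toFun := fun z => ‖z‖
  map_one' := norm_one
  map_mul' := norm_mul

set_option maxHeartbeats 1000000 in
/-- if `liminf k P_k > 0`, then there are `δ > 0` and `K` such that
for `k ≥ K`, `|f(z)| ≤ r_{k+1}/2` on the circle `|z - a_k| = δ r_k / k`. -/
theorem stmt_12 (N : ℕ) (C : ℂ) (hC : C ≠ 0)
    (P r : ℕ → ℝ)
    (hP : ∀ k, 1 ≤ k → 0 < P k)
    (hPlim : Tendsto (fun k : ℕ => (P k) ^ ((1 : ℝ) / k)) atTop (nhds 1))
    (hrpos : ∀ k, 1 ≤ k → 0 < r k)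
    (hr2 : ∀ᶠ k in atTop, 2 * r k ≤ r (k + 1))
    (hrec : ∀ k, 1 ≤ k →
      r (k + 1) = P k * (r k) ^ N * ∏ j ∈ Finset.Icc 1 k, (1 + r k / r j))
    (a : ℕ → ℂ) (ha : ∀ k, 1 ≤ k → ‖a k‖ = r k)
    (f : ℂ → ℂ)
    (hmul : ∀ z : ℂ, Multipliable (fun k : ℕ => 1 - z / a (k + 1)))
    (hf : ∀ z : ℂ, f z = C * z ^ N * ∏' k : ℕ, (1 - z / a (k + 1)))
    (hinf : (0 : EReal) <
      Filter.liminf (fun k : ℕ => (((k : ℝ) * P k : ℝ) : EReal)) atTop) :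
    ∃ δ : ℝ, 0 < δ ∧ ∃ K : ℕ, ∀ k, K ≤ k →
      ∀ z : ℂ, ‖z - a k‖ = δ * r k / (k : ℝ) →
        ‖f z‖ ≤ r (k + 1) / 2 := by
  classical
  -- extract a positive lower bound `c` for `k * P k`
  obtain ⟨c, hc0', hcl⟩ := EReal.lt_iff_exists_real_btwn.mp hinf
  have hc0 : (0 : ℝ) < c := by exact_mod_cast hc0'
  have hev1 : ∀ᶠ k : ℕ in atTop, c < (k : ℝ) * P k := by
    filter_upwards [Filter.eventually_lt_of_lt_liminf hcl] with k hk
    exact_mod_cast hk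
  obtain ⟨K1, hK1⟩ := eventually_atTop.mp hr2
  obtain ⟨K2, hK2⟩ := eventually_atTop.mp hev1
  -- the constant and δ
  have hCpos : 0 < ‖C‖ := by
    simpa [norm_pos_iff] using hC
  set A : ℝ := ‖C‖ * 2 ^ N * Real.exp 3 with hA
  have hApos : 0 < A := by positivity
  refine ⟨min 1 (c / A), lt_min one_pos (div_pos hc0 hApos), max (max K1 K2) 1, ?_⟩
  set δ : ℝ := min 1 (c / A) with hδdef
  have hδpos : 0 < δ := lt_min one_pos (div_pos hc0 hApos)
  have hδ1 : δ ≤ 1 := min_le_left _ _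
  have hδA : A * δ ≤ c := by
    have h1 : δ ≤ c / A := min_le_right _ _
    calc A * δ ≤ A * (c / A) := by nlinarith
      _ = c := by field_simp
  -- growth lemma
  have hgrow : ∀ mm : ℕ, ∀ n, K1 ≤ n → 2 ^ mm * r n ≤ r (n + mm) := by
    intro mm
    induction mm with
    | zero => intro n _; simp
    | succ mm ih =>
      intro n hn
      have h1 := ih n hn
      have h2 := hK1 (n + mm) (le_trans hn (Nat.le_add_right _ _))
      have : (2 : ℝ) ^ (mm + 1) * r n = 2 * (2 ^ mm * r n) := by ring
      rw [this, ← Nat.add_assoc]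
      linarith
  intro k hk z hz
  have hkK1 : K1 ≤ k := le_trans (le_trans (le_max_left _ _) (le_max_left _ _)) hk
  have hkK2 : K2 ≤ k := le_trans (le_trans (le_max_right _ _) (le_max_left _ _)) hk
  have hk1 : 1 ≤ k := le_trans (le_max_right _ _) hk
  obtain ⟨m, rfl⟩ : ∃ m, k = m + 1 := ⟨k - 1, (Nat.succ_pred_eq_of_pos hk1).symm⟩
  set kr : ℝ := ((m + 1 : ℕ) : ℝ) with hkr
  have hkrpos : 0 < kr := by positivity
  have hkr1 : 1 ≤ kr := Nat.one_le_cast.mpr (Nat.succ_le_succ (Nat.zero_le m))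
  have hrk : 0 < r (m + 1) := hrpos _ (by omega)
  have ham : ‖a (m + 1)‖ = r (m + 1) := ha _ (by omega)
  have hane : a (m + 1) ≠ 0 := by
    intro h0
    rw [h0, norm_zero] at ham
    exact absurd ham.symm (ne_of_gt hrk)
  have hδk : δ / kr ≤ 1 := by
    rw [div_le_one hkrpos]; linarith
  -- bound on |z|
  have hzle : ‖z‖ ≤ (1 + δ / kr) * r (m + 1) := by
    have h1 : ‖z‖ ≤ ‖z - a (m + 1)‖ + ‖a (m + 1)‖ := by
      simpa using norm_add_le (z - a (m + 1)) (a (m + 1))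
    rw [hz, ham] at h1
    have : δ * r (m + 1) / kr + r (m + 1) = (1 + δ / kr) * r (m + 1) := by
      field_simp; ring
    linarith
  have hz2 : ‖z‖ ≤ 2 * r (m + 1) := by
    have : (1 + δ / kr) * r (m + 1) ≤ 2 * r (m + 1) := by nlinarith
    linarith
  -- the sequence of absolute values
  set gabs : ℕ → ℝ := fun j => ‖1 - z / a (j + 1)‖ with hgabs
  have hT : Multipliable gabs := by
    have := (hmul z).map stmt12AbsHom continuous_norm
    exact this
  have habsf : ‖f z‖
      = ‖C‖ * ‖z‖ ^ N * ∏' j, gabs j := by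
    rw [hf z, norm_mul, norm_mul, norm_pow]
    congr 1
    have := (hmul z).map_tprod stmt12AbsHom continuous_norm
    simpa [Function.comp, stmt12AbsHom] using this
  -- basic bound on each factor
  have hgle : ∀ j : ℕ, gabs j ≤ 1 + ‖z‖ / r (j + 1) := by
    intro j
    have hrj : 0 < r (j + 1) := hrpos _ (by omega)
    have h1 : gabs j ≤ ‖(1 : ℂ)‖ + ‖z / a (j + 1)‖ := by
      exact norm_sub_le _ _
    have h2 : ‖z / a (j + 1)‖ = ‖z‖ / r (j + 1) := by
      rw [norm_div, ha _ (by omega)]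
    rw [h2, norm_one] at h1; exact h1
  -- the comparison sequence
  set B : ℕ → ℝ := fun j =>
    if j < m + 1 then (1 + δ / kr) * (1 + r (m + 1) / r (j + 1))
    else Real.exp ((2 : ℝ)⁻¹ ^ (j - (m + 1))) with hB
  have h1B : ∀ j, 1 ≤ B j := by
    intro j
    by_cases hj : j < m + 1
    · have hrj : 0 < r (j + 1) := hrpos _ (by omega)
      have ht : 0 ≤ δ / kr := le_of_lt (div_pos hδpos hkrpos)
      have hx : 0 ≤ r (m + 1) / r (j + 1) := le_of_lt (div_pos hrk hrj)
      simp only [hB, if_pos hj]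
      nlinarith
    · simp only [hB, if_neg hj]
      exact Real.one_le_exp (by positivity)
  have hgB : ∀ j, gabs j ≤ B j := by
    intro j
    have hrj : 0 < r (j + 1) := hrpos _ (by omega)
    by_cases hj : j < m + 1
    · simp only [hB, if_pos hj]
      have h1 := hgle j
      have h2 : ‖z‖ / r (j + 1) ≤ (1 + δ / kr) * r (m + 1) / r (j + 1) :=
        (div_le_div_iff_of_pos_right hrj).mpr hzle
      have ht : 0 ≤ δ / kr := le_of_lt (div_pos hδpos hkrpos)
      have hx : 0 ≤ r (m + 1) / r (j + 1) := le_of_lt (div_pos hrk hrj)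
      have h3 : 1 + (1 + δ / kr) * r (m + 1) / r (j + 1)
          ≤ (1 + δ / kr) * (1 + r (m + 1) / r (j + 1)) := by
        have : (1 + δ / kr) * r (m + 1) / r (j + 1)
            = (1 + δ / kr) * (r (m + 1) / r (j + 1)) := by ring
        rw [this]; nlinarith
      linarith
    · -- tail bound
      push_neg at hj
      set e : ℕ := j - (m + 1) with he
      have hje : j = m + 1 + e := by omega
      have hgr := hgrow (e + 1) (m + 1) hkK1
      have hidx : m + 1 + (e + 1) = j + 1 := by omega
      rw [hidx] at hgr
      have h2pow : (0 : ℝ) < 2 ^ (e + 1) := by positivity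
      have hrjlow : 2 ^ (e + 1) * r (m + 1) ≤ r (j + 1) := hgr
      have h1 := hgle j
      have hkey : ‖z‖ / r (j + 1) ≤ (2 : ℝ)⁻¹ ^ e := by
        have hstep : ‖z‖ / r (j + 1) ≤ 2 * r (m + 1) / r (j + 1) :=
          (div_le_div_iff_of_pos_right hrj).mpr hz2
        have hstep2 : 2 * r (m + 1) / r (j + 1) ≤ 2 * r (m + 1) / (2 ^ (e + 1) * r (m + 1)) :=
          (div_le_div_iff_of_pos_left (by positivity) hrj (by positivity)).mpr hrjlow
        have hstep3 : 2 * r (m + 1) / (2 ^ (e + 1) * r (m + 1)) = (2 : ℝ)⁻¹ ^ e := by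
          rw [pow_succ]
          field_simp
          rw [← mul_pow]; norm_num
        linarith
      simp only [hB, if_neg (by omega : ¬ j < m + 1), ← he]
      calc gabs j ≤ 1 + ‖z‖ / r (j + 1) := h1
        _ ≤ 1 + (2 : ℝ)⁻¹ ^ e := by linarith
        _ ≤ Real.exp ((2 : ℝ)⁻¹ ^ e) := by
            have := Real.add_one_le_exp ((2 : ℝ)⁻¹ ^ e); linarith
  -- finite products of B are uniformly bounded
  have hBsplit : ∀ t : Finset ℕ, m ∉ t →
      ∏ j ∈ t, B j ≤ (∏ j ∈ Finset.range m, B j) * Real.exp 2 := by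
    intro t hmt
    rw [← Finset.prod_filter_mul_prod_filter_not t (fun j => j < m + 1)]
    have hpart1 : ∏ j ∈ t.filter (fun j => j < m + 1), B j ≤ ∏ j ∈ Finset.range m, B j := by
      apply stmt12_prod_subset_le B h1B
      intro j hj
      simp only [Finset.mem_filter] at hj
      have : j ≠ m := fun h => hmt (h ▸ hj.1)
      exact Finset.mem_range.mpr (by omega)
    have hpart2 : ∏ j ∈ t.filter (fun j => ¬ j < m + 1), B j ≤ Real.exp 2 := by
      have heq : ∏ j ∈ t.filter (fun j => ¬ j < m + 1), B j
          = Real.exp (∑ j ∈ t.filter (fun j => ¬ j < m + 1), (2 : ℝ)⁻¹ ^ (j - (m + 1))) := by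
        rw [Real.exp_sum]
        apply Finset.prod_congr rfl
        intro j hj
        simp only [Finset.mem_filter] at hj
        simp only [hB, if_neg hj.2]
      rw [heq]
      apply Real.exp_le_exp.mpr
      have hinj : ∀ x ∈ t.filter (fun j => ¬ j < m + 1), ∀ y ∈ t.filter (fun j => ¬ j < m + 1),
          x - (m + 1) = y - (m + 1) → x = y := by
        intro x hx y hy hxy
        simp only [Finset.mem_filter] at hx hy
        omega
      have himg := Finset.sum_image (s := t.filter (fun j => ¬ j < m + 1))
        (g := fun j => j - (m + 1)) (f := fun i => (2 : ℝ)⁻¹ ^ i) hinj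
      rw [← himg]
      calc ∑ i ∈ (t.filter (fun j => ¬ j < m + 1)).image (fun j => j - (m + 1)), (2 : ℝ)⁻¹ ^ i
          ≤ ∑' i : ℕ, (2 : ℝ)⁻¹ ^ i := by
            apply Summable.sum_le_tsum _ (fun i _ => by positivity)
            exact summable_geometric_of_lt_one (by norm_num) (by norm_num)
        _ = 2 := by
            have h := tsum_geometric_two
            simp only [one_div] at h
            exact h
    have h0le : (0 : ℝ) ≤ ∏ j ∈ t.filter (fun j => ¬ j < m + 1), B j :=
      Finset.prod_nonneg (fun j _ => le_trans zero_le_one (h1B j))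
    have h0le2 : (0 : ℝ) ≤ ∏ j ∈ Finset.range m, B j :=
      Finset.prod_nonneg (fun j _ => le_trans zero_le_one (h1B j))
    exact mul_le_mul hpart1 hpart2 h0le h0le2
  -- the key tprod bound
  have hgm : gabs m = δ / kr := by
    have h1 : (1 : ℂ) - z / a (m + 1) = (a (m + 1) - z) / a (m + 1) := by
      field_simp
    simp only [hgabs]
    rw [h1, norm_div, norm_sub_rev, hz, ham]
    field_simp
  have hTle : (∏' j, gabs j) ≤ δ / kr * ((∏ j ∈ Finset.range m, B j) * Real.exp 2) := by
    apply le_of_tendsto hT.hasProd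
    filter_upwards [eventually_ge_atTop ({m} : Finset ℕ)] with s hs
    have hmem : m ∈ s := hs (Finset.mem_singleton_self m)
    rw [← Finset.mul_prod_erase s gabs hmem, hgm]
    apply mul_le_mul_of_nonneg_left _ (le_of_lt (div_pos hδpos hkrpos))
    calc ∏ j ∈ s.erase m, gabs j ≤ ∏ j ∈ s.erase m, B j :=
          Finset.prod_le_prod (fun j _ => norm_nonneg _) (fun j _ => hgB j)
      _ ≤ _ := hBsplit _ (Finset.notMem_erase m s)
  have hTnonneg : (0 : ℝ) ≤ ∏' j, gabs j := by
    apply ge_of_tendsto hT.hasProd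
    filter_upwards with s
    exact Finset.prod_nonneg (fun j _ => norm_nonneg _)
  -- compute the range-m product of B
  set R : ℝ := ∏ j ∈ Finset.range m, (1 + r (m + 1) / r (j + 1)) with hR
  have hRpos : 0 < R := by
    apply Finset.prod_pos
    intro j hj
    have := hrpos (j + 1) (by omega)
    positivity
  have hBrange : ∏ j ∈ Finset.range m, B j = (1 + δ / kr) ^ m * R := by
    have : ∏ j ∈ Finset.range m, B j
        = ∏ j ∈ Finset.range m, ((1 + δ / kr) * (1 + r (m + 1) / r (j + 1))) := by
      apply Finset.prod_congr rfl
      intro j hj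
      have hjm : j < m + 1 := by
        have := Finset.mem_range.mp hj
        omega
      simp only [hB]
      rw [if_pos hjm]
    rw [this, Finset.prod_mul_distrib, Finset.prod_const, Finset.card_range]
  have hpow : (1 + δ / kr) ^ m ≤ Real.exp 1 := by
    have h1 : (1 + δ / kr) ≤ Real.exp (δ / kr) := by
      have := Real.add_one_le_exp (δ / kr); linarith
    have h2 : (1 + δ / kr) ^ m ≤ Real.exp (δ / kr) ^ m := by
      apply pow_le_pow_left₀ (by positivity) h1
    have h3 : Real.exp (δ / kr) ^ m = Real.exp (m * (δ / kr)) := (Real.exp_nat_mul _ m).symm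
    have h4 : (m : ℝ) * (δ / kr) ≤ 1 := by
      have hmkr : (m : ℝ) ≤ kr := by
        simp only [hkr]; push_cast; linarith
      have : (m : ℝ) * (δ / kr) ≤ kr * (δ / kr) := by
        apply mul_le_mul_of_nonneg_right hmkr (by positivity)
      have heq : kr * (δ / kr) = δ := by field_simp
      linarith
    calc (1 + δ / kr) ^ m ≤ Real.exp ((m : ℝ) * (δ / kr)) := by rw [← h3]; exact h2
      _ ≤ Real.exp 1 := Real.exp_le_exp.mpr h4
  -- use the recursion
  have hQ : ∏ j ∈ Finset.Icc 1 (m + 1), (1 + r (m + 1) / r j) = 2 * R := by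
    have h1 : Finset.Icc 1 (m + 1) = Finset.Ico 1 (m + 2) := rfl
    rw [h1, Finset.prod_Ico_eq_prod_range]
    have h2 : m + 2 - 1 = m + 1 := by omega
    rw [h2, Finset.prod_range_succ]
    have h3 : ∏ j ∈ Finset.range m, (1 + r (m + 1) / r (1 + j)) = R := by
      apply Finset.prod_congr rfl
      intro j _
      rw [Nat.add_comm 1 j]
    rw [h3]
    have h4 : 1 + r (m + 1) / r (1 + m) = 2 := by
      rw [Nat.add_comm 1 m]
      field_simp
      norm_num
    rw [h4]; ring
  have hrecm := hrec (m + 1) (by omega)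
  rw [hQ] at hrecm
  -- assemble everything
  have hPk : 0 < P (m + 1) := hP _ (by omega)
  have hcK : c < kr * P (m + 1) := by
    have := hK2 (m + 1) hkK2
    simpa [hkr] using this
  have hADiv : A * (δ / kr) ≤ P (m + 1) := by
    have h1 : A * (δ / kr) = A * δ / kr := by ring
    rw [h1, div_le_iff₀ hkrpos]
    nlinarith [hcK]
  have hzN : ‖z‖ ^ N ≤ (2 * r (m + 1)) ^ N :=
    pow_le_pow_left₀ (norm_nonneg z) hz2 N
  have hmain : ‖f z‖ ≤ A * (δ / kr) * (r (m + 1) ^ N * R) := by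
    rw [habsf]
    have hb1 : ‖C‖ * ‖z‖ ^ N * ∏' j, gabs j
        ≤ ‖C‖ * (2 * r (m + 1)) ^ N *
          (δ / kr * ((1 + δ / kr) ^ m * R * Real.exp 2)) := by
      apply mul_le_mul
      · exact mul_le_mul_of_nonneg_left hzN (le_of_lt hCpos)
      · calc (∏' j, gabs j) ≤ δ / kr * ((∏ j ∈ Finset.range m, B j) * Real.exp 2) := hTle
          _ = δ / kr * ((1 + δ / kr) ^ m * R * Real.exp 2) := by rw [hBrange]
      · exact hTnonneg
      · positivity
    have hb2 : ‖C‖ * (2 * r (m + 1)) ^ N *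
          (δ / kr * ((1 + δ / kr) ^ m * R * Real.exp 2))
        ≤ ‖C‖ * (2 * r (m + 1)) ^ N *
          (δ / kr * (Real.exp 1 * R * Real.exp 2)) := by
      apply mul_le_mul_of_nonneg_left _ (by positivity)
      apply mul_le_mul_of_nonneg_left _ (by positivity)
      apply mul_le_mul_of_nonneg_right _ (by positivity)
      exact mul_le_mul_of_nonneg_right hpow (le_of_lt hRpos)
    have hb3 : ‖C‖ * (2 * r (m + 1)) ^ N *
          (δ / kr * (Real.exp 1 * R * Real.exp 2))
        = A * (δ / kr) * (r (m + 1) ^ N * R) := by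
      have hexp : Real.exp 1 * Real.exp 2 = Real.exp 3 := by
        rw [← Real.exp_add]; norm_num
      simp only [hA, mul_pow]
      linear_combination
        (‖C‖ * 2 ^ N * r (m + 1) ^ N * (δ / kr) * R) * hexp
    linarith
  have hgoal : A * (δ / kr) * (r (m + 1) ^ N * R) ≤ r (m + 1 + 1) / 2 := by
    rw [hrecm]
    have h1 : P (m + 1) * r (m + 1) ^ N * (2 * R) / 2 = P (m + 1) * (r (m + 1) ^ N * R) := by
      ring
    rw [h1]
    apply mul_le_mul_of_nonneg_right hADiv (by positivity)
  linarith
end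

section
/- If liminf_{k→∞} k P_k > 0, then there exist τ ≥ 2 and K ≥ 4τ such that for all k ≥ K and all real s with 1/2 ≤ s ≤ 1 − τ/k, |f(s a_k)| ≤ r_{k+1}/2. -/
open Filter

private lemma aux_T (T : Finset ℕ) (hT : ∀ i ∈ T, 1 ≤ i) :
    ∑ i ∈ T, ((1:ℝ)/2)^i ≤ 1 := by
  classical
  have hsub : T ⊆ Finset.Ico 1 (T.sup id + 1) := by
    intro i hi
    exact Finset.mem_Ico.2 ⟨hT i hi, Nat.lt_succ_of_le (Finset.le_sup (f := id) hi)⟩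
  have h1 : ∑ i ∈ T, ((1:ℝ)/2)^i ≤ ∑ i ∈ Finset.Ico 1 (T.sup id + 1), ((1:ℝ)/2)^i :=
    Finset.sum_le_sum_of_subset_of_nonneg hsub (fun i _ _ => by positivity)
  have h3 := sum_geometric_two_le (T.sup id + 1)
  have h4 : ∑ i ∈ Finset.range (T.sup id + 1), ((1:ℝ)/2)^i
      = 1 + ∑ i ∈ Finset.Ico 1 (T.sup id + 1), ((1:ℝ)/2)^i := by
    rw [Finset.range_eq_Ico, Finset.sum_eq_sum_Ico_succ_bot (Nat.succ_pos _)]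
    norm_num
  linarith

private lemma aux_prod_exp (S : Finset ℕ) (gg : ℕ → ℕ) (c : ℝ) (hc : 0 ≤ c)
    (hinj : ∀ x ∈ S, ∀ y ∈ S, gg x = gg y → x = y) (hg1 : ∀ j ∈ S, 1 ≤ gg j) :
    ∏ j ∈ S, (1 + c * ((1:ℝ)/2)^(gg j)) ≤ Real.exp c := by
  classical
  calc ∏ j ∈ S, (1 + c * ((1:ℝ)/2)^(gg j))
      ≤ ∏ j ∈ S, Real.exp (c * ((1:ℝ)/2)^(gg j)) := by
        refine Finset.prod_le_prod (fun i _ => by positivity) (fun i _ => ?_)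
        linarith [Real.add_one_le_exp (c * ((1:ℝ)/2)^(gg i))]
    _ = Real.exp (∑ j ∈ S, c * ((1:ℝ)/2)^(gg j)) := (Real.exp_sum _ _).symm
    _ ≤ Real.exp c := by
        apply Real.exp_le_exp.2
        rw [← Finset.mul_sum]
        have hsum : ∑ j ∈ S, ((1:ℝ)/2)^(gg j) ≤ 1 := by
          rw [← Finset.sum_image (f := fun i => ((1:ℝ)/2)^i) hinj]
          refine aux_T _ (fun i hi => ?_)
          obtain ⟨j, hj, rfl⟩ := Finset.mem_image.1 hi
          exact hg1 j hj
        calc c * ∑ j ∈ S, ((1:ℝ)/2)^(gg j) ≤ c * 1 := mul_le_mul_of_nonneg_left hsum hc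
          _ = c := mul_one c

private lemma aux_key (s X T : ℝ) (hs : 1/2 ≤ s) (hs1 : s ≤ 1) (hT : 0 < T) (hXT : T ≤ X) :
    1 + s * X ≤ s * (1 + 2 * T⁻¹) * (1 + X) := by
  have hTi : 0 ≤ T⁻¹ := inv_nonneg.2 hT.le
  have h2 : 1 ≤ T⁻¹ * X := by
    calc (1:ℝ) = T⁻¹ * T := (inv_mul_cancel₀ hT.ne').symm
      _ ≤ T⁻¹ * X := mul_le_mul_of_nonneg_left hXT hTi
  have hX : 0 < X := hT.trans_le hXT
  nlinarith [h2, hTi, hX.le]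

private lemma aux_double (r : ℕ → ℝ) (k0 : ℕ) (hd : ∀ m, k0 ≤ m → 2 * r m ≤ r (m+1)) :
    ∀ j, k0 ≤ j → ∀ d, r j * 2^d ≤ r (j + d) := by
  intro j hj d
  induction d with
  | zero => simp
  | succ d ih =>
      have h3 : 2 * r (j+d) ≤ r (j+d+1) := hd (j+d) (le_trans hj (Nat.le_add_right _ _))
      have : r j * 2^(d+1) = (r j * 2^d) * 2 := by ring
      calc r j * 2^(d+1) = (r j * 2^d) * 2 := this
        _ ≤ r (j+d) * 2 := by nlinarith
        _ ≤ r (j+d+1) := by linarith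
        _ = r (j + (d+1)) := by ring_nf

private lemma aux_calc (τ : ℝ) (hτ : 0 < τ) (k : ℕ) (hk : 1 ≤ k) (s : ℝ)
    (hs0 : 0 ≤ s) (hs1 : s ≤ 1 - τ / k) :
    (k:ℝ) * (1 - s) * s ^ k ≤ 2 * Real.exp (-(τ/2)) := by
  have hk' : (0:ℝ) < k := by exact_mod_cast hk
  set x := (k:ℝ) * (1 - s) with hx
  have hτx : τ ≤ x := by
    have h1 : τ / k ≤ 1 - s := by linarith
    have h2 := mul_le_mul_of_nonneg_left h1 hk'.le
    calc τ = (k:ℝ) * (τ / k) := by field_simp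
      _ ≤ (k:ℝ) * (1 - s) := h2
  have hx0 : 0 < x := hτ.trans_le hτx
  have hs_le : s ≤ Real.exp (s - 1) := by linarith [Real.add_one_le_exp (s - 1)]
  have hsk : s ^ k ≤ Real.exp (-x) := by
    calc s ^ k ≤ (Real.exp (s - 1)) ^ k := pow_le_pow_left₀ hs0 hs_le k
      _ = Real.exp ((k:ℝ) * (s - 1)) := by
          rw [← Real.exp_nat_mul]
      _ = Real.exp (-x) := by congr 1; rw [hx]; ring
  have hx2 : x ≤ 2 * Real.exp (x/2) := by
    linarith [Real.add_one_le_exp (x/2)]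
  have hmono : Real.exp (-(x/2)) ≤ Real.exp (-(τ/2)) := Real.exp_le_exp.2 (by linarith)
  calc (k:ℝ) * (1 - s) * s ^ k = x * s ^ k := rfl
    _ ≤ x * Real.exp (-x) := mul_le_mul_of_nonneg_left hsk hx0.le
    _ ≤ (2 * Real.exp (x/2)) * Real.exp (-x) :=
        mul_le_mul_of_nonneg_right hx2 (Real.exp_pos _).le
    _ = 2 * Real.exp (-(x/2)) := by
        rw [mul_assoc, ← Real.exp_add]
        congr 2
        ring
    _ ≤ 2 * Real.exp (-(τ/2)) := by linarith

set_option maxHeartbeats 1000000 in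
/-- if `liminf k P_k > 0`, then there are `τ ≥ 2` and `K ≥ 4τ` such
that for all `k ≥ K` and all real `s ∈ [1/2, 1 - τ/k]`, `|f(s a_k)| ≤ r_{k+1}/2`. -/
theorem stmt_13 (N : ℕ) (C : ℂ) (hC : C ≠ 0)
    (P r : ℕ → ℝ)
    (hP : ∀ k, 1 ≤ k → 0 < P k)
    (hPlim : Tendsto (fun k : ℕ => (P k) ^ ((1 : ℝ) / k)) atTop (nhds 1))
    (hrpos : ∀ k, 1 ≤ k → 0 < r k)
    (hr2 : ∀ᶠ k in atTop, 2 * r k ≤ r (k + 1))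
    (hrec : ∀ k, 1 ≤ k →
      r (k + 1) = P k * (r k) ^ N * ∏ j ∈ Finset.Icc 1 k, (1 + r k / r j))
    (a : ℕ → ℂ) (ha : ∀ k, 1 ≤ k → ‖a k‖ = r k)
    (f : ℂ → ℂ)
    (hmul : ∀ z : ℂ, Multipliable (fun k : ℕ => 1 - z / a (k + 1)))
    (hf : ∀ z : ℂ, f z = C * z ^ N * ∏' k : ℕ, (1 - z / a (k + 1)))
    (hinf : (0 : EReal) <
      Filter.liminf (fun k : ℕ => (((k : ℝ) * P k : ℝ) : EReal)) atTop) :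
    ∃ τ : ℝ, 2 ≤ τ ∧ ∃ K : ℕ, 4 * τ ≤ (K : ℝ) ∧ ∀ k, K ≤ k →
      ∀ s : ℝ, 1 / 2 ≤ s → s ≤ 1 - τ / (k : ℝ) →
        ‖f ((s : ℂ) * a k)‖ ≤ r (k + 1) / 2 := by
  classical
  -- extract c > 0 with c ≤ k * P k eventually
  obtain ⟨z, hz0, hzl⟩ := exists_between hinf
  have hzt : z ≠ ⊤ := hzl.ne_top
  have hzb : z ≠ ⊥ := ne_bot_of_gt hz0
  set c : ℝ := z.toReal with hc_def
  have hcz : (c : EReal) = z := EReal.coe_toReal hzt hzb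
  have hc0 : 0 < c := by
    rw [← hcz] at hz0; exact_mod_cast hz0
  have hev : ∀ᶠ k : ℕ in atTop, c < (k : ℝ) * P k := by
    have h := eventually_lt_of_lt_liminf (hcz ▸ hzl)
    filter_upwards [h] with k hk
    exact_mod_cast hk
  obtain ⟨K1, hK1⟩ := eventually_atTop.1 hev
  -- doubling index
  obtain ⟨k0', hk0'⟩ := eventually_atTop.1 hr2
  set k0 : ℕ := max k0' 1 with hk0_def
  have hk01 : 1 ≤ k0 := le_max_right _ _
  have hd : ∀ m, k0 ≤ m → 2 * r m ≤ r (m+1) :=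
    fun m hm => hk0' m (le_trans (le_max_left _ _) hm)
  -- constants
  have habsC : 0 < ‖C‖ := norm_pos_iff.2 hC
  set D : ℝ := ‖C‖ * Real.exp 3 * 2^(k0+1) with hD_def
  have hD0 : 0 < D := by positivity
  set τ : ℝ := max 2 (2 * Real.log (D / c)) with hτ_def
  have hτ2 : 2 ≤ τ := le_max_left _ _
  have hτ0 : 0 < τ := lt_of_lt_of_le two_pos hτ2
  have hexpτ : Real.exp (-(τ/2)) ≤ c / D := by
    have hlog : Real.log (D / c) ≤ τ / 2 := by
      have h := le_max_right 2 (2 * Real.log (D / c))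
      rw [← hτ_def] at h
      linarith
    have h1 : Real.exp (-(τ/2)) ≤ Real.exp (-(Real.log (D / c))) :=
      Real.exp_le_exp.2 (by linarith)
    have h2 : Real.exp (-(Real.log (D / c))) = c / D := by
      rw [Real.exp_neg, Real.exp_log (by positivity), inv_div]
    linarith [h2 ▸ h1]
  refine ⟨τ, hτ2, max (max K1 (k0+1)) (Nat.ceil (4*τ) + 1), ?_, ?_⟩
  · have h1 : (4*τ : ℝ) ≤ (Nat.ceil (4*τ) : ℝ) := Nat.le_ceil _
    have h3 : ((Nat.ceil (4*τ) + 1 : ℕ) : ℝ)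
        ≤ ((max (max K1 (k0+1)) (Nat.ceil (4*τ) + 1) : ℕ) : ℝ) := by
      exact_mod_cast le_max_right _ _
    push_cast at h3 ⊢
    linarith
  intro k hk s hs_half hs_up
  -- basic facts about k
  have hkK1 : K1 ≤ k := le_trans (le_trans (le_max_left _ _) (le_max_left _ _)) hk
  have hkk0 : k0 + 1 ≤ k := le_trans (le_trans (le_max_right _ _) (le_max_left _ _)) hk
  have hk1 : 1 ≤ k := by omega
  have hk_pos : (0:ℝ) < (k:ℝ) := by exact_mod_cast hk1
  have hs0 : (0:ℝ) ≤ s := by linarith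
  have hs1 : s ≤ 1 := by
    have hpos : 0 < τ / k := by positivity
    linarith
  have hccP : c < (k:ℝ) * P k := hK1 k hkK1
  -- positivity and nonvanishing
  have ha_ne : ∀ m, 1 ≤ m → a m ≠ 0 := by
    intro m hm hcon
    have h := ha m hm
    rw [hcon, norm_zero] at h
    exact (hrpos m hm).ne h
  obtain ⟨z', hz'_def⟩ : ∃ z' : ℂ, z' = (s : ℂ) * a k := ⟨_, rfl⟩
  have habsz : ‖z'‖ = s * r k := by
    rw [hz'_def, norm_mul, Complex.norm_of_nonneg hs0, ha k hk1]
  -- generic factor bound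
  have habs_g : ∀ j : ℕ, ‖1 - z' / a (j+1)‖ ≤ 1 + s * r k / r (j+1) := by
    intro j
    have hdiv : ‖z' / a (j+1)‖ = s * r k / r (j+1) := by
      rw [norm_div, habsz, ha (j+1) (by omega)]
    calc ‖1 - z' / a (j+1)‖
        ≤ ‖(1:ℂ)‖ + ‖z' / a (j+1)‖ := by
          exact norm_sub_le (1:ℂ) (z' / a (j+1))
      _ = 1 + s * r k / r (j+1) := by rw [norm_one, hdiv]
  -- ratio bounds from doubling
  have hup : ∀ m, k ≤ m → r k / r m ≤ ((1:ℝ)/2)^(m - k) := by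
    intro m hm
    have hdd := aux_double r k0 hd k (by omega) (m - k)
    rw [(by omega : k + (m - k) = m)] at hdd
    have hrm : 0 < r m := hrpos m (by omega)
    have h2 : (0:ℝ) < 2^(m-k) := by positivity
    rw [div_le_iff₀ hrm, div_pow, one_pow, div_mul_eq_mul_div, le_div_iff₀ h2]
    linarith
  have hlow : ∀ m, k0 ≤ m → m ≤ k → (2:ℝ)^(k-m) ≤ r k / r m := by
    intro m hm hmk
    have hdd := aux_double r k0 hd m hm (k - m)
    rw [(by omega : m + (k - m) = k)] at hdd
    have hrm : 0 < r m := hrpos m (by omega)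
    rw [le_div_iff₀ hrm]
    linarith
  -- the main finite product Qm
  obtain ⟨Qm, hQm_def⟩ :
      ∃ Qm : ℝ, Qm = ∏ j ∈ Finset.range (k-1), (1 + r k / r (j+1)) := ⟨_, rfl⟩
  have hQm_pos : 0 < Qm := by
    rw [hQm_def]
    refine Finset.prod_pos (fun j _ => ?_)
    have h1 := hrpos (j+1) (by omega)
    have h2 := hrpos k hk1
    positivity
  have hQ : ∏ j ∈ Finset.Icc 1 k, (1 + r k / r j) = Qm * 2 := by
    have h1 : Finset.Icc 1 k = Finset.Ico 1 (k+1) := (Finset.Ico_add_one_right_eq_Icc 1 k).symm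
    rw [h1, Finset.prod_Ico_eq_prod_range]
    have h2 : k + 1 - 1 = k := by omega
    rw [h2]
    have h3 : ∀ j ∈ Finset.range k, (1 + r k / r (1 + j)) = (1 + r k / r (j + 1)) := by
      intro j _; rw [Nat.add_comm 1 j]
    rw [Finset.prod_congr rfl h3]
    have h4 : k = (k - 1) + 1 := by omega
    rw [h4, Finset.prod_range_succ, ← h4]
    rw [div_self (hrpos k hk1).ne', hQm_def]
    norm_num
  -- bound for partial products, n ≥ k+1
  obtain ⟨B, hB_def⟩ :
      ∃ B : ℝ, B = (1 - s) * Real.exp 3 * s^(k - k0) * Qm := ⟨_, rfl⟩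
  have hpartial : ∀ n, k + 1 ≤ n →
      ∏ j ∈ Finset.range n, ‖1 - z' / a (j+1)‖ ≤ B := by
    intro n hn
    have hsplit1 : (∏ j ∈ Finset.range (k-1), ‖1 - z' / a (j+1)‖) *
        ∏ j ∈ Finset.Ico (k-1) n, ‖1 - z' / a (j+1)‖
        = ∏ j ∈ Finset.range n, ‖1 - z' / a (j+1)‖ :=
      Finset.prod_range_mul_prod_Ico _ (by omega)
    have hsplit2 : ∏ j ∈ Finset.Ico (k-1) n, ‖1 - z' / a (j+1)‖
        = ‖1 - z' / a ((k-1)+1)‖ *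
          ∏ j ∈ Finset.Ico k n, ‖1 - z' / a (j+1)‖ := by
      rw [Finset.prod_eq_prod_Ico_succ_bot (by omega : k - 1 < n)]
      rw [(by omega : k - 1 + 1 = k)]
    -- (A) middle factor
    have hA : ‖1 - z' / a ((k-1)+1)‖ = 1 - s := by
      rw [(by omega : k - 1 + 1 = k)]
      have h1 : z' / a k = (s : ℂ) := by
        rw [hz'_def]; exact mul_div_cancel_right₀ _ (ha_ne k hk1)
      rw [h1]
      have h2 : (1 : ℂ) - (s:ℂ) = ((1 - s : ℝ) : ℂ) := by push_cast; ring
      rw [h2, Complex.norm_of_nonneg (by linarith)]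
    -- (B) tail
    have hB_tail : ∏ j ∈ Finset.Ico k n, ‖1 - z' / a (j+1)‖ ≤ Real.exp 1 := by
      calc ∏ j ∈ Finset.Ico k n, ‖1 - z' / a (j+1)‖
          ≤ ∏ j ∈ Finset.Ico k n, (1 + 1 * ((1:ℝ)/2)^((j+1) - k)) := by
            refine Finset.prod_le_prod (fun j _ => norm_nonneg _) (fun j hj => ?_)
            have hjk : k ≤ j := (Finset.mem_Ico.1 hj).1
            have h1 := habs_g j
            have h2 := hup (j+1) (by omega)
            have hrj : 0 < r (j+1) := hrpos (j+1) (by omega)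
            have h4 : s * r k ≤ r k := mul_le_of_le_one_left (hrpos k hk1).le hs1
            have h3 : s * r k / r (j+1) ≤ r k / r (j+1) :=
              (div_le_div_iff_of_pos_right hrj).mpr h4
            rw [one_mul]
            linarith
        _ ≤ Real.exp 1 := by
            refine aux_prod_exp _ _ 1 zero_le_one (fun x hx y hy hxy => ?_) (fun j hj => ?_)
            · have hx1 := (Finset.mem_Ico.1 hx).1
              have hy1 := (Finset.mem_Ico.1 hy).1
              omega
            · have hj1 := (Finset.mem_Ico.1 hj).1
              omega
    -- (C) head
    have hC_head : ∏ j ∈ Finset.range (k-1), ‖1 - z' / a (j+1)‖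
        ≤ Real.exp 2 * s^(k - k0) * Qm := by
      have hsplit3 : (∏ j ∈ Finset.range (k0-1), ‖1 - z' / a (j+1)‖) *
          ∏ j ∈ Finset.Ico (k0-1) (k-1), ‖1 - z' / a (j+1)‖
          = ∏ j ∈ Finset.range (k-1), ‖1 - z' / a (j+1)‖ :=
        Finset.prod_range_mul_prod_Ico _ (by omega)
      have hsplit4 : (∏ j ∈ Finset.range (k0-1), (1 + r k / r (j+1))) *
          ∏ j ∈ Finset.Ico (k0-1) (k-1), (1 + r k / r (j+1))
          = ∏ j ∈ Finset.range (k-1), (1 + r k / r (j+1)) :=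
        Finset.prod_range_mul_prod_Ico _ (by omega)
      have hC1 : ∏ j ∈ Finset.range (k0-1), ‖1 - z' / a (j+1)‖
          ≤ ∏ j ∈ Finset.range (k0-1), (1 + r k / r (j+1)) := by
        refine Finset.prod_le_prod (fun j _ => norm_nonneg _) (fun j hj => ?_)
        have h1 := habs_g j
        have hrj : 0 < r (j+1) := hrpos (j+1) (by omega)
        have h4 : s * r k ≤ r k := mul_le_of_le_one_left (hrpos k hk1).le hs1
        have h3 : s * r k / r (j+1) ≤ r k / r (j+1) :=
          (div_le_div_iff_of_pos_right hrj).mpr h4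
        linarith
      have hC2 : ∏ j ∈ Finset.Ico (k0-1) (k-1), ‖1 - z' / a (j+1)‖
          ≤ ∏ j ∈ Finset.Ico (k0-1) (k-1),
              (s * (1 + 2 * ((1:ℝ)/2)^(k - (j+1))) * (1 + r k / r (j+1))) := by
        refine Finset.prod_le_prod (fun j _ => norm_nonneg _) (fun j hj => ?_)
        obtain ⟨hj1, hj2⟩ := Finset.mem_Ico.1 hj
        have hm1 : k0 ≤ j + 1 := by omega
        have hm2 : j + 1 ≤ k := by omega
        have hrj : 0 < r (j+1) := hrpos (j+1) (by omega)
        have hXT := hlow (j+1) hm1 hm2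
        have hT : (0:ℝ) < 2^(k - (j+1)) := by positivity
        have hkey := aux_key s (r k / r (j+1)) ((2:ℝ)^(k - (j+1))) hs_half hs1 hT hXT
        have hinv : ((2:ℝ)^(k - (j+1)))⁻¹ = ((1:ℝ)/2)^(k - (j+1)) := by
          rw [div_pow, one_pow, one_div]
        rw [hinv] at hkey
        rw [← mul_div_assoc] at hkey
        exact le_trans (habs_g j) hkey
      have hC2' : ∏ j ∈ Finset.Ico (k0-1) (k-1),
            (s * (1 + 2 * ((1:ℝ)/2)^(k - (j+1))) * (1 + r k / r (j+1)))
          ≤ (s^(k - k0) * Real.exp 2) * ∏ j ∈ Finset.Ico (k0-1) (k-1), (1 + r k / r (j+1)) := by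
        rw [Finset.prod_mul_distrib, Finset.prod_mul_distrib, Finset.prod_const]
        have hcard : (Finset.Ico (k0-1) (k-1)).card = k - k0 := by
          rw [Nat.card_Ico]; omega
        rw [hcard]
        have hexp2 : ∏ j ∈ Finset.Ico (k0-1) (k-1), (1 + 2 * ((1:ℝ)/2)^(k - (j+1)))
            ≤ Real.exp 2 := by
          refine aux_prod_exp _ _ 2 (by norm_num) (fun x hx y hy hxy => ?_) (fun j hj => ?_)
          · have hx1 := Finset.mem_Ico.1 hx
            have hy1 := Finset.mem_Ico.1 hy
            omega
          · have hj1 := Finset.mem_Ico.1 hj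
            omega
        have hQpart : 0 ≤ ∏ j ∈ Finset.Ico (k0-1) (k-1), (1 + r k / r (j+1)) := by
          refine Finset.prod_nonneg (fun j _ => ?_)
          have h1 := hrpos (j+1) (by omega)
          have h2 := hrpos k hk1
          positivity
        have hspow : (0:ℝ) ≤ s^(k-k0) := by positivity
        calc s^(k-k0) * (∏ j ∈ Finset.Ico (k0-1) (k-1), (1 + 2 * ((1:ℝ)/2)^(k - (j+1)))) *
              ∏ j ∈ Finset.Ico (k0-1) (k-1), (1 + r k / r (j+1))
            ≤ s^(k-k0) * Real.exp 2 * ∏ j ∈ Finset.Ico (k0-1) (k-1), (1 + r k / r (j+1)) := by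
              have := mul_le_mul_of_nonneg_left hexp2 hspow
              exact mul_le_mul_of_nonneg_right this hQpart
          _ = (s^(k - k0) * Real.exp 2) * ∏ j ∈ Finset.Ico (k0-1) (k-1), (1 + r k / r (j+1)) := by
              ring
      have hpos1 : 0 ≤ ∏ j ∈ Finset.range (k0-1), ‖1 - z' / a (j+1)‖ :=
        Finset.prod_nonneg (fun j _ => norm_nonneg _)
      have hpos2 : 0 ≤ ∏ j ∈ Finset.range (k0-1), (1 + r k / r (j+1)) := by
        refine Finset.prod_nonneg (fun j _ => ?_)
        have h1 := hrpos (j+1) (by omega)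
        have h2 := hrpos k hk1
        positivity
      have hpos3 : 0 ≤ ∏ j ∈ Finset.Ico (k0-1) (k-1), ‖1 - z' / a (j+1)‖ :=
        Finset.prod_nonneg (fun j _ => norm_nonneg _)
      calc ∏ j ∈ Finset.range (k-1), ‖1 - z' / a (j+1)‖
          = (∏ j ∈ Finset.range (k0-1), ‖1 - z' / a (j+1)‖) *
            ∏ j ∈ Finset.Ico (k0-1) (k-1), ‖1 - z' / a (j+1)‖ := hsplit3.symm
        _ ≤ (∏ j ∈ Finset.range (k0-1), (1 + r k / r (j+1))) *
            ((s^(k - k0) * Real.exp 2) *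
              ∏ j ∈ Finset.Ico (k0-1) (k-1), (1 + r k / r (j+1))) := by
            exact mul_le_mul hC1 (le_trans hC2 hC2') hpos3 hpos2
        _ = Real.exp 2 * s^(k - k0) *
            ((∏ j ∈ Finset.range (k0-1), (1 + r k / r (j+1))) *
              ∏ j ∈ Finset.Ico (k0-1) (k-1), (1 + r k / r (j+1))) := by ring
        _ = Real.exp 2 * s^(k - k0) * Qm := by rw [hsplit4, ← hQm_def]
    -- combine
    have hpos_head : 0 ≤ ∏ j ∈ Finset.range (k-1), ‖1 - z' / a (j+1)‖ :=
      Finset.prod_nonneg (fun j _ => norm_nonneg _)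
    have hpos_tail : 0 ≤ ∏ j ∈ Finset.Ico k n, ‖1 - z' / a (j+1)‖ :=
      Finset.prod_nonneg (fun j _ => norm_nonneg _)
    have h1s : 0 ≤ 1 - s := by linarith
    calc ∏ j ∈ Finset.range n, ‖1 - z' / a (j+1)‖
        = (∏ j ∈ Finset.range (k-1), ‖1 - z' / a (j+1)‖) *
          ((1 - s) * ∏ j ∈ Finset.Ico k n, ‖1 - z' / a (j+1)‖) := by
          rw [← hsplit1, hsplit2, hA]
      _ ≤ (Real.exp 2 * s^(k - k0) * Qm) * ((1 - s) * Real.exp 1) := by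
          refine mul_le_mul hC_head (mul_le_mul_of_nonneg_left hB_tail h1s)
            (mul_nonneg h1s hpos_tail) ?_
          have hspow : (0:ℝ) ≤ s^(k-k0) := by positivity
          exact mul_nonneg (mul_nonneg (Real.exp_pos 2).le hspow) hQm_pos.le
      _ = B := by
          rw [hB_def]
          have h23 : Real.exp 2 * Real.exp 1 = Real.exp 3 := by
            rw [← Real.exp_add]; norm_num
          rw [← h23]; ring
  -- take the limit
  have htprod_le : ‖∏' j : ℕ, (1 - z' / a (j+1))‖ ≤ B := by
    have ht := (hmul z').hasProd.tendsto_prod_nat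
    have ht1 : Tendsto (fun n => ‖∏ j ∈ Finset.range n, (1 - z' / a (j+1))‖)
        atTop (nhds (‖∏' j : ℕ, (1 - z' / a (j+1))‖)) :=
      (continuous_norm.continuousAt.tendsto).comp ht
    have ht2 : Tendsto (fun n => ∏ j ∈ Finset.range n, ‖1 - z' / a (j+1)‖)
        atTop (nhds (‖∏' j : ℕ, (1 - z' / a (j+1))‖)) := by
      refine ht1.congr (fun n => ?_)
      exact norm_prod _ _
    exact le_of_tendsto ht2 (eventually_atTop.2 ⟨k+1, hpartial⟩)
  -- final numeric inequality
  have hrk_pos : 0 < r k := hrpos k hk1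
  have hfin : ‖C‖ * ((1 - s) * Real.exp 3 * s^(k - k0)) ≤ P k := by
    have hs2 : (1:ℝ) ≤ (2*s)^k0 := one_le_pow₀ (by linarith)
    have hsplit_pow : s^(k - k0) ≤ 2^k0 * s^k := by
      have h1 : s^k = s^(k - k0) * s^k0 := by
        rw [← pow_add]
        congr 1
        omega
      have h2 : ((2:ℝ)*s)^k0 = 2^k0 * s^k0 := mul_pow 2 s k0
      have h3 : (0:ℝ) ≤ s^(k - k0) := by positivity
      calc s^(k - k0) = s^(k - k0) * 1 := (mul_one _).symm
        _ ≤ s^(k - k0) * (2*s)^k0 := mul_le_mul_of_nonneg_left hs2 h3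
        _ = 2^k0 * (s^(k - k0) * s^k0) := by rw [h2]; ring
        _ = 2^k0 * s^k := by rw [← h1]
    have hcalc := aux_calc τ hτ0 k hk1 s hs0 hs_up
    have h1s : 0 ≤ 1 - s := by linarith
    have hkey : (k:ℝ) * (‖C‖ * ((1 - s) * Real.exp 3 * s^(k - k0)))
        ≤ (k:ℝ) * P k := by
      calc (k:ℝ) * (‖C‖ * ((1 - s) * Real.exp 3 * s^(k - k0)))
          ≤ (k:ℝ) * (‖C‖ * ((1 - s) * Real.exp 3 * (2^k0 * s^k))) := by
            have hm : 0 ≤ (k:ℝ) * (‖C‖ * ((1 - s) * Real.exp 3)) := by positivity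
            nlinarith [hsplit_pow, hm]
        _ = (‖C‖ * Real.exp 3 * 2^k0) * ((k:ℝ) * (1 - s) * s^k) := by ring
        _ ≤ (‖C‖ * Real.exp 3 * 2^k0) * (2 * Real.exp (-(τ/2))) := by
            exact mul_le_mul_of_nonneg_left hcalc (by positivity)
        _ = D * Real.exp (-(τ/2)) := by rw [hD_def, pow_succ]; ring
        _ ≤ D * (c / D) := mul_le_mul_of_nonneg_left hexpτ hD0.le
        _ = c := by field_simp
        _ ≤ (k:ℝ) * P k := hccP.le
    exact le_of_mul_le_mul_left hkey hk_pos
  have hzN : ‖z'‖ ^ N ≤ r k ^ N := by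
    rw [habsz]
    refine pow_le_pow_left₀ (by positivity) ?_ N
    nlinarith
  have habs_tprod_nonneg : 0 ≤ ‖∏' j : ℕ, (1 - z' / a (j+1))‖ :=
    norm_nonneg _
  rw [← hz'_def]
  calc ‖f z'‖
      = ‖C‖ * ‖z'‖ ^ N *
        ‖∏' j : ℕ, (1 - z' / a (j+1))‖ := by
        rw [hf z', norm_mul, norm_mul, norm_pow]
    _ ≤ ‖C‖ * r k ^ N * B := by
        refine mul_le_mul ?_ htprod_le habs_tprod_nonneg (by positivity)
        exact mul_le_mul_of_nonneg_left hzN habsC.le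
    _ ≤ P k * r k ^ N * Qm := by
        rw [hB_def]
        have hrw : ‖C‖ * r k ^ N * ((1 - s) * Real.exp 3 * s^(k - k0) * Qm)
            = (‖C‖ * ((1 - s) * Real.exp 3 * s^(k - k0))) * (r k ^ N * Qm) := by
          ring
        have hrw2 : P k * r k ^ N * Qm = P k * (r k ^ N * Qm) := by ring
        rw [hrw, hrw2]
        exact mul_le_mul_of_nonneg_right hfin
          (mul_nonneg (pow_nonneg hrk_pos.le N) hQm_pos.le)
    _ = r (k+1) / 2 := by
        rw [hrec k hk1, hQ]
        ring
end

section
/- Let 0 < r < R and let γ : [0,1] → ℂ be a piecewise continuously differentiable closed curve (γ(0) = γ(1)) with r < |γ(t)| < R for all t. Then ∫₀¹ π |γ'(t)| / ( |γ(t)| · sin(π log(|γ(t)|/r) / log(R/r)) · log(R/r) ) dt ≥ 2π² |n(γ,0)| / log(R/r), where n(γ,0) = (1/(2π)) Im ∫₀¹ γ'(t)/γ(t) dt is the winding number of γ about 0. -/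
open Filter

open MeasureTheory Set intervalIntegral

lemma piece_aux {E : Type*} [NormedAddCommGroup E] {f h : ℝ → E} {a b : ℝ} (hab : a ≤ b)
    (hh : ContinuousOn h (Set.Icc a b)) (heq : ∀ s ∈ Set.Ioo a b, f s = h s) :
    IntervalIntegrable f volume a b := by
  have H : IntervalIntegrable h volume a b :=
    ContinuousOn.intervalIntegrable (by rwa [Set.uIcc_of_le hab])
  refine H.congr_ae ?_
  have hb : ∀ᵐ x : ℝ, x ≠ b := by
    refine (MeasureTheory.ae_iff).2 ?_
    simp [Real.volume_singleton]
  filter_upwards [MeasureTheory.ae_restrict_mem measurableSet_uIoc,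
    MeasureTheory.ae_restrict_of_ae hb] with x hx hxb
  rw [Set.uIoc_of_le hab] at hx
  exact (heq x ⟨hx.1, lt_of_le_of_ne hx.2 hxb⟩).symm

/-- for a piecewise continuously differentiable closed curve `γ` in
the annulus `r < |z| < R`, the hyperbolic length of `γ` is at least
`2π² |n(γ,0)| / log(R/r)`, where `n(γ,0) = (1/(2π)) Im ∫₀¹ γ'(t)/γ(t) dt` is the
winding number of `γ` about `0`. -/
theorem stmt_14 (r R : ℝ) (hr : 0 < r) (hrR : r < R)
    (γ : ℝ → ℂ) (hclosed : γ 0 = γ 1)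
    (hin : ∀ t : ℝ, t ∈ Set.Icc (0 : ℝ) 1 → r < ‖γ t‖ ∧ ‖γ t‖ < R)
    -- piecewise continuously differentiable: there is a partition
    -- `0 = t 0 < t 1 < ⋯ < t n = 1` such that `γ` is `C¹` on each piece
    (n : ℕ) (hn : 0 < n) (t : ℕ → ℝ) (ht0 : t 0 = 0) (htn : t n = 1)
    (htmono : ∀ i, i < n → t i < t (i + 1))
    (hsmooth : ∀ i, i < n → ContDiffOn ℝ 1 γ (Set.Icc (t i) (t (i + 1)))) :
    2 * Real.pi ^ 2 *
        |(1 / (2 * Real.pi)) * (∫ s in (0 : ℝ)..1, deriv γ s / γ s).im| /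
          Real.log (R / r) ≤
      ∫ s in (0 : ℝ)..1,
        Real.pi * ‖deriv γ s‖ /
          (‖γ s‖ *
            Real.sin (Real.pi * Real.log (‖γ s‖ / r) / Real.log (R / r)) *
            Real.log (R / r)) := by
  have hpi := Real.pi_pos
  set L := Real.log (R / r) with hLdef
  have hL : 0 < L := Real.log_pos ((one_lt_div hr).2 hrR)
  -- monotonicity of the partition
  have tmono : ∀ i j, i ≤ j → j ≤ n → t i ≤ t j := by
    intro i j hij hjn
    induction j with
    | zero => simp_all
    | succ k ih =>
      rcases Nat.eq_or_lt_of_le hij with h | h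
      · exact h ▸ le_rfl
      · exact (ih (Nat.lt_succ_iff.1 h) (le_of_lt (Nat.lt_of_succ_le hjn))).trans
          (htmono k (Nat.lt_of_succ_le hjn)).le
  have tsub : ∀ i, i < n → Set.Icc (t i) (t (i + 1)) ⊆ Set.Icc (0 : ℝ) 1 := by
    intro i hi s hs
    constructor
    · calc (0 : ℝ) = t 0 := ht0.symm
        _ ≤ t i := tmono 0 i (Nat.zero_le _) hi.le
        _ ≤ s := hs.1
    · calc s ≤ t (i + 1) := hs.2
        _ ≤ t n := tmono (i + 1) n hi n.le_refl
        _ = 1 := htn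
  -- basic pointwise facts on [0,1]
  have hγne : ∀ s ∈ Set.Icc (0 : ℝ) 1, γ s ≠ 0 := by
    intro s hs
    have := (hin s hs).1
    intro h
    rw [h] at this; simp at this; linarith
  have hsinpos : ∀ s ∈ Set.Icc (0 : ℝ) 1,
      0 < Real.sin (Real.pi * Real.log (‖γ s‖ / r) / L) := by
    intro s hs
    obtain ⟨h1, h2⟩ := hin s hs
    have hb : (0 : ℝ) < ‖γ s‖ := lt_trans hr h1
    have hlp : 0 < Real.log (‖γ s‖ / r) := Real.log_pos ((one_lt_div hr).2 h1)
    have hll : Real.log (‖γ s‖ / r) < L :=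
      Real.log_lt_log (by positivity) ((div_lt_div_iff_of_pos_right hr).2 h2)
    apply Real.sin_pos_of_pos_of_lt_pi
    · positivity
    · rw [div_lt_iff₀ hL]
      nlinarith
  -- derivative agrees with derivWithin on each open piece
  have hderiv : ∀ i, i < n → ∀ s ∈ Set.Ioo (t i) (t (i + 1)),
      deriv γ s = derivWithin γ (Set.Icc (t i) (t (i + 1))) s := by
    intro i hi s hs
    have hd : DifferentiableWithinAt ℝ γ (Set.Icc (t i) (t (i + 1))) s :=
      (hsmooth i hi).differentiableOn one_ne_zero s (Set.Ioo_subset_Icc_self hs)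
    exact (hd.hasDerivWithinAt.hasDerivAt (Icc_mem_nhds hs.1 hs.2)).deriv
  have hgcont : ∀ i, i < n →
      ContinuousOn (derivWithin γ (Set.Icc (t i) (t (i + 1)))) (Set.Icc (t i) (t (i + 1))) := by
    intro i hi
    exact (hsmooth i hi).continuousOn_derivWithin (uniqueDiffOn_Icc (htmono i hi)) le_rfl
  -- integrability of deriv γ / γ
  have IA : IntervalIntegrable (fun s => deriv γ s / γ s) volume 0 1 := by
    rw [← ht0, ← htn]
    apply IntervalIntegrable.trans_iterate
    intro i hi
    refine piece_aux (htmono i hi).le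
      (ContinuousOn.div ((hgcont i hi))
        ((hsmooth i hi).continuousOn) (fun s hs => hγne s (tsub i hi hs))) ?_
    intro s hs
    rw [hderiv i hi s hs]; rfl
  -- integrability of the hyperbolic integrand
  have IC : IntervalIntegrable (fun s =>
      Real.pi * ‖deriv γ s‖ /
        (‖γ s‖ *
          Real.sin (Real.pi * Real.log (‖γ s‖ / r) / L) * L)) volume 0 1 := by
    rw [← ht0, ← htn]
    apply IntervalIntegrable.trans_iterate
    intro i hi
    have hγc : ContinuousOn γ (Set.Icc (t i) (t (i + 1))) := (hsmooth i hi).continuousOn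
    have habs : ContinuousOn (fun s => ‖γ s‖) (Set.Icc (t i) (t (i + 1))) :=
      continuous_norm.comp_continuousOn hγc
    have hdenom : ContinuousOn (fun s => ‖γ s‖ *
        Real.sin (Real.pi * Real.log (‖γ s‖ / r) / L) * L)
        (Set.Icc (t i) (t (i + 1))) := by
      apply ContinuousOn.mul _ continuousOn_const
      apply habs.mul
      apply Real.continuous_sin.comp_continuousOn
      apply ContinuousOn.div_const
      apply ContinuousOn.mul continuousOn_const
      apply ContinuousOn.log (habs.div_const r)
      intro s hs
      have h1 := (hin s (tsub i hi hs)).1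
      exact ne_of_gt (div_pos (lt_trans hr h1) hr)
    have hnum : ContinuousOn
        (fun s => Real.pi * ‖derivWithin γ (Set.Icc (t i) (t (i + 1))) s‖)
        (Set.Icc (t i) (t (i + 1))) :=
      continuousOn_const.mul (continuous_norm.comp_continuousOn (hgcont i hi))
    refine piece_aux (h := fun s =>
        Real.pi * ‖derivWithin γ (Set.Icc (t i) (t (i + 1))) s‖ /
          (‖γ s‖ *
            Real.sin (Real.pi * Real.log (‖γ s‖ / r) / L) * L))
      (htmono i hi).le (hnum.div hdenom ?_) ?_
    · intro s hs
      have h1 := (hin s (tsub i hi hs)).1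
      have hb : (0 : ℝ) < ‖γ s‖ := lt_trans hr h1
      have hsp := hsinpos s (tsub i hi hs)
      exact ne_of_gt (mul_pos (mul_pos hb hsp) hL)
    · intro s hs
      rw [hderiv i hi s hs]
  have IB : IntervalIntegrable (fun s => ‖deriv γ s / γ s‖) volume 0 1 := IA.norm
  -- pointwise bound
  have hpt : ∀ s ∈ Set.Icc (0 : ℝ) 1,
      (Real.pi / L) * ‖deriv γ s / γ s‖ ≤
      Real.pi * ‖deriv γ s‖ /
        (‖γ s‖ *
          Real.sin (Real.pi * Real.log (‖γ s‖ / r) / L) * L) := by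
    intro s hs
    have h1 := (hin s hs).1
    have hb : (0 : ℝ) < ‖γ s‖ := lt_trans hr h1
    have hsp := hsinpos s hs
    have hsle : Real.sin (Real.pi * Real.log (‖γ s‖ / r) / L) ≤ 1 :=
      Real.sin_le_one _
    rw [norm_div]
    set a := ‖deriv γ s‖
    set b := ‖γ s‖
    set S := Real.sin (Real.pi * Real.log (‖γ s‖ / r) / L)
    have ha : 0 ≤ a := norm_nonneg _
    rw [div_mul_div_comm, div_le_div_iff₀ (by positivity) (by positivity)]
    nlinarith [mul_nonneg (mul_nonneg (mul_nonneg hpi.le ha) hb.le) hL.le, hsle, hsp.le]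
  -- main chain
  set I := ∫ s in (0 : ℝ)..1, deriv γ s / γ s with hI
  have step1 : |I.im| ≤ ‖I‖ := Complex.abs_im_le_norm I
  have step2 : ‖I‖ ≤ ∫ s in (0 : ℝ)..1, ‖deriv γ s / γ s‖ := by
    exact intervalIntegral.norm_integral_le_integral_norm (by norm_num)
  have step3 : ∫ s in (0 : ℝ)..1, (Real.pi / L) * ‖deriv γ s / γ s‖ ≤
      ∫ s in (0 : ℝ)..1,
        Real.pi * ‖deriv γ s‖ /
          (‖γ s‖ *
            Real.sin (Real.pi * Real.log (‖γ s‖ / r) / L) * L) :=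
    intervalIntegral.integral_mono_on (by norm_num) (IB.const_mul _) IC hpt
  have step4 : ∫ s in (0 : ℝ)..1, (Real.pi / L) * ‖deriv γ s / γ s‖ =
      (Real.pi / L) * ∫ s in (0 : ℝ)..1, ‖deriv γ s / γ s‖ :=
    intervalIntegral.integral_const_mul _ _
  have hlhs : 2 * Real.pi ^ 2 * |(1 / (2 * Real.pi)) * I.im| / L = (Real.pi / L) * |I.im| := by
    rw [abs_mul, abs_of_pos (by positivity : (0:ℝ) < 1 / (2 * Real.pi))]
    field_simp
  rw [hlhs]
  calc (Real.pi / L) * |I.im| ≤ (Real.pi / L) * ∫ s in (0 : ℝ)..1, ‖deriv γ s / γ s‖ := by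
        apply mul_le_mul_of_nonneg_left (step1.trans step2) (by positivity)
    _ = ∫ s in (0 : ℝ)..1, (Real.pi / L) * ‖deriv γ s / γ s‖ := step4.symm
    _ ≤ _ := step3
end

section
/- There exists Q such that for every even integer q_0 ≥ Q and for all k ≥ 0, f maps the annulus ann(0; 4 a_k, a_{k+1}/4) into the annulus ann(0; 4 a_{k+1}, a_{k+2}/4). -/
open Filter

lemma aux_exp_ge_pow4 {x : ℝ} (hx : 0 ≤ x) : (1 + x/4)^4 ≤ Real.exp x := by
  have h : Real.exp x = (Real.exp (x/4))^4 := by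
    rw [← Real.exp_nat_mul]; push_cast; ring_nf
  rw [h]
  exact pow_le_pow_left₀ (by positivity) (by linarith [Real.add_one_le_exp (x/4)]) 4


lemma aux_pow4_big {Q : ℝ} (h : (10:ℝ)^6 ≤ Q) : Q^4/4096 ≤ Real.exp (Q/2) := by
  have h1 := aux_exp_ge_pow4 (x := Q/2) (by linarith)
  have h2 : (0:ℝ) ≤ Q/8 := by linarith
  have h3 : (Q/8)^4 ≤ (1 + Q/2/4)^4 := pow_le_pow_left₀ h2 (by linarith) 4
  have h4 : (Q/8)^4 = Q^4/4096 := by ring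
  linarith

lemma aux_three_mul_le_exp_half {Q : ℝ} (h : (10:ℝ)^6 ≤ Q) : 3*Q ≤ Real.exp (Q/2) := by
  have h1 := aux_pow4_big h
  have hq0 : (0:ℝ) ≤ Q := by linarith
  have k1 : (10:ℝ)^6 * Q ≤ Q * Q := mul_le_mul_of_nonneg_right h hq0
  have k2 : (10:ℝ)^6 * (Q*Q) ≤ Q * (Q*Q) := mul_le_mul_of_nonneg_right h (by positivity)
  have k3 : (10:ℝ)^6 * (Q*(Q*Q)) ≤ Q * (Q*(Q*Q)) := mul_le_mul_of_nonneg_right h (by positivity)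
  nlinarith [k1, k2, k3]

lemma aux_sq_le_exp_half {Q : ℝ} (h : (10:ℝ)^6 ≤ Q) : 3*Q^2/2 ≤ 4*Real.exp (Q/2) := by
  have h1 := aux_pow4_big h
  have hq0 : (0:ℝ) ≤ Q := by linarith
  have k1 : (10:ℝ)^6 * Q ≤ Q * Q := mul_le_mul_of_nonneg_right h hq0
  have k2 : (10:ℝ)^6 * (Q*Q) ≤ Q * (Q*Q) := mul_le_mul_of_nonneg_right h (by positivity)
  nlinarith [k1, k2]

lemma aux_log43 : Real.log (4/3) ≤ 0.3 := by
  rw [Real.log_le_iff_le_exp (by norm_num)]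
  calc (4:ℝ)/3 ≤ (1 + 0.3/4)^4 := by norm_num
    _ ≤ Real.exp 0.3 := aux_exp_ge_pow4 (by norm_num)

lemma aux_log_one_sub {d : ℝ} (h0 : 0 ≤ d) (h1 : d ≤ 1/4) :
    -(4/3) * d ≤ Real.log (1 - d) := by
  have h2 : (0:ℝ) < 1 - d := by linarith
  have h3 : Real.log (1 - d) = - Real.log (1/(1-d)) := by
    rw [Real.log_div one_ne_zero (ne_of_gt h2), Real.log_one]; ring
  have h4 : Real.log (1/(1-d)) ≤ 1/(1-d) - 1 := Real.log_le_sub_one_of_pos (by positivity)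
  have h5 : 1/(1-d) - 1 = d / (1-d) := by field_simp; ring
  have h6 : d / (1 - d) ≤ (4/3) * d := by
    rw [div_le_iff₀ h2]; nlinarith
  rw [h3]; linarith

lemma aux_log100 {x : ℝ} (hx : (10^6:ℝ) ≤ x) : Real.log (100*x) ≤ 0.005*x := by
  have hx0 : (0:ℝ) < x := by norm_num at hx ⊢; linarith
  have h1 : Real.log (100*x) = Real.log 100 + Real.log x :=
    Real.log_mul (by norm_num) (ne_of_gt hx0)
  have h100 : Real.log 100 ≤ 4.73 := by
    have h0 : Real.log 100 = Real.log (2^6) + Real.log (100/64) := by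
      rw [← Real.log_mul (by norm_num) (by norm_num)]; norm_num
    have h2 : Real.log (2^6) = 6 * Real.log 2 := by
      rw [Real.log_pow]; push_cast; ring
    have h3 : Real.log (100/64) ≤ 100/64 - 1 := Real.log_le_sub_one_of_pos (by norm_num)
    have h4 : Real.log 2 < 0.6931471808 := Real.log_two_lt_d9
    rw [h0, h2]; nlinarith
  have hsq : Real.log x ≤ 2 * Real.sqrt x - 2 := by
    have h5 : Real.log (Real.sqrt x) = Real.log x / 2 := Real.log_sqrt hx0.le
    have h6 : Real.log (Real.sqrt x) ≤ Real.sqrt x - 1 :=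
      Real.log_le_sub_one_of_pos (Real.sqrt_pos.2 hx0)
    linarith
  have hsx : Real.sqrt x ≤ x / 1000 := by
    have h7 : (1000:ℝ) ≤ Real.sqrt x := by
      rw [show (1000:ℝ) = Real.sqrt (1000^2) by rw [Real.sqrt_sq]; norm_num]
      exact Real.sqrt_le_sqrt (by norm_num; linarith)
    nlinarith [Real.sq_sqrt hx0.le, Real.sqrt_nonneg x]
  rw [h1]; nlinarith

lemma aux_hasProd_exp {u : ℕ → ℝ} {S : ℝ} (h : HasSum u S) :
    HasProd (fun i => Real.exp (u i)) (Real.exp S) := by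
  have h2 := (Real.continuous_exp.tendsto S).comp h
  unfold HasProd
  convert h2 using 2 with s
  simp [Function.comp, Real.exp_sum]

noncomputable def aux_absHom : ℂ →* ℝ where
  toFun := fun z => ‖z‖
  map_one' := norm_one
  map_mul' := norm_mul

set_option maxHeartbeats 2000000 in
/-- for `q_0` even and large enough, `f` maps
`ann(0; 4 a_k, a_{k+1}/4)` into `ann(0; 4 a_{k+1}, a_{k+2}/4)` for all `k ≥ 0`.
Here `q_{k+1} = (3/2) q_k²`, `a_0 = e^{q_0/2}`, `a_{k+1} = e^{q_k}` and
`f(z) = z² ∏_{k=0}^∞ (1 - z/a_k)^{q_k}`. -/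
theorem stmt_15 :
    ∃ Q : ℕ, ∀ q0 : ℕ, Even q0 → 0 < q0 → Q ≤ q0 →
      ∀ (q : ℕ → ℕ) (a : ℕ → ℝ) (f : ℂ → ℂ),
        q 0 = q0 →
        (∀ k, 2 * q (k + 1) = 3 * q k ^ 2) →
        a 0 = Real.exp ((q0 : ℝ) / 2) →
        (∀ k, a (k + 1) = Real.exp (q k)) →
        (∀ z : ℂ, Multipliable (fun k : ℕ => (1 - z / (a k : ℂ)) ^ q k)) →
        (∀ z : ℂ, f z = z ^ 2 * ∏' k : ℕ, (1 - z / (a k : ℂ)) ^ q k) →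
        ∀ k : ℕ, ∀ z : ℂ,
          4 * a k < ‖z‖ → ‖z‖ < a (k + 1) / 4 →
            4 * a (k + 1) < ‖f z‖ ∧ ‖f z‖ < a (k + 2) / 4 := by
  use 10^6
  intro q0 _hEven _hq0pos hQle q a f hq00 hqrec ha0 harec hmult hf k z hz1 hz2
  -- basic facts about `q`
  have hqcast : ∀ j, (q (j+1) : ℝ) = 3 * (q j:ℝ)^2 / 2 := by
    intro j
    have h := congrArg (Nat.cast : ℕ → ℝ) (hqrec j)
    push_cast at h; linarith
  have hqM : ∀ j, (10^6:ℝ) ≤ (q j : ℝ) := by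
    intro j
    induction j with
    | zero =>
      rw [hq00]
      exact_mod_cast hQle
    | succ n ih => rw [hqcast n]; nlinarith
  have hq2 : ∀ j, 2 * (q j:ℝ) ≤ (q (j+1):ℝ) := by
    intro j; rw [hqcast j]; nlinarith [hqM j]
  -- `a` and its logarithm `c`
  have hapos : ∀ j, 0 < a j := by
    intro j; cases j with
    | zero => rw [ha0]; exact Real.exp_pos _
    | succ n => rw [harec n]; exact Real.exp_pos _
  set c : ℕ → ℝ := fun j => Real.log (a j) with hc
  have hc0 : c 0 = (q 0:ℝ)/2 := by rw [hc]; simp [ha0, Real.log_exp, hq00]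
  have hcs : ∀ j, c (j+1) = (q j : ℝ) := by intro j; rw [hc]; simp [harec, Real.log_exp]
  have hexpc : ∀ j, a j = Real.exp (c j) := fun j => (Real.exp_log (hapos j)).symm
  have hcpos : ∀ j, 0 < c j := by
    intro j; cases j with
    | zero => rw [hc0]; linarith [hqM 0]
    | succ n => rw [hcs n]; linarith [hqM n]
  have hcmono : Monotone c := by
    apply monotone_nat_of_le_succ
    intro j; cases j with
    | zero => rw [hc0, hcs 0]; linarith [hqM 0]
    | succ n => rw [hcs n, hcs (n+1)]; linarith [hq2 n, hqM n]
  have hamono : Monotone a := fun i j hij => by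
    rw [hexpc i, hexpc j]; exact Real.exp_le_exp.2 (hcmono hij)
  have hchalf : c k ≤ (q k : ℝ)/2 := by
    cases k with
    | zero => rw [hc0]
    | succ n => rw [hcs n]; linarith [hq2 n, hqM n]
  -- the radius and its log
  set r := ‖z‖ with hr
  have hrpos : 0 < r := lt_trans (mul_pos (by norm_num) (hapos k)) hz1
  set t := Real.log r with ht
  have hrt : r = Real.exp t := (Real.exp_log hrpos).symm
  have hL4 : Real.log 4 = 2 * Real.log 2 := by
    rw [show (4:ℝ) = 2^2 by norm_num, Real.log_pow]; push_cast; ring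
  have hL4l : 1.3862 < Real.log 4 := by rw [hL4]; linarith [Real.log_two_gt_d9]
  have hL4u : Real.log 4 < 1.3863 := by rw [hL4]; linarith [Real.log_two_lt_d9]
  have htl : c k + Real.log 4 < t := by
    have h := Real.log_lt_log (mul_pos (by norm_num) (hapos k)) hz1
    rwa [Real.log_mul (by norm_num) (ne_of_gt (hapos k)), add_comm] at h
  have htu : t < c (k+1) - Real.log 4 := by
    have h := Real.log_lt_log hrpos hz2
    rwa [Real.log_div (ne_of_gt (hapos (k+1))) (by norm_num), sub_eq_add_neg, ← sub_eq_add_neg] at h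
  have htqk : t < (q k:ℝ) - Real.log 4 := by rw [← hcs k]; exact htu
  have htpos : 0 < t := by linarith [hcpos k]
  -- the factors
  set x : ℕ → ℝ := fun j => ‖(1:ℂ) - z / (a j : ℂ)‖ with hx
  have hdj : ∀ j, ‖z / (a j : ℂ)‖ = r / a j := by
    intro j; rw [norm_div, Complex.norm_real, Real.norm_of_nonneg (hapos j).le, hr]
  have hxu : ∀ j, x j ≤ 1 + r / a j := by
    intro j
    simp only [hx]
    calc ‖(1:ℂ) - z / (a j:ℂ)‖ = ‖(1:ℂ) - z / (a j:ℂ)‖ := rfl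
      _ ≤ ‖(1:ℂ)‖ + ‖z / (a j:ℂ)‖ := norm_sub_le _ _
      _ = 1 + r / a j := by rw [norm_one, hdj]
  have hxl1 : ∀ j, r / a j - 1 ≤ x j := by
    intro j
    have h1 : ‖z / (a j:ℂ)‖ - ‖(1:ℂ)‖ ≤ ‖z / (a j:ℂ) - 1‖ := norm_sub_norm_le _ _
    rw [norm_sub_rev] at h1
    simp only [hx]
    calc r / a j - 1 = ‖z / (a j:ℂ)‖ - ‖(1:ℂ)‖ := by
          rw [norm_one, hdj]
      _ ≤ ‖(1:ℂ) - z / (a j:ℂ)‖ := h1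
      _ = ‖(1:ℂ) - z / (a j:ℂ)‖ := rfl
  have hxl2 : ∀ j, 1 - r / a j ≤ x j := by
    intro j
    have h1 : ‖(1:ℂ)‖ - ‖z / (a j:ℂ)‖ ≤ ‖(1:ℂ) - z / (a j:ℂ)‖ := norm_sub_norm_le _ _
    simp only [hx]
    calc 1 - r / a j = ‖(1:ℂ)‖ - ‖z / (a j:ℂ)‖ := by
          rw [norm_one, hdj]
      _ ≤ ‖(1:ℂ) - z / (a j:ℂ)‖ := h1
      _ = ‖(1:ℂ) - z / (a j:ℂ)‖ := rfl
  have hdbig : ∀ j, j ≤ k → 4 ≤ r / a j := by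
    intro j hj
    have h1 : a j ≤ a k := hamono hj
    rw [le_div_iff₀ (hapos j)]
    linarith
  have hdsm : ∀ j, k+1 ≤ j → r / a j ≤ 1/4 := by
    intro j hj
    have h1 : a (k+1) ≤ a j := hamono hj
    rw [div_le_iff₀ (hapos j)]
    linarith
  have hx3 : ∀ j, j ≤ k → 3 ≤ x j := by
    intro j hj
    linarith [hxl1 j, hdbig j hj]
  have hxtl : ∀ j, k+1 ≤ j → 3/4 ≤ x j := by
    intro j hj
    linarith [hxl2 j, hdsm j hj]
  have hxpos : ∀ j, 0 < x j := by
    intro j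
    rcases le_or_gt j k with h | h
    · linarith [hx3 j h]
    · linarith [hxtl j h]
  -- u and v
  set u : ℕ → ℝ := fun j => (q j : ℝ) * Real.log (x j) with hu
  set v : ℕ → ℝ := fun j => (q j : ℝ) * r / a j with hv
  have hqj0 : ∀ j, (0:ℝ) ≤ (q j:ℝ) := fun j => by linarith [hqM j]
  have hpowexp : ∀ j, x j ^ (q j) = Real.exp (u j) := by
    intro j
    simp only [hu]
    conv_lhs => rw [← Real.exp_log (hxpos j)]
    rw [← Real.exp_nat_mul]
  -- tail estimates on u, v
  have hutail : ∀ j, k+1 ≤ j → |u j| ≤ (4/3) * v j := by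
    intro j hj
    have hd0 : (0:ℝ) ≤ r / a j := div_nonneg hrpos.le (hapos j).le
    have hd14 := hdsm j hj
    have hub : Real.log (x j) ≤ r / a j := by
      calc Real.log (x j) ≤ Real.log (1 + r / a j) := Real.log_le_log (hxpos j) (hxu j)
        _ ≤ (1 + r/a j) - 1 := Real.log_le_sub_one_of_pos (by linarith)
        _ = r / a j := by ring
    have hlb : -(4/3) * (r / a j) ≤ Real.log (x j) := by
      calc -(4/3) * (r/a j) ≤ Real.log (1 - r/a j) := aux_log_one_sub hd0 hd14
        _ ≤ Real.log (x j) := Real.log_le_log (by linarith) (hxl2 j)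
    rw [abs_le]
    constructor
    · simp only [hu, hv, mul_div_assoc]
      nlinarith [hqj0 j]
    · simp only [hu, hv, mul_div_assoc]
      nlinarith [hqj0 j]
  have hvdec : ∀ j, v (j+1) ≤ v j / 2 := by
    intro j
    have hexp3 : 3 * (q j:ℝ) ≤ Real.exp ((q j:ℝ)/2) := aux_three_mul_le_exp_half (hqM j)
    have hcstep : (q j:ℝ)/2 ≤ c (j+1) - c j := by
      cases j with
      | zero => rw [hcs 0, hc0]; linarith
      | succ n => rw [hcs n, hcs (n+1)]; linarith [hq2 n]
    have ha1 : a j * Real.exp ((q j:ℝ)/2) ≤ a (j+1) := by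
      rw [hexpc j, hexpc (j+1), ← Real.exp_add]
      exact Real.exp_le_exp.2 (by linarith)
    have hq3 : 3*(q j:ℝ)^2 ≤ (q j:ℝ) * Real.exp ((q j:ℝ)/2) := by
      calc 3*(q j:ℝ)^2 = (q j:ℝ) * (3 * (q j:ℝ)) := by ring
        _ ≤ (q j:ℝ) * Real.exp ((q j:ℝ)/2) := mul_le_mul_of_nonneg_left hexp3 (hqj0 j)
    have key : (q (j+1):ℝ) * r * (2 * a j) ≤ ((q j:ℝ) * r) * a (j+1) := by
      calc (q (j+1):ℝ) * r * (2 * a j) = (3*(q j:ℝ)^2) * (r * a j) := by rw [hqcast j]; ring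
        _ ≤ ((q j:ℝ) * Real.exp ((q j:ℝ)/2)) * (r * a j) :=
            mul_le_mul_of_nonneg_right hq3 (mul_nonneg hrpos.le (hapos j).le)
        _ = ((q j:ℝ) * r) * (a j * Real.exp ((q j:ℝ)/2)) := by ring
        _ ≤ ((q j:ℝ) * r) * a (j+1) :=
            mul_le_mul_of_nonneg_left ha1 (mul_nonneg (hqj0 j) hrpos.le)
    simp only [hv]
    rw [div_div, div_le_div_iff₀ (hapos (j+1)) (mul_pos (hapos j) two_pos)]
    linear_combination key
  have hvnonneg : ∀ j, 0 ≤ v j := by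
    intro j; simp only [hv]; exact div_nonneg (mul_nonneg (hqj0 j) hrpos.le) (hapos j).le
  have hvgeo : ∀ i, v (k+2+i) ≤ v (k+2) * (1/2)^i := by
    intro i; induction i with
    | zero => simp
    | succ n ih =>
      have h1 : k+2+(n+1) = (k+2+n)+1 := by omega
      rw [h1]
      calc v ((k+2+n)+1) ≤ v (k+2+n)/2 := hvdec _
        _ ≤ (v (k+2) * (1/2)^n)/2 := by linarith
        _ = v (k+2) * (1/2)^(n+1) := by ring
  have hvk2 : v (k+2) ≤ 1 := by
    have hq4 : (q (k+2):ℝ) ≤ 4 * Real.exp ((q (k+1):ℝ)/2) := by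
      rw [hqcast (k+1)]
      exact aux_sq_le_exp_half (hqM (k+1))
    have hcstep : (q (k+1):ℝ)/2 ≤ c (k+2) - c (k+1) := by
      have e1 : c (k+2) = (q (k+1):ℝ) := hcs (k+1)
      have e2 : c (k+1) = (q k:ℝ) := hcs k
      rw [e1, e2]; linarith [hq2 k, hqj0 k]
    have ha2 : a (k+1) * Real.exp ((q (k+1):ℝ)/2) ≤ a (k+2) := by
      rw [hexpc (k+1), hexpc (k+2), ← Real.exp_add]
      exact Real.exp_le_exp.2 (by linarith)
    simp only [hv]
    rw [div_le_one (hapos (k+2))]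
    calc (q (k+2):ℝ) * r ≤ (4 * Real.exp ((q (k+1):ℝ)/2)) * (a (k+1)/4) := by
          apply mul_le_mul hq4 hz2.le hrpos.le (by positivity)
      _ = a (k+1) * Real.exp ((q (k+1):ℝ)/2) := by ring
      _ ≤ a (k+2) := ha2
  -- summability
  have habs_bound : ∀ i : ℕ, |u (i + (k+2))| ≤ (4/3) * v (k+2) * (1/2:ℝ)^i := by
    intro i
    have heq : i + (k+2) = k+2+i := by omega
    calc |u (i + (k+2))| ≤ (4/3) * v (i + (k+2)) := hutail _ (by omega)
      _ ≤ (4/3) * (v (k+2) * (1/2)^i) := by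
          rw [heq]
          linarith [hvgeo i]
      _ = (4/3) * v (k+2) * (1/2:ℝ)^i := by ring
  have hgeo : Summable (fun i : ℕ => (4/3) * v (k+2) * (1/2:ℝ)^i) :=
    (summable_geometric_of_lt_one (by norm_num) (by norm_num)).mul_left _
  have habs_summ : Summable (fun i => |u (i + (k+2))|) :=
    Summable.of_nonneg_of_le (fun i => abs_nonneg _) habs_bound hgeo
  have htail_summ : Summable (fun i => u (i + (k+2))) := by
    apply Summable.of_norm
    simpa [Real.norm_eq_abs] using habs_summ
  have hsummable : Summable u := (summable_nat_add_iff (k+2)).1 htail_summ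
  set T := ∑' i, u (i + (k+2)) with hT
  have hTbound : |T| ≤ 3 := by
    have h1 : |T| ≤ ∑' i, |u (i + (k+2))| := by
      rw [hT]
      simpa [Real.norm_eq_abs] using
        norm_tsum_le_tsum_norm (f := fun i => u (i + (k+2)))
          (by simpa [Real.norm_eq_abs] using habs_summ)
    have h2 : ∑' i, |u (i + (k+2))| ≤ ∑' i : ℕ, (4/3) * v (k+2) * (1/2:ℝ)^i :=
      Summable.tsum_le_tsum habs_bound habs_summ hgeo
    have h3 : ∑' i : ℕ, (4/3) * v (k+2) * (1/2:ℝ)^i = (4/3) * v (k+2) * 2 := by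
      rw [tsum_mul_left, tsum_geometric_of_lt_one (by norm_num) (by norm_num)]
      norm_num
    rw [h3] at h2
    nlinarith [hvk2, hvnonneg (k+2)]
  -- |f z| = exp (2t + S)
  set S := ∑' j, u j with hS
  have hfabs : ‖f z‖ = Real.exp (2*t + S) := by
    have hP := (hmult z).hasProd.map aux_absHom continuous_norm
    have hfun : (⇑aux_absHom ∘ fun j => (1 - z/(a j:ℂ))^ q j) = fun j => Real.exp (u j) := by
      funext j
      simp only [Function.comp_apply, aux_absHom, MonoidHom.coe_mk, OneHom.coe_mk, norm_pow]
      exact hpowexp j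
    rw [hfun] at hP
    have hSprod : HasProd (fun j => Real.exp (u j)) (Real.exp S) :=
      aux_hasProd_exp hsummable.hasSum
    have hPe : aux_absHom (∏' j, (1 - z/(a j:ℂ))^ q j) = Real.exp S := hP.unique hSprod
    have hPe' : ‖∏' j, (1 - z/(a j:ℂ))^ q j‖ = Real.exp S := hPe
    rw [hf z, norm_mul, norm_pow, hPe', ← hr, hrt, ← Real.exp_nat_mul, ← Real.exp_add]
    push_cast
    ring_nf
  -- split the sum
  have hsplit : S = (∑ j ∈ Finset.range (k+1), u j) + u (k+1) + T := by
    rw [hS, ← Summable.sum_add_tsum_nat_add (k+2) hsummable, Finset.sum_range_succ]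
  -- finite part bounds
  have hfin_l : u k ≤ ∑ j ∈ Finset.range (k+1), u j := by
    rw [Finset.sum_range_succ]
    have h0 : 0 ≤ ∑ j ∈ Finset.range k, u j := by
      apply Finset.sum_nonneg
      intro j hj
      have hjk : j ≤ k := le_of_lt (Finset.mem_range.1 hj)
      have hlog : 0 ≤ Real.log (x j) := Real.log_nonneg (by linarith [hx3 j hjk])
      simp only [hu]
      exact mul_nonneg (hqj0 j) hlog
    linarith
  have hlog34 : -(0.3:ℝ) ≤ Real.log (3/4) := by
    have h : Real.log (3/4) = - Real.log (4/3) := by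
      rw [show (3:ℝ)/4 = ((4:ℝ)/3)⁻¹ by norm_num, Real.log_inv]
    rw [h]; linarith [aux_log43]
  have hlogxk_l : t - c k - 0.3 ≤ Real.log (x k) := by
    have h4 : (4:ℝ) ≤ r / a k := hdbig k le_rfl
    have h1 : (3/4) * (r / a k) ≤ x k := by
      have := hxl1 k
      nlinarith
    have h2 : Real.log ((3/4) * (r / a k)) ≤ Real.log (x k) :=
      Real.log_le_log (by positivity) h1
    have h3 : Real.log ((3/4) * (r/a k)) = Real.log (3/4) + (t - c k) := by
      rw [Real.log_mul (by norm_num) (by positivity),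
        Real.log_div (ne_of_gt hrpos) (ne_of_gt (hapos k))]
    rw [h3] at h2
    linarith
  have huk_l : (q k:ℝ) * (t - c k - 0.3) ≤ u k := by
    simp only [hu]
    exact mul_le_mul_of_nonneg_left hlogxk_l (hqj0 k)
  have hlogx_u : ∀ j, j ≤ k → Real.log (x j) ≤ t - c j + 1/4 := by
    intro j hj
    have h4 : (4:ℝ) ≤ r / a j := hdbig j hj
    have haj : a j / r ≤ 1/4 := by
      rw [div_le_iff₀ hrpos]
      rw [le_div_iff₀ (hapos j)] at h4
      linarith
    have h1 : Real.log (x j) ≤ Real.log (1 + r / a j) :=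
      Real.log_le_log (hxpos j) (hxu j)
    have hrne : r ≠ 0 := ne_of_gt hrpos
    have hane : a j ≠ 0 := ne_of_gt (hapos j)
    have hajr : 0 < a j / r := div_pos (hapos j) hrpos
    have h2 : (1:ℝ) + r / a j = (r / a j) * (1 + a j / r) := by
      field_simp
      ring
    have h3 : Real.log ((r / a j) * (1 + a j / r)) =
        (t - c j) + Real.log (1 + a j / r) := by
      rw [Real.log_mul (ne_of_gt (div_pos hrpos (hapos j))) (by linarith),
        Real.log_div (ne_of_gt hrpos) (ne_of_gt (hapos j))]
    have h5 : Real.log (1 + a j / r) ≤ a j / r :=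
      le_trans (Real.log_le_sub_one_of_pos (by linarith)) (by linarith)
    rw [h2, h3] at h1
    have h6 : a j / r ≤ 1/4 := haj
    linarith
  have huj_u : ∀ j, j ≤ k → u j ≤ (q j:ℝ) * (t + 1/4) := by
    intro j hj
    simp only [hu]
    have := hlogx_u j hj
    have := hcpos j
    apply mul_le_mul_of_nonneg_left _ (hqj0 j)
    linarith
  have hsum2 : ∀ m, ∑ j ∈ Finset.range (m+1), (q j:ℝ) ≤ 2*(q m:ℝ) := by
    intro m
    induction m with
    | zero => simp [Finset.sum_range_one]; linarith [hqj0 0]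
    | succ n ih =>
      rw [Finset.sum_range_succ]
      linarith [hq2 n]
  have hsumq : ∑ j ∈ Finset.range k, (q j:ℝ) ≤ (q k:ℝ)/1000 := by
    cases k with
    | zero => simp; positivity
    | succ m =>
      have h1 := hsum2 m
      have h2 : 2000 * (q m:ℝ) ≤ (q (m+1):ℝ) := by
        rw [hqcast m]; nlinarith [hqM m]
      linarith
  have ht14 : (0:ℝ) ≤ t + 1/4 := by linarith
  have hfin_u : ∑ j ∈ Finset.range (k+1), u j ≤ u k + (q k:ℝ)/1000 * (t + 1/4) := by
    rw [Finset.sum_range_succ]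
    have h1 : ∑ j ∈ Finset.range k, u j ≤ ∑ j ∈ Finset.range k, (q j:ℝ) * (t + 1/4) :=
      Finset.sum_le_sum (fun j hj => huj_u j (le_of_lt (Finset.mem_range.1 hj)))
    have h2 : ∑ j ∈ Finset.range k, (q j:ℝ) * (t + 1/4)
        = (∑ j ∈ Finset.range k, (q j:ℝ)) * (t + 1/4) := by
      rw [Finset.sum_mul]
    have h3 : (∑ j ∈ Finset.range k, (q j:ℝ)) * (t + 1/4) ≤ (q k:ℝ)/1000 * (t + 1/4) :=
      mul_le_mul_of_nonneg_right hsumq ht14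
    linarith
  -- bounds on u (k+1)
  have hd1 : r / a (k+1) ≤ 1/4 := hdsm (k+1) le_rfl
  have huk1_u : u (k+1) ≤ (3/8) * (q k:ℝ)^2 := by
    have hub : Real.log (x (k+1)) ≤ r / a (k+1) := by
      calc Real.log (x (k+1)) ≤ Real.log (1 + r / a (k+1)) :=
            Real.log_le_log (hxpos _) (hxu _)
        _ ≤ (1 + r/a (k+1)) - 1 :=
            Real.log_le_sub_one_of_pos (by linarith [div_pos hrpos (hapos (k+1))])
        _ = r / a (k+1) := by ring
    have h1 : u (k+1) ≤ (q (k+1):ℝ) * (1/4) := by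
      simp only [hu]
      apply mul_le_mul_of_nonneg_left _ (hqj0 (k+1))
      linarith
    rw [hqcast k] at h1
    linarith
  -- main lower bound
  have hlow : Real.log 4 + (q k:ℝ) < 2*t + S := by
    rcases le_or_gt (100 * (q k:ℝ) * r) (a (k+1)) with hcase | hcase
    · -- far from the outer edge
      have hv1 : v (k+1) ≤ (q k:ℝ)/50 := by
        simp only [hv]
        rw [div_le_div_iff₀ (hapos (k+1)) (by norm_num)]
        calc (q (k+1):ℝ) * r * 50 = (3/2) * (q k:ℝ)^2 * r * 50 := by rw [hqcast k]; ring
          _ = (3/4) * ((q k:ℝ) * (100 * (q k:ℝ) * r)) := by ring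
          _ ≤ (3/4) * ((q k:ℝ) * a (k+1)) := by
              apply mul_le_mul_of_nonneg_left _ (by norm_num)
              exact mul_le_mul_of_nonneg_left hcase (hqj0 k)
          _ ≤ (q k:ℝ) * a (k+1) := by nlinarith [hqj0 k, (hapos (k+1)).le]
      have huk1_l : -(2/75) * (q k:ℝ) ≤ u (k+1) := by
        have h1 := hutail (k+1) le_rfl
        rw [abs_le] at h1
        have h2 : (4/3) * v (k+1) ≤ (4/3) * ((q k:ℝ)/50) :=
          mul_le_mul_of_nonneg_left hv1 (by norm_num)
        have := h1.1
        linarith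
      have hmul : (1.0862:ℝ) * (q k:ℝ) ≤ (q k:ℝ) * (t - c k - 0.3) := by
        have h1 : (1.0862:ℝ) ≤ t - c k - 0.3 := by linarith
        nlinarith [hqj0 k]
      have hTlow : -3 ≤ T := by
        have := abs_le.1 hTbound
        linarith [this.1]
      rw [hsplit]
      have h9 := hqM k
      nlinarith
    · -- close to the outer edge
      have htlow : (q k:ℝ) - 0.005 * (q k:ℝ) < t := by
        have h1 : Real.log (a (k+1)) < Real.log (100 * (q k:ℝ) * r) :=
          Real.log_lt_log (hapos (k+1)) hcase
        have h2 : Real.log (a (k+1)) = (q k:ℝ) := hcs k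
        have h3 : Real.log (100 * (q k:ℝ) * r) = Real.log (100 * (q k:ℝ)) + t := by
          have hpos : (0:ℝ) < 100 * (q k:ℝ) := by nlinarith [hqM k]
          rw [Real.log_mul (ne_of_gt hpos) (ne_of_gt hrpos)]
        have h4 : Real.log (100 * (q k:ℝ)) ≤ 0.005 * (q k:ℝ) := aux_log100 (hqM k)
        rw [h2, h3] at h1
        linarith
      have hwlow : 0.495 * (q k:ℝ) ≤ t - c k := by linarith [hchalf]
      have huk1_l : -(0.45) * (q k:ℝ)^2 ≤ u (k+1) := by
        have h1 : Real.log (3/4) ≤ Real.log (x (k+1)) :=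
          Real.log_le_log (by norm_num) (hxtl (k+1) le_rfl)
        have h2 : -(0.3:ℝ) ≤ Real.log (x (k+1)) := by linarith
        have h3 : (q (k+1):ℝ) * (-(0.3:ℝ)) ≤ u (k+1) := by
          simp only [hu]
          exact mul_le_mul_of_nonneg_left h2 (hqj0 (k+1))
        rw [hqcast k] at h3
        linarith
      have hmul : (q k:ℝ) * (0.495 * (q k:ℝ) - 0.3) ≤ (q k:ℝ) * (t - c k - 0.3) := by
        apply mul_le_mul_of_nonneg_left _ (hqj0 k)
        linarith
      have hTlow : -3 ≤ T := by
        have := abs_le.1 hTbound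
        linarith [this.1]
      rw [hsplit]
      have h9 := hqM k
      nlinarith
  -- main upper bound
  have hup : 2*t + S < (q (k+1):ℝ) - Real.log 4 := by
    have huk_u : u k ≤ (q k:ℝ) * ((q k:ℝ) + 1/4) := by
      simp only [hu]
      apply mul_le_mul_of_nonneg_left _ (hqj0 k)
      have := hlogx_u k le_rfl
      have := hcpos k
      linarith
    have hfin2 : ∑ j ∈ Finset.range (k+1), u j
        ≤ (q k:ℝ) * ((q k:ℝ) + 1/4) + (q k:ℝ)/1000 * ((q k:ℝ) + 1/4) := by
      have h1 : (q k:ℝ)/1000 * (t + 1/4) ≤ (q k:ℝ)/1000 * ((q k:ℝ) + 1/4) := by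
        apply mul_le_mul_of_nonneg_left _ (by linarith [hqj0 k])
        linarith
      linarith [hfin_u]
    have hThigh : T ≤ 3 := by
      have := abs_le.1 hTbound
      linarith [this.2]
    rw [hsplit, hqcast k]
    have h9 := hqM k
    nlinarith
  -- conclusion
  have hak1 : a (k+1) = Real.exp ((q k:ℝ)) := by rw [hexpc (k+1), hcs k]
  have hak2 : a (k+2) = Real.exp ((q (k+1):ℝ)) := by rw [hexpc (k+2), hcs (k+1)]
  have h4e : (4:ℝ) = Real.exp (Real.log 4) := by rw [Real.exp_log]; norm_num
  constructor
  · rw [hfabs, hak1]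
    calc 4 * Real.exp ((q k:ℝ)) = Real.exp (Real.log 4 + (q k:ℝ)) := by
          rw [Real.exp_add, ← h4e]
      _ < Real.exp (2*t + S) := Real.exp_lt_exp.2 hlow
  · rw [hfabs, hak2]
    calc Real.exp (2*t + S) < Real.exp ((q (k+1):ℝ) - Real.log 4) := Real.exp_lt_exp.2 hup
      _ = Real.exp ((q (k+1):ℝ)) / 4 := by
          rw [Real.exp_sub, ← h4e]
end

section
/- There exists Q such that for every even integer q_0 ≥ Q and for all k ≥ 0, f maps the annulus ann(0; 4 a_k, √(a_{k+1})) into the annulus ann(0; 4 a_{k+1}, √(a_{k+2})). -/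
open Filter

/-- key elementary bound: `exp (-2ε) ≤ 1 - ε` for `0 ≤ ε ≤ 1/2`. -/
lemma exp_neg_two_mul_le {ε : ℝ} (h0 : 0 ≤ ε) (h2 : ε ≤ 1/2) :
    Real.exp (-(2*ε)) ≤ 1 - ε := by
  have hk1 : Real.exp (-(2*ε)) * Real.exp (2*ε) = 1 := by
    rw [← Real.exp_add]; simp
  have hk2 : 1 + 2*ε ≤ Real.exp (2*ε) := by
    have := Real.add_one_le_exp (2*ε); linarith
  have hmul := mul_le_mul_of_nonneg_left hk2 (show (0:ℝ) ≤ 1 - ε by linarith)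
  nlinarith [Real.exp_pos (-(2*ε)), Real.exp_pos (2*ε)]

set_option maxHeartbeats 2000000 in
/-- for `q_0` even and large enough, `f` maps
`ann(0; 4 a_k, √(a_{k+1}))` into `ann(0; 4 a_{k+1}, √(a_{k+2}))` for all `k ≥ 0`. -/
theorem stmt_16 :
    ∃ Q : ℕ, ∀ q0 : ℕ, Even q0 → 0 < q0 → Q ≤ q0 →
      ∀ (q : ℕ → ℕ) (a : ℕ → ℝ) (f : ℂ → ℂ),
        q 0 = q0 →
        (∀ k, 2 * q (k + 1) = 3 * q k ^ 2) →
        a 0 = Real.exp ((q0 : ℝ) / 2) →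
        (∀ k, a (k + 1) = Real.exp (q k)) →
        (∀ z : ℂ, Multipliable (fun k : ℕ => (1 - z / (a k : ℂ)) ^ q k)) →
        (∀ z : ℂ, f z = z ^ 2 * ∏' k : ℕ, (1 - z / (a k : ℂ)) ^ q k) →
        ∀ k : ℕ, ∀ z : ℂ,
          4 * a k < ‖z‖ → ‖z‖ < Real.sqrt (a (k + 1)) →
            4 * a (k + 1) < ‖f z‖ ∧
              ‖f z‖ < Real.sqrt (a (k + 2)) := by
  refine ⟨8000, ?_⟩
  intro q0 _hev _hpos hQ q a f hq0 hqrec ha0 harec hmult hf k z hz1 hz2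
  -- basic facts on q
  have hqbig : ∀ n, 8000 ≤ q n := by
    intro n
    induction n with
    | zero => rw [hq0]; exact hQ
    | succ m ih => have h := hqrec m; nlinarith
  have hq100 : ∀ n, 100 * q n ≤ q (n + 1) := by
    intro n; have h := hqrec n; have := hqbig n; nlinarith
  have hqmono : Monotone q := monotone_nat_of_le_succ fun n => by
    have := hq100 n; omega
  have hq2pow : ∀ i, 2 ^ i * q k ≤ q (k + i) := by
    intro i
    induction i with
    | zero => simp
    | succ j ih =>
      calc 2 ^ (j+1) * q k = 2 * (2 ^ j * q k) := by ring
        _ ≤ 2 * q (k + j) := Nat.mul_le_mul le_rfl ih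
        _ ≤ 100 * q (k + j) := Nat.mul_le_mul (by norm_num) le_rfl
        _ ≤ q (k + j + 1) := hq100 (k + j)
  have hsum2 : ∀ n, (∑ j ∈ Finset.range (n + 1), q j) ≤ 2 * q n := by
    intro n
    induction n with
    | zero => rw [Finset.sum_range_one]; omega
    | succ m ih =>
      rw [Finset.sum_range_succ]
      have h1 := hq100 m
      omega
  have hS51 : 50 * (∑ j ∈ Finset.range (k + 1), q j) ≤ 51 * q k := by
    cases k with
    | zero => rw [Finset.sum_range_one]; omega
    | succ m =>
      rw [Finset.sum_range_succ]
      have h1 := hsum2 m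
      have h2 := hq100 m
      omega
  -- basic facts on a
  have ha1 : ∀ n, (1:ℝ) ≤ a n := by
    intro n
    cases n with
    | zero => rw [ha0]; exact Real.one_le_exp (by positivity)
    | succ m => rw [harec m]; exact Real.one_le_exp (by positivity)
  have hapos : ∀ n, (0:ℝ) < a n := fun n => lt_of_lt_of_le one_pos (ha1 n)
  have hamono : Monotone a := monotone_nat_of_le_succ fun n => by
    cases n with
    | zero =>
      rw [ha0, harec 0, hq0]
      apply Real.exp_le_exp.2
      have h : (0:ℝ) ≤ (q0:ℝ) := by positivity
      linarith
    | succ m =>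
      rw [harec m, harec (m+1)]
      exact Real.exp_le_exp.2 (by exact_mod_cast hqmono (Nat.le_succ m))
  -- facts about |z|
  have habsz4 : (4:ℝ) ≤ ‖z‖ := by nlinarith [ha1 k]
  have hsqrt1 : Real.sqrt (a (k+1)) = Real.exp ((q k : ℝ)/2) := by
    rw [harec k, ← Real.exp_half]
  have hzexp : ‖z‖ ≤ Real.exp ((q k : ℝ) / 2) := by
    rw [hsqrt1] at hz2; exact hz2.le
  have habs_div : ∀ j : ℕ, ‖z / (a j : ℂ)‖ = ‖z‖ / a j := by
    intro j
    rw [norm_div, Complex.norm_real, Real.norm_eq_abs, abs_of_pos (hapos j)]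
  -- lower bound for head factors
  have hlb3 : ∀ j, j ≤ k → (3:ℝ) ≤ ‖1 - z / (a j : ℂ)‖ := by
    intro j hj
    have h2 : (4:ℝ) ≤ ‖z‖ / a j := by
      rw [le_div_iff₀ (hapos j)]
      nlinarith [hamono hj, hapos j]
    have h3 := norm_sub_norm_le (z / (a j:ℂ)) 1
    rw [norm_sub_rev] at h3
    rw [habs_div] at h3
    simp only [norm_one] at h3
    linarith
  -- upper bound for all factors
  have hub : ∀ j : ℕ, ‖1 - z / (a j:ℂ)‖ ≤ 2 * ‖z‖ := by
    intro j
    have h1 : ‖1 - z/(a j:ℂ)‖ ≤ 1 + ‖z‖ / a j := by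
      calc ‖1 - z/(a j:ℂ)‖ ≤ ‖(1:ℂ)‖ + ‖z/(a j:ℂ)‖ := by
            simpa [sub_eq_add_neg] using norm_add_le 1 (-(z/(a j:ℂ)))
        _ = 1 + ‖z‖ / a j := by rw [norm_one, habs_div]
    have h2 : ‖z‖ / a j ≤ ‖z‖ := by
      rw [div_le_iff₀ (hapos j)]
      nlinarith [ha1 j, norm_nonneg z]
    linarith
  -- the absolute value of the product
  set A : ℕ → ℝ := fun j => ‖(1 - z / (a j : ℂ)) ^ q j‖ with hA
  have hA_eq : ∀ j, A j = (‖1 - z/(a j:ℂ)‖)^(q j) := fun j => norm_pow _ _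
  have hA_nonneg : ∀ j, 0 ≤ A j := fun j => norm_nonneg _
  have hmg : Multipliable fun j : ℕ => (1 - z / (a j:ℂ)) ^ q j := hmult z
  let φ : ℂ →* ℝ :=
    { toFun := fun w => ‖w‖, map_one' := norm_one, map_mul' := norm_mul }
  have hφc : Continuous φ := continuous_norm
  have hga : Multipliable A := by
    have := hmg.map φ hφc
    simpa [Function.comp_def, φ, hA] using this
  have habsP : ‖∏' j : ℕ, (1 - z/(a j:ℂ))^ q j‖ = ∏' j : ℕ, A j := by
    have := (hmg.hasProd.map φ hφc).tprod_eq
    simpa [Function.comp_def, φ, hA] using this.symm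
  set H : ℝ := ∏ j ∈ Finset.range (k+1), A j with hHdef
  set T : ℝ := ∏' i : ℕ, A (i + (k+1)) with hTdef
  -- tail estimates
  set c : ℕ → ℝ := fun i => 2 * (q (i + k + 1) : ℝ) * Real.exp ((q k:ℝ)/2 - (q (i+k):ℝ)) with hc
  have hqcast : ∀ n, (8000:ℝ) ≤ (q n : ℝ) := fun n => by exact_mod_cast hqbig n
  have heps_half : ∀ i, Real.exp ((q k:ℝ)/2 - (q (i+k):ℝ)) ≤ 1/2 := by
    intro i
    have h1 : (q k : ℝ) ≤ (q (i+k) : ℝ) := by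
      exact_mod_cast hqmono (Nat.le_add_left k i)
    have h2 : Real.exp ((q k:ℝ)/2 - (q (i+k):ℝ)) ≤ Real.exp (-1) := by
      apply Real.exp_le_exp.2
      have := hqcast k
      linarith
    have h3 : Real.exp (-1) * Real.exp 1 = 1 := by rw [← Real.exp_add]; norm_num
    nlinarith [Real.exp_one_gt_d9, Real.exp_pos (-1:ℝ)]
  have heps_pos : ∀ i, (0:ℝ) < Real.exp ((q k:ℝ)/2 - (q (i+k):ℝ)) := fun i => Real.exp_pos _
  have habs_tail : ∀ i, ‖z / (a (i + (k+1)) : ℂ)‖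
      ≤ Real.exp ((q k:ℝ)/2 - (q (i+k):ℝ)) := by
    intro i
    rw [habs_div]
    have ha_eq : a (i + (k+1)) = Real.exp ((q (i+k) : ℝ)) := harec (i+k)
    rw [ha_eq, div_le_iff₀ (Real.exp_pos _), ← Real.exp_add]
    calc ‖z‖ ≤ Real.exp ((q k:ℝ)/2) := hzexp
      _ = Real.exp ((q k:ℝ)/2 - (q (i+k):ℝ) + (q (i+k):ℝ)) := by ring_nf
  -- bounds on |1 - z/a_{i+k+1}|
  have hb_bounds : ∀ i, 1 - Real.exp ((q k:ℝ)/2 - (q (i+k):ℝ))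
        ≤ ‖1 - z / (a (i + (k+1)) : ℂ)‖
      ∧ ‖1 - z / (a (i + (k+1)) : ℂ)‖
        ≤ 1 + Real.exp ((q k:ℝ)/2 - (q (i+k):ℝ)) := by
    intro i
    constructor
    · have h3 := norm_sub_norm_le (1:ℂ) (z / (a (i + (k+1)):ℂ))
      simp only [norm_one] at h3
      linarith [habs_tail i, h3]
    · have h1 : ‖1 - z/(a (i + (k+1)):ℂ)‖
          ≤ ‖(1:ℂ)‖ + ‖z/(a (i + (k+1)):ℂ)‖ := by
        simpa [sub_eq_add_neg] using norm_add_le 1 (-(z/(a (i + (k+1)):ℂ)))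
      simp only [norm_one] at h1
      linarith [habs_tail i]
  have hc_nonneg : ∀ i, 0 ≤ c i := by
    intro i; simp only [hc]; positivity
  have hA_lb : ∀ i, Real.exp (-(c i)) ≤ A (i + (k+1)) := by
    intro i
    set ε := Real.exp ((q k:ℝ)/2 - (q (i+k):ℝ)) with hε
    have hkey : Real.exp (-(2*ε)) ≤ 1 - ε := exp_neg_two_mul_le (heps_pos i).le (heps_half i)
    have h1 : Real.exp (-(2*ε)) ≤ ‖1 - z / (a (i + (k+1)) : ℂ)‖ :=
      le_trans hkey (hb_bounds i).1
    have h2 : (Real.exp (-(2*ε)))^(q (i+k+1)) ≤ A (i + (k+1)) := by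
      rw [hA_eq]
      exact pow_le_pow_left₀ (Real.exp_nonneg _) h1 _
    calc Real.exp (-(c i)) = (Real.exp (-(2*ε)))^(q (i+k+1)) := by
          rw [← Real.exp_nat_mul]
          congr 1
          simp only [hc]
          ring
      _ ≤ A (i + (k+1)) := h2
  have hA_ub : ∀ i, A (i + (k+1)) ≤ Real.exp (c i) := by
    intro i
    set ε := Real.exp ((q k:ℝ)/2 - (q (i+k):ℝ)) with hε
    have h1 : ‖1 - z / (a (i + (k+1)) : ℂ)‖ ≤ Real.exp (2*ε) := by
      have := Real.add_one_le_exp (2*ε)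
      have h2 := (hb_bounds i).2
      have := heps_pos i
      linarith
    calc A (i + (k+1)) ≤ (Real.exp (2*ε))^(q (i+k+1)) := by
          rw [hA_eq]
          exact pow_le_pow_left₀ (norm_nonneg _) h1 _
      _ = Real.exp (c i) := by
          rw [← Real.exp_nat_mul]
          congr 1
          simp only [hc]
          ring
  -- geometric bound on c
  have hc_geo : ∀ i, c i ≤ (1/2:ℝ)^(i+1) := by
    intro i
    set m : ℝ := (q (i+k) : ℝ) with hm
    have hm8 : (8000:ℝ) ≤ m := hqcast (i+k)
    have hq' : (q (i+k+1) : ℝ) ≤ 2 * m^2 := by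
      have h := hqrec (i+k)
      have hcast : 2 * (q (i+k+1) : ℝ) = 3 * ((q (i+k) : ℕ) : ℝ)^2 := by exact_mod_cast h
      rw [← hm] at hcast
      nlinarith [sq_nonneg m]
    have h4m : 4*m^2 ≤ Real.exp (m/4) := by
      have e1 : m/12 ≤ Real.exp (m/12) := by
        have := Real.add_one_le_exp (m/12); linarith
      have e2 : Real.exp (m/4) = Real.exp (m/12)^3 := by
        rw [← Real.exp_nat_mul]
        congr 1
        push_cast
        ring
      have e3 : (m/12)^3 ≤ Real.exp (m/12)^3 := pow_le_pow_left₀ (by positivity) e1 3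
      rw [e2]
      nlinarith [sq_nonneg m, e3]
    have step1 : c i ≤ Real.exp (m/4) * Real.exp ((q k:ℝ)/2 - m) := by
      have h1 : c i ≤ 4*m^2 * Real.exp ((q k:ℝ)/2 - m) := by
        simp only [hc]
        have := heps_pos i
        nlinarith [Real.exp_pos ((q k:ℝ)/2 - m)]
      calc c i ≤ 4*m^2 * Real.exp ((q k:ℝ)/2 - m) := h1
        _ ≤ Real.exp (m/4) * Real.exp ((q k:ℝ)/2 - m) := by
            have := Real.exp_pos ((q k:ℝ)/2 - m)
            nlinarith
    have h2i : (2:ℝ)^i * (q k:ℝ) ≤ m := by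
      have := hq2pow i
      have : ((2^i * q k : ℕ) : ℝ) ≤ ((q (k+i) : ℕ) : ℝ) := by exact_mod_cast this
      push_cast at this
      rw [hm, Nat.add_comm i k]
      linarith
    have h2ge1 : (1:ℝ) ≤ (2:ℝ)^i := one_le_pow₀ (by norm_num)
    have h2gei : (i:ℝ) + 1 ≤ (2:ℝ)^i := by
      have := Nat.lt_two_pow_self (n := i)
      have h := Nat.succ_le_of_lt this
      calc (i:ℝ) + 1 = ((i+1 : ℕ) : ℝ) := by push_cast; ring
        _ ≤ ((2^i : ℕ) : ℝ) := by exact_mod_cast h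
        _ = (2:ℝ)^i := by push_cast; ring
    have step2 : Real.exp (m/4) * Real.exp ((q k:ℝ)/2 - m)
        ≤ Real.exp (-(2000 * ((i:ℝ)+1))) := by
      rw [← Real.exp_add]
      apply Real.exp_le_exp.2
      have hqk := hqcast k
      nlinarith [mul_le_mul_of_nonneg_left h2gei (show (0:ℝ) ≤ 2000 by norm_num),
        mul_le_mul_of_nonneg_right h2ge1 (show (0:ℝ) ≤ (q k:ℝ)/4 by linarith)]
    have step3 : Real.exp (-(2000 * ((i:ℝ)+1))) ≤ (1/2:ℝ)^(i+1) := by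
      have he : Real.exp (-(2000:ℝ)) ≤ 1/2 := by
        have h1 : Real.exp (-(2000:ℝ)) ≤ Real.exp (-1) := Real.exp_le_exp.2 (by norm_num)
        have h3 : Real.exp (-1) * Real.exp 1 = 1 := by rw [← Real.exp_add]; norm_num
        nlinarith [Real.exp_one_gt_d9, Real.exp_pos (-1:ℝ)]
      calc Real.exp (-(2000 * ((i:ℝ)+1))) = (Real.exp (-(2000:ℝ)))^(i+1) := by
            rw [← Real.exp_nat_mul]
            congr 1
            push_cast
            ring
        _ ≤ (1/2:ℝ)^(i+1) := pow_le_pow_left₀ (Real.exp_nonneg _) he _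
    linarith [step1, step2, step3]
  -- partial sums of c are at most 1
  have hgeo_summable : Summable (fun i : ℕ => (1/2:ℝ)^(i+1)) := by
    have h := (summable_geometric_of_lt_one (by norm_num : (0:ℝ) ≤ 1/2) (by norm_num)).mul_left (1/2:ℝ)
    refine h.congr fun i => ?_
    rw [pow_succ']
  have hgeo_tsum : (∑' i : ℕ, (1/2:ℝ)^(i+1)) = 1 := by
    have h : (fun i : ℕ => (1/2:ℝ)^(i+1)) = fun i : ℕ => (1/2:ℝ) * (1/2:ℝ)^i := by
      funext i; rw [pow_succ']
    rw [h, tsum_mul_left, tsum_geometric_of_lt_one (by norm_num) (by norm_num)]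
    norm_num
  -- the tail product via logs
  have hApos_tail : ∀ i : ℕ, 0 < A (i + (k+1)) := fun i =>
    lt_of_lt_of_le (Real.exp_pos _) (hA_lb i)
  set l : ℕ → ℝ := fun i => Real.log (A (i + (k+1))) with hl
  have hl_abs : ∀ i, |l i| ≤ (1/2:ℝ)^(i+1) := by
    intro i
    rw [abs_le]
    constructor
    · calc -((1/2:ℝ)^(i+1)) ≤ -(c i) := by linarith [hc_geo i]
        _ = Real.log (Real.exp (-(c i))) := (Real.log_exp _).symm
        _ ≤ l i := Real.log_le_log (Real.exp_pos _) (hA_lb i)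
    · calc l i ≤ Real.log (Real.exp (c i)) := Real.log_le_log (hApos_tail i) (hA_ub i)
        _ = c i := Real.log_exp _
        _ ≤ (1/2:ℝ)^(i+1) := hc_geo i
  have hlsum : Summable l := by
    apply Summable.of_norm_bounded hgeo_summable
    intro i
    rw [Real.norm_eq_abs]
    exact hl_abs i
  have hLle : (∑' i : ℕ, l i) ≤ 1 := by
    calc (∑' i : ℕ, l i) ≤ ∑' i : ℕ, (1/2:ℝ)^(i+1) :=
          Summable.tsum_le_tsum (fun i => le_trans (le_abs_self _) (hl_abs i)) hlsum hgeo_summable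
      _ = 1 := hgeo_tsum
  have hLge : (-1:ℝ) ≤ ∑' i : ℕ, l i := by
    have h : (∑' i : ℕ, -(l i)) ≤ ∑' i : ℕ, (1/2:ℝ)^(i+1) :=
      Summable.tsum_le_tsum (fun i => le_trans (neg_le_abs _) (hl_abs i)) hlsum.neg hgeo_summable
    rw [tsum_neg] at h
    rw [hgeo_tsum] at h
    linarith
  have hProdTail : HasProd (fun i : ℕ => A (i + (k+1))) (Real.exp (∑' i : ℕ, l i)) := by
    have heq : (Real.exp ∘ l) = fun i : ℕ => A (i + (k+1)) :=
      funext fun i => Real.exp_log (hApos_tail i)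
    have h := hlsum.hasSum.rexp
    rwa [heq] at h
  have hmtail : Multipliable fun i : ℕ => A (i + (k+1)) := hProdTail.multipliable
  have hsplit : (∏ j ∈ Finset.range (k+1), A j) * (∏' i : ℕ, A (i + (k+1))) = ∏' j : ℕ, A j :=
    Multipliable.prod_mul_tprod_nat_mul' hmtail
  have hTeq : T = Real.exp (∑' i : ℕ, l i) := hProdTail.tprod_eq
  have hTlb : Real.exp (-1) ≤ T := by rw [hTeq]; exact Real.exp_le_exp.2 hLge
  have hTub : T ≤ Real.exp 1 := by rw [hTeq]; exact Real.exp_le_exp.2 hLle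
  -- bounds on the head product H
  have hH3 : (3:ℝ)^(q k) ≤ H := by
    have h1 : ∀ j ∈ Finset.range (k+1), (1:ℝ) ≤ A j := by
      intro j hj
      rw [hA_eq]
      have := hlb3 j (Nat.lt_succ_iff.1 (Finset.mem_range.1 hj))
      exact one_le_pow₀ (by linarith)
    have h3 : (3:ℝ)^(q k) ≤ A k := by
      rw [hA_eq]
      exact pow_le_pow_left₀ (by norm_num) (hlb3 k le_rfl) _
    have h2 : (∏ j ∈ Finset.range (k+1), if j = k then (3:ℝ)^(q k) else 1) ≤ H := by
      apply Finset.prod_le_prod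
      · intro j _
        split <;> positivity
      · intro j hj
        by_cases hjk : j = k
        · subst hjk; simpa using h3
        · simpa [hjk] using h1 j hj
    calc (3:ℝ)^(q k)
        = ∏ j ∈ Finset.range (k+1), if j = k then (3:ℝ)^(q k) else 1 := by
          rw [Finset.prod_ite_eq' (Finset.range (k+1)) k (fun _ => (3:ℝ)^(q k))]
          simp [Finset.self_mem_range_succ]
      _ ≤ H := h2
  have hHpos : (0:ℝ) < H := lt_of_lt_of_le (by positivity) hH3
  set S : ℕ := ∑ j ∈ Finset.range (k + 1), q j with hSdef
  have hHub : H ≤ Real.exp ((S:ℝ) * ((q k:ℝ)/2 + 1)) := by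
    have key : ∀ j ∈ Finset.range (k+1), A j ≤ (Real.exp ((q k:ℝ)/2 + 1))^(q j) := by
      intro j _
      rw [hA_eq]
      apply pow_le_pow_left₀ (norm_nonneg _)
      calc ‖1 - z/(a j:ℂ)‖ ≤ 2*‖z‖ := hub j
        _ ≤ 2*Real.exp ((q k:ℝ)/2) := by linarith [hzexp]
        _ ≤ Real.exp 1 * Real.exp ((q k:ℝ)/2) := by
            nlinarith [Real.exp_one_gt_d9, Real.exp_pos ((q k:ℝ)/2)]
        _ = Real.exp ((q k:ℝ)/2 + 1) := by rw [← Real.exp_add]; ring_nf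
    calc H ≤ ∏ j ∈ Finset.range (k+1), (Real.exp ((q k:ℝ)/2 + 1))^(q j) :=
          Finset.prod_le_prod (fun j _ => hA_nonneg j) key
      _ = (Real.exp ((q k:ℝ)/2 + 1))^S := Finset.prod_pow_eq_pow_sum _ _ _
      _ = Real.exp ((S:ℝ) * ((q k:ℝ)/2 + 1)) := (Real.exp_nat_mul _ S).symm
  -- the absolute value of f z
  have hfabs : ‖f z‖ = (‖z‖)^2 * (H * T) := by
    rw [hHdef, hTdef, hf z, norm_mul, norm_pow, habsP, ← hsplit]
  -- LOWER BOUND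
  have hz2ge : (16:ℝ) ≤ (‖z‖)^2 := by nlinarith [habsz4]
  have hTnonneg : (0:ℝ) ≤ T := le_trans (Real.exp_pos _).le hTlb
  have hHT : (3:ℝ)^(q k) * Real.exp (-1) ≤ H * T :=
    mul_le_mul hH3 hTlb (Real.exp_pos _).le hHpos.le
  have hqkR : (8000:ℝ) ≤ (q k : ℝ) := hqcast k
  have hcore : 4 * a (k+1) < 16 * ((3:ℝ)^(q k) * Real.exp (-1)) := by
    rw [harec k]
    have h1 : ((11:ℝ)/10)^(q k) * Real.exp (q k) ≤ (3:ℝ)^(q k) := by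
      have h2 : ((11:ℝ)/10) * Real.exp 1 ≤ 3 := by nlinarith [Real.exp_one_lt_d9]
      calc ((11:ℝ)/10)^(q k) * Real.exp (q k)
          = ((11/10) * Real.exp 1)^(q k) := by rw [mul_pow, Real.exp_one_pow]
        _ ≤ 3^(q k) := pow_le_pow_left₀ (by positivity) h2 _
    have h3 : (801:ℝ) ≤ ((11:ℝ)/10)^(q k) := by
      have hb := one_add_mul_le_pow (show (-2:ℝ) ≤ 1/10 by norm_num) (q k)
      calc (801:ℝ) ≤ 1 + (q k:ℝ) * (1/10) := by linarith
        _ ≤ (1 + 1/10)^(q k) := hb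
        _ = ((11:ℝ)/10)^(q k) := by norm_num
    have h4 : (801:ℝ) * Real.exp ((q k:ℝ)) ≤ (3:ℝ)^(q k) := by
      nlinarith [Real.exp_pos ((q k:ℝ)), h1, h3]
    have hexp1 : Real.exp (-1) * Real.exp 1 = 1 := by rw [← Real.exp_add]; norm_num
    have h5 : (1:ℝ)/3 ≤ Real.exp (-1) := by
      nlinarith [Real.exp_one_lt_d9, Real.exp_pos (-1:ℝ)]
    have h6 := mul_le_mul h4 h5 (by norm_num) (by positivity : (0:ℝ) ≤ (3:ℝ)^(q k))
    nlinarith [Real.exp_pos ((q k:ℝ))]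
  have hlower : 4 * a (k+1) < ‖f z‖ := by
    rw [hfabs]
    calc 4 * a (k+1) < 16 * ((3:ℝ)^(q k) * Real.exp (-1)) := hcore
      _ ≤ (‖z‖)^2 * (H * T) := by
          exact mul_le_mul hz2ge hHT
            (mul_nonneg (by positivity) (Real.exp_nonneg _)) (by positivity)
  -- UPPER BOUND
  have hzsq : (‖z‖)^2 ≤ Real.exp ((q k:ℝ)) := by
    calc (‖z‖)^2 ≤ (Real.exp ((q k:ℝ)/2))^2 :=
          pow_le_pow_left₀ (norm_nonneg z) hzexp 2
      _ = Real.exp ((q k:ℝ)) := by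
          rw [← Real.exp_nat_mul]
          congr 1
          push_cast
          ring
  have hsqrt2 : Real.sqrt (a (k+2)) = Real.exp ((q (k+1) : ℝ)/2) := by
    rw [harec (k+1), ← Real.exp_half]
  have hScast : 50*(S:ℝ) ≤ 51*(q k:ℝ) := by exact_mod_cast hS51
  have hSnn : (0:ℝ) ≤ (S:ℝ) := by positivity
  have hqsucc : 2*(q (k+1):ℝ) = 3*(q k:ℝ)^2 := by exact_mod_cast hqrec k
  have hexpineq : (q k:ℝ) + ((S:ℝ) * ((q k:ℝ)/2 + 1) + 1) < (q (k+1):ℝ)/2 := by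
    have hx : (0:ℝ) ≤ (q k:ℝ)/2 + 1 := by linarith
    nlinarith [mul_le_mul_of_nonneg_right hScast hx, hqkR]
  have hupper : ‖f z‖ < Real.sqrt (a (k+2)) := by
    rw [hfabs, hsqrt2]
    calc (‖z‖)^2 * (H * T)
        ≤ Real.exp ((q k:ℝ)) * (Real.exp ((S:ℝ) * ((q k:ℝ)/2 + 1)) * Real.exp 1) := by
          exact mul_le_mul hzsq
            (mul_le_mul hHub hTub hTnonneg (Real.exp_nonneg _))
            (mul_nonneg hHpos.le hTnonneg) (Real.exp_nonneg _)
      _ = Real.exp ((q k:ℝ) + ((S:ℝ) * ((q k:ℝ)/2 + 1) + 1)) := by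
          rw [← Real.exp_add, ← Real.exp_add]
      _ < Real.exp ((q (k+1):ℝ)/2) := Real.exp_lt_exp.2 hexpineq
  exact ⟨hlower, hupper⟩
end

section
/- There exists Q such that for every even integer q_0 ≥ Q: (i) for all k ≥ 1, |f(z)| ≤ a_{k+1}/8 and |f(z)| ≥ 4 a_k whenever |z| = a_k/4; (ii) for all k ≥ 0, |f(z)| ≥ 4 a_{k+1} and |f(z)| ≤ a_{k+2}/4 whenever |z| = 4 a_k. -/
set_option maxHeartbeats 2000000

open Filter Finset

private lemma lg_ub {x : ℝ} (hx : 0 ≤ x) : Real.log (1 + x) ≤ x := by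
  have := Real.log_le_sub_one_of_pos (show (0:ℝ) < 1 + x by linarith)
  linarith

private lemma lg_lb {x : ℝ} (h0 : 0 ≤ x) (h2 : x ≤ 1/2) : -(2*x) ≤ Real.log (1 - x) := by
  have h1 : (0:ℝ) < 1 - x := by linarith
  have h3 := Real.log_le_sub_one_of_pos (show (0:ℝ) < (1-x)⁻¹ by positivity)
  rw [Real.log_inv] at h3
  have h4 : (1-x)⁻¹ ≤ 1 + 2*x := by
    rw [inv_le_iff_one_le_mul₀ h1]
    nlinarith
  linarith

private lemma exp_dom {x : ℝ} (hx : 1000 ≤ x) : x^3 ≤ Real.exp (x/2) := by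
  have h1 : (x/10) + 1 ≤ Real.exp (x/10) := Real.add_one_le_exp _
  have h2 : Real.exp (x/2) = (Real.exp (x/10))^5 := by
    rw [← Real.exp_nat_mul]; congr 1; push_cast; ring
  have h3 : (x/10)^5 ≤ (Real.exp (x/10))^5 := by
    apply pow_le_pow_left₀ (by linarith) (by linarith)
  have hx2 : 100000 ≤ x^2 := by nlinarith
  have hx3 : (0:ℝ) ≤ x^3 := by positivity
  have h4 : x^3 ≤ (x/10)^5 := by nlinarith [mul_le_mul_of_nonneg_left hx2 hx3]
  linarith [h2 ▸ h3]

private lemma log43 : Real.log (4/3) ≤ 0.31 := by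
  have hs : Real.sqrt (4/3) ^ 2 = 4/3 := Real.sq_sqrt (by norm_num)
  have hpos : 0 < Real.sqrt (4/3) := Real.sqrt_pos.mpr (by norm_num)
  have h1 : Real.log (4/3) = 2 * Real.log (Real.sqrt (4/3)) := by
    conv_lhs => rw [← hs]
    rw [Real.log_pow]; push_cast; ring
  have h2 : Real.log (Real.sqrt (4/3)) ≤ Real.sqrt (4/3) - 1 :=
    Real.log_le_sub_one_of_pos hpos
  have h3 : Real.sqrt (4/3) ≤ 1.155 := by
    rw [show (1.155:ℝ) = Real.sqrt (1.155^2) by rw [Real.sqrt_sq (by norm_num)]]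
    exact Real.sqrt_le_sqrt (by norm_num)
  rw [h1]; linarith

private lemma log3_lb : 1.09 ≤ Real.log 3 := by
  have he : Real.exp 1 ≤ 2.72 := le_of_lt (by
    have := Real.exp_one_lt_d9; linarith)
  have h1 : Real.log (Real.exp 1 / 3) ≤ Real.exp 1 / 3 - 1 :=
    Real.log_le_sub_one_of_pos (by positivity)
  rw [Real.log_div (Real.exp_ne_zero 1) (by norm_num), Real.log_exp] at h1
  linarith

private lemma abs_one_sub_le (w : ℂ) : ‖1 - w‖ ≤ 1 + ‖w‖ := by
  calc ‖1 - w‖ ≤ ‖(1:ℂ)‖ + ‖w‖ := norm_sub_le _ _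
  _ = 1 + ‖w‖ := by rw [norm_one]

private lemma abs_one_sub_ge (w : ℂ) : 1 - ‖w‖ ≤ ‖1 - w‖ := by
  have := norm_sub_norm_le (1:ℂ) w
  rw [norm_one] at this; linarith

private lemma abs_one_sub_ge' (w : ℂ) : ‖w‖ - 1 ≤ ‖1 - w‖ := by
  have := norm_sub_norm_le w (1:ℂ)
  rw [norm_one, norm_sub_rev] at this; linarith


/-- for `q_0` even and large enough: (i) for `k ≥ 1`,
`|f(z)| ≤ a_{k+1}/8` and `|f(z)| ≥ 4 a_k` on `|z| = a_k/4`; (ii) for `k ≥ 0`,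
`|f(z)| ≥ 4 a_{k+1}` and `|f(z)| ≤ a_{k+2}/4` on `|z| = 4 a_k`. -/
theorem stmt_18 :
    ∃ Q : ℕ, ∀ q0 : ℕ, Even q0 → 0 < q0 → Q ≤ q0 →
      ∀ (q : ℕ → ℕ) (a : ℕ → ℝ) (f : ℂ → ℂ),
        q 0 = q0 →
        (∀ k, 2 * q (k + 1) = 3 * q k ^ 2) →
        a 0 = Real.exp ((q0 : ℝ) / 2) →
        (∀ k, a (k + 1) = Real.exp (q k)) →
        (∀ z : ℂ, Multipliable (fun k : ℕ => (1 - z / (a k : ℂ)) ^ q k)) →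
        (∀ z : ℂ, f z = z ^ 2 * ∏' k : ℕ, (1 - z / (a k : ℂ)) ^ q k) →
        (∀ k : ℕ, 1 ≤ k → ∀ z : ℂ, ‖z‖ = a k / 4 →
          ‖f z‖ ≤ a (k + 1) / 8 ∧ 4 * a k ≤ ‖f z‖) ∧
        (∀ k : ℕ, ∀ z : ℂ, ‖z‖ = 4 * a k →
          4 * a (k + 1) ≤ ‖f z‖ ∧ ‖f z‖ ≤ a (k + 2) / 4) := by
  use 1000
  intro q0 _hev _hpos hQ q a f hq0 hqrec ha0 harec hmult hf
  -- ℕ facts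
  have hqsq : ∀ k, q k ^ 2 ≤ q (k+1) := by
    intro k; have := hqrec k; nlinarith [sq_nonneg (q k)]
  have hqK : ∀ k, 1000 ≤ q k := by
    intro k; induction k with
    | zero => rw [hq0]; exact hQ
    | succ n ih =>
      calc 1000 ≤ q n := ih
      _ ≤ q n * q n := Nat.le_mul_of_pos_left _ (by omega)
      _ = q n ^ 2 := (sq (q n)).symm
      _ ≤ q (n+1) := hqsq n
  have hq1000 : ∀ k, 1000 * q k ≤ q (k+1) := by
    intro k
    calc 1000 * q k ≤ q k * q k := Nat.mul_le_mul_right _ (hqK k)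
    _ = q k ^ 2 := (sq (q k)).symm
    _ ≤ q (k+1) := hqsq k
  have hqmono : Monotone q := by
    apply monotone_nat_of_le_succ
    intro k; calc q k ≤ 1000 * q k := Nat.le_mul_of_pos_left _ (by omega)
    _ ≤ q (k+1) := hq1000 k
  have hqle : ∀ k, (q (k+1) : ℝ) = 3 * (q k:ℝ)^2 / 2 := by
    intro k; have := hqrec k
    have : (2:ℝ) * q (k+1) = 3 * (q k:ℝ)^2 := by exact_mod_cast congrArg (Nat.cast (R := ℝ)) this
    linarith
  -- sum bound
  have hsumlt : ∀ k, (∑ j ∈ range k, (q j:ℝ)) ≤ (q k:ℝ) / 100 := by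
    intro k; induction k with
    | zero =>
      simp only [Finset.range_zero, Finset.sum_empty]
      positivity
    | succ n ih =>
      rw [Finset.sum_range_succ]
      have h1 : (1000:ℝ) * q n ≤ q (n+1) := by exact_mod_cast hq1000 n
      have h2 : (0:ℝ) ≤ q n := by positivity
      linarith
  -- a facts
  have hapos : ∀ k, 0 < a k := by
    intro k; cases k with
    | zero => rw [ha0]; exact Real.exp_pos _
    | succ n => rw [harec]; exact Real.exp_pos _
  set L : ℕ → ℝ := fun k => Real.log (a k) with hL
  have haL : ∀ k, a k = Real.exp (L k) := fun k => (Real.exp_log (hapos k)).symm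
  have hL0 : L 0 = (q0:ℝ)/2 := by simp only [hL, ha0, Real.log_exp]
  have hLs : ∀ k, L (k+1) = (q k : ℝ) := by
    intro k; simp only [hL, harec, Real.log_exp]
  have hLhalf : ∀ k, L k ≤ (q k : ℝ)/2 := by
    intro k; cases k with
    | zero => rw [hL0, hq0]
    | succ n =>
      rw [hLs]
      have h1 : (1000:ℝ) * q n ≤ q (n+1) := by exact_mod_cast hq1000 n
      have h2 : (0:ℝ) ≤ q n := by positivity
      linarith
  have hL500 : ∀ k, 500 ≤ L k := by
    intro k; cases k with
    | zero =>
      rw [hL0]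
      have : (1000:ℝ) ≤ q0 := by exact_mod_cast hQ
      linarith
    | succ n =>
      rw [hLs]
      have : (1000:ℝ) ≤ q n := by exact_mod_cast hqK n
      linarith
  have hLgap : ∀ k, L k + 500 ≤ L (k+1) := by
    intro k
    have h1 : L k ≤ (q k:ℝ)/2 := hLhalf k
    have h2 : (1000:ℝ) ≤ q k := by exact_mod_cast hqK k
    rw [hLs]; linarith
  have hLmono : Monotone L := by
    apply monotone_nat_of_le_succ
    intro k; linarith [hLgap k]
  have hamono : Monotone a := by
    intro i j hij; rw [haL i, haL j]; exact Real.exp_le_exp.mpr (hLmono hij)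
  have h500a : ∀ k, 500 * a k ≤ a (k+1) := by
    intro k
    rw [haL k, haL (k+1)]
    calc 500 * Real.exp (L k) ≤ Real.exp 500 * Real.exp (L k) := by
          have := Real.add_one_le_exp (500:ℝ)
          nlinarith [Real.exp_pos (L k)]
    _ = Real.exp (L k + 500) := by rw [← Real.exp_add]; ring_nf
    _ ≤ Real.exp (L (k+1)) := Real.exp_le_exp.mpr (hLgap k)
  -- abs of quotient
  have habs : ∀ (z : ℂ) (j : ℕ), ‖z / (a j : ℂ)‖ = ‖z‖ / a j := by
    intro z j
    rw [norm_div, Complex.norm_real, Real.norm_eq_abs, abs_of_pos (hapos j)]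
  set g : ℂ → ℕ → ℝ := fun z j => (q j : ℝ) * Real.log (‖1 - z / (a j : ℂ)‖) with hg
  have hmaster : ∀ (K : ℕ) (z : ℂ), 0 < ‖z‖ → ‖z‖ ≤ 4 * a K →
      (∀ j, ‖z‖ ≠ a j) →
      ∃ t : ℝ, |t| ≤ 1 ∧
        ‖f z‖ = ‖z‖ ^ 2 *
          Real.exp ((∑ j ∈ range (K+1), g z j) + t) := by
    intro K z hzpos hzle hne
    set r := ‖z‖ with hr
    have hfac : ∀ j, (1 : ℂ) - z / (a j : ℂ) ≠ 0 := by
      intro j h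
      have haj : ((a j : ℝ) : ℂ) ≠ 0 := by
        exact_mod_cast Complex.ofReal_ne_zero.mpr (hapos j).ne'
      rw [sub_eq_zero] at h
      have hz : z = (a j : ℂ) := by
        field_simp at h
        exact h.symm
      apply hne j
      rw [hr, hz, Complex.norm_real, Real.norm_eq_abs, abs_of_pos (hapos j)]
    have hfacpos : ∀ j, 0 < ‖1 - z / (a j : ℂ)‖ :=
      fun j => norm_pos_iff.mpr (hfac j)
    have hsmall : ∀ j, K+1 ≤ j → r / a j ≤ 1/2 := by
      intro j hj
      have h1 : a (K+1) ≤ a j := hamono hj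
      have h2 : 500 * a K ≤ a (K+1) := h500a K
      have hK0 := hapos K
      have h3 : r / a j ≤ (4 * a K) / (500 * a K) := by
        apply div_le_div₀ (by positivity) hzle (by positivity) (by linarith)
      have h4 : (4 * a K) / (500 * a K) ≤ 1/2 := by
        rw [div_le_div_iff₀ (by positivity) (by norm_num)]
        nlinarith
      linarith
    set c : ℕ → ℝ := fun j => (q j:ℝ) * r / a j with hc
    have hqRpos : ∀ j, (0:ℝ) < q j := by
      intro j; have := hqK j; positivity
    have hqR : ∀ j, (1000:ℝ) ≤ q j := by
      intro j; exact_mod_cast hqK j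
    have hcpos : ∀ j, 0 < c j := by
      intro j; have := hqRpos j; have := hapos j; have := hzpos; positivity
    have hexpgap : ∀ j, ((q j:ℝ))^3 * a j ≤ a (j+1) := by
      intro j
      have h1 : ((q j:ℝ))^3 ≤ Real.exp ((q j:ℝ)/2) := exp_dom (hqR j)
      have h2 : Real.exp ((q j:ℝ)/2) ≤ Real.exp ((q j:ℝ) - L j) := by
        apply Real.exp_le_exp.mpr
        linarith [hLhalf j]
      have h3 : a (j+1) = Real.exp ((q j:ℝ) - L j) * a j := by
        rw [harec, haL j, ← Real.exp_add]
        ring_nf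
      rw [h3]
      have := hapos j
      nlinarith
    have hcratio : ∀ j, c (j+1) ≤ c j / 2 := by
      intro j
      have key : (q (j+1):ℝ) * 2 * a j ≤ (q j:ℝ) * a (j+1) := by
        have h1 := hexpgap j
        have h2 := hqle j
        have h3 := hqR j
        have h4 := (hapos j)
        have k1 : (q (j+1):ℝ) * 2 * a j = 3 * (q j:ℝ)^2 * a j := by rw [h2]; ring
        have k3 : (3:ℝ) ≤ (q j:ℝ)^2 := by nlinarith
        have k2 := mul_le_mul_of_nonneg_right k3
          (show (0:ℝ) ≤ (q j:ℝ)^2 * a j by positivity)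
        have k4 := mul_le_mul_of_nonneg_left h1 (le_of_lt (hqRpos j))
        nlinarith [k1, k2, k4]
      have h5 : (q (j+1):ℝ) * r / a (j+1) ≤ (q j:ℝ) * r / (2 * a j) := by
        rw [div_le_div_iff₀ (hapos (j+1)) (by linarith [hapos j])]
        nlinarith [hzpos, mul_le_mul_of_nonneg_left key (le_of_lt hzpos)]
      calc c (j+1) = (q (j+1):ℝ) * r / a (j+1) := rfl
      _ ≤ (q j:ℝ) * r / (2 * a j) := h5
      _ = c j / 2 := by rw [hc]; ring
    have hgeo : ∀ i, c (i + (K+1)) ≤ c (K+1) * (1/2)^i := by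
      intro i; induction i with
      | zero => simp
      | succ n ih =>
        have : c ((n + (K+1)) + 1) ≤ c (n + (K+1)) / 2 := hcratio _
        have e : n + 1 + (K+1) = (n + (K+1)) + 1 := by omega
        rw [e, pow_succ]
        linarith
    have hcK1 : c (K+1) ≤ 1/4 := by
      have e2 : (q (K+1):ℝ) * r ≤ 6 * (q K:ℝ)^2 * a K := by
        have h2 := hqle K
        have h3 := hqRpos K
        nlinarith [hzpos, hapos K]
      have e1 : ((q K:ℝ))^3 * a K ≤ a (K+1) := hexpgap K
      have h4 := hapos K
      have h3 := hqR K
      have h6 : (q (K+1):ℝ) * r ≤ 1/4 * a (K+1) := by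
        nlinarith [mul_le_mul_of_nonneg_right (show (24:ℝ) ≤ (q K:ℝ) by linarith)
          (show (0:ℝ) ≤ (q K:ℝ)^2 * a K by positivity)]
      calc c (K+1) = (q (K+1):ℝ) * r / a (K+1) := rfl
      _ ≤ 1/4 := by rw [div_le_iff₀ (hapos (K+1))]; linarith
    have hgb : ∀ i, |g z (i + (K+1))| ≤ (2 * c (K+1)) * (1/2)^i := by
      intro i
      set j := i + (K+1) with hj
      have hjK : K+1 ≤ j := by omega
      have hx0 : 0 < r / a j := by have := hapos j; positivity
      have hx2 : r / a j ≤ 1/2 := hsmall j hjK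
      have hub : Real.log (‖1 - z / (a j:ℂ)‖) ≤ r / a j := by
        have h1 : ‖1 - z / (a j:ℂ)‖ ≤ 1 + r / a j := by
          have := abs_one_sub_le (z / (a j:ℂ)); rwa [habs z j] at this
        calc Real.log (‖1 - z / (a j:ℂ)‖)
            ≤ Real.log (1 + r / a j) := Real.log_le_log (hfacpos j) h1
        _ ≤ r / a j := lg_ub (le_of_lt hx0)
      have hlb : -(2 * (r / a j)) ≤ Real.log (‖1 - z / (a j:ℂ)‖) := by
        have h1 : 1 - r / a j ≤ ‖1 - z / (a j:ℂ)‖ := by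
          have := abs_one_sub_ge (z / (a j:ℂ)); rwa [habs z j] at this
        calc -(2 * (r / a j)) ≤ Real.log (1 - r / a j) := lg_lb (le_of_lt hx0) hx2
        _ ≤ Real.log (‖1 - z / (a j:ℂ)‖) := Real.log_le_log (by linarith) h1
      have e : (q j:ℝ) * (r / a j) = c j := by rw [hc]; ring
      have h2 : |g z j| ≤ 2 * c j := by
        have hq0' : (0:ℝ) ≤ q j := le_of_lt (hqRpos j)
        have m1 := mul_le_mul_of_nonneg_left hub hq0'
        have m2 := mul_le_mul_of_nonneg_left hlb hq0'
        have egj : g z j = (q j:ℝ) * Real.log (‖1 - z / (a j:ℂ)‖) := rfl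
        have e2 : (q j:ℝ) * (-(2 * (r / a j))) = -(2 * c j) := by rw [← e]; ring
        rw [egj, abs_le]
        constructor
        · linarith [hcpos j]
        · linarith [hcpos j]
      have h3 : 2 * c j ≤ (2 * c (K+1)) * (1/2)^i := by
        have hh := hgeo i
        rw [← hj] at hh
        calc 2 * c j ≤ 2 * (c (K+1) * (1/2)^i) := by linarith
        _ = (2 * c (K+1)) * (1/2)^i := by ring
      linarith [abs_nonneg (g z j)]
    have hmajsum : Summable (fun i : ℕ => (2 * c (K+1)) * (1/2)^i) :=
      summable_geometric_two.mul_left _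
    have hsumtail : Summable (fun i => g z (i + (K+1))) := by
      apply Summable.of_norm_bounded hmajsum
      intro i; rw [Real.norm_eq_abs]; exact hgb i
    have hG : Summable (g z) := (summable_nat_add_iff (K+1)).mp hsumtail
    have habssum : Summable (fun i => |g z (i + (K+1))|) := by
      apply Summable.of_nonneg_of_le (fun i => abs_nonneg _) hgb hmajsum
    have htb : |∑' i, g z (i + (K+1))| ≤ 1 := by
      have hnorm : Summable (fun i => ‖g z (i + (K+1))‖) := by
        simpa only [Real.norm_eq_abs] using habssum
      have h1' := norm_tsum_le_tsum_norm hnorm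
      rw [Real.norm_eq_abs] at h1'
      have h1'' : ∑' i, ‖g z (i + (K+1))‖ = ∑' i, |g z (i + (K+1))| := by
        simp only [Real.norm_eq_abs]
      have h1 : |∑' i, g z (i + (K+1))| ≤ ∑' i, |g z (i + (K+1))| := by
        rw [← h1'']; exact h1'
      have h2 : ∑' i, |g z (i + (K+1))| ≤ ∑' i : ℕ, (2 * c (K+1)) * (1/2)^i :=
        habssum.tsum_le_tsum hgb hmajsum
      have h3 : ∑' i : ℕ, (2 * c (K+1)) * (1/2)^i = (2 * c (K+1)) * 2 := by
        rw [tsum_mul_left, tsum_geometric_two]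
      have h4 : (2 * c (K+1)) * 2 ≤ 1 := by nlinarith
      linarith
    have hprod : HasProd (fun j => (‖1 - z / (a j:ℂ)‖)^(q j))
        (Real.exp (∑' j, g z j)) := by
      have h := hG.hasSum.rexp
      have heq : (Real.exp ∘ g z) = fun j => (‖1 - z / (a j:ℂ)‖)^(q j) := by
        funext j
        simp only [Function.comp, hg]
        rw [Real.exp_nat_mul, Real.exp_log (hfacpos j)]
      rwa [heq] at h
    have h2 : ‖∏' j, ((1:ℂ) - z / (a j:ℂ))^(q j)‖
        = ∏' j, (‖1 - z / (a j:ℂ)‖)^(q j) := by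
      rw [(hmult z).norm_tprod]
      congr 1; funext j; rw [norm_pow]
    have hformula : ‖f z‖ = r^2 * Real.exp (∑' j, g z j) := by
      rw [hf z, norm_mul, norm_pow, h2, hprod.tprod_eq]
    have hsplit : ∑' j, g z j = (∑ j ∈ range (K+1), g z j) + ∑' i, g z (i + (K+1)) :=
      (hG.sum_add_tsum_nat_add (K+1)).symm
    exact ⟨_, htb, by rw [hformula, hsplit]⟩
  -- shared constants
  have hqRt : ∀ j, (1000:ℝ) ≤ (q j:ℝ) := fun j => by exact_mod_cast hqK j
  have ha2 : ∀ j, (2:ℝ) ≤ a j := by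
    intro j
    rw [haL j]
    have h := Real.add_one_le_exp (500:ℝ)
    have h2 := Real.exp_le_exp.mpr (hL500 j)
    linarith
  have hlog2 : Real.log 2 ≤ 1 := by
    have := Real.log_le_sub_one_of_pos (show (0:ℝ) < 2 by norm_num); linarith
  have hlog4 : Real.log 4 ≤ 2 := by
    rw [show (4:ℝ) = 2^2 by norm_num, Real.log_pow]
    push_cast; linarith
  have hlog4nn : 0 ≤ Real.log 4 := Real.log_nonneg (by norm_num)
  have he1 : (2:ℝ) ≤ Real.exp 1 := by
    have := Real.add_one_le_exp (1:ℝ); linarith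
  have hexp2 : (4:ℝ) ≤ Real.exp 2 := by
    rw [show (2:ℝ) = 1+1 by norm_num, Real.exp_add]
    nlinarith
  have hexp3 : (8:ℝ) ≤ Real.exp 3 := by
    rw [show (3:ℝ) = 1+(1+1) by norm_num, Real.exp_add, Real.exp_add]
    nlinarith [Real.exp_pos (1:ℝ)]
  have hfacX : ∀ (z : ℂ), (∀ j, ‖z‖ ≠ a j) →
      ∀ j, 0 < ‖1 - z / (a j : ℂ)‖ := by
    intro z hne j
    apply norm_pos_iff.mpr
    intro h
    rw [sub_eq_zero] at h
    have haj : ((a j : ℝ) : ℂ) ≠ 0 := Complex.ofReal_ne_zero.mpr (hapos j).ne'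
    have hz : z = (a j : ℂ) := by
      field_simp at h
      exact h.symm
    exact hne j (by rw [hz, Complex.norm_real, Real.norm_eq_abs, abs_of_pos (hapos j)])
  constructor
  · -- CASE I : |z| = a k / 4, k ≥ 1
    intro k hk z hz
    obtain ⟨m, rfl⟩ : ∃ m, k = m + 1 := ⟨k - 1, by omega⟩
    have ham1 := hapos (m+1)
    have ham := hapos m
    have hrpos : (0:ℝ) < a (m+1) / 4 := by linarith
    have hqm := hqRt m
    have hqm1 := hqRt (m+1)
    have hqlem := hqle m
    have hqmpos : (0:ℝ) ≤ (q m:ℝ) := by positivity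
    have hne : ∀ j, ‖z‖ ≠ a j := by
      intro j; rw [hz]
      rcases le_or_gt j m with hj | hj
      · have h1 : a j ≤ a m := hamono hj
        have h2 := h500a m
        intro hEq; linarith
      · have h1 : a (m+1) ≤ a j := hamono hj
        intro hEq; linarith
    have hfacpos := hfacX z hne
    obtain ⟨t, ht, heq⟩ := hmaster (m+1) z (by rw [hz]; linarith) (by rw [hz]; linarith [hapos (m+1)]) hne
    have habs' := abs_le.mp ht
    have hub : ∀ j, ‖1 - z / (a j:ℂ)‖ ≤ 1 + (a (m+1)/4) / a j := by
      intro j; have := abs_one_sub_le (z / (a j:ℂ)); rwa [habs z j, hz] at this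
    have hlbj : ∀ j, (a (m+1)/4) / a j - 1 ≤ ‖1 - z / (a j:ℂ)‖ := by
      intro j; have := abs_one_sub_ge' (z / (a j:ℂ)); rwa [habs z j, hz] at this
    have hlbj2 : ∀ j, 1 - (a (m+1)/4) / a j ≤ ‖1 - z / (a j:ℂ)‖ := by
      intro j; have := abs_one_sub_ge (z / (a j:ℂ)); rwa [habs z j, hz] at this
    have hr14 : (a (m+1)/4) / a (m+1) = 1/4 := by
      field_simp
      try ring
    have hgdef : ∀ j, g z j = (q j:ℝ) * Real.log (‖1 - z / (a j:ℂ)‖) :=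
      fun j => rfl
    have hgtop_ub : g z (m+1) ≤ (q (m+1):ℝ) * (1/4) := by
      have h3 : ‖1 - z/(a (m+1):ℂ)‖ ≤ 1 + 1/4 := by
        have := hub (m+1); rwa [hr14] at this
      have h4 : Real.log (‖1 - z/(a (m+1):ℂ)‖) ≤ 1/4 :=
        le_trans (Real.log_le_log (hfacpos _) h3) (lg_ub (by norm_num))
      rw [hgdef]
      exact mul_le_mul_of_nonneg_left h4 (by positivity)
    have hgtop_lb : -((q (m+1):ℝ) * Real.log (4/3)) ≤ g z (m+1) := by
      have h3 : (3/4:ℝ) ≤ ‖1 - z/(a (m+1):ℂ)‖ := by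
        have := hlbj2 (m+1); rw [hr14] at this; linarith
      have h4 : Real.log (3/4) ≤ Real.log (‖1 - z/(a (m+1):ℂ)‖) :=
        Real.log_le_log (by norm_num) h3
      have h5 : Real.log (3/4:ℝ) = -Real.log (4/3) := by
        rw [show (3/4:ℝ) = (4/3)⁻¹ by norm_num, Real.log_inv]
      have h6 := mul_le_mul_of_nonneg_left h4 (show (0:ℝ) ≤ (q (m+1):ℝ) by positivity)
      rw [h5] at h6
      rw [hgdef]
      calc -((q (m+1):ℝ) * Real.log (4/3)) = (q (m+1):ℝ) * -Real.log (4/3) := by ring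
      _ ≤ _ := h6
    have hrdiv : ∀ j, j ≤ m → (125:ℝ) ≤ (a (m+1)/4) / a j := by
      intro j hj
      have h1 : a j ≤ a m := hamono hj
      have h2 := h500a m
      rw [le_div_iff₀ (hapos j)]
      linarith
    have hterm_nonneg : ∀ j, j ≤ m → 0 ≤ g z j := by
      intro j hj
      have h3 : (1:ℝ) ≤ ‖1 - z / (a j:ℂ)‖ := by
        have := hlbj j; have := hrdiv j hj; linarith
      rw [hgdef]
      exact mul_nonneg (by positivity) (Real.log_nonneg h3)
    have hLm1 : Real.log (a (m+1)) = (q m:ℝ) := hLs m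
    have hLmm : Real.log (a m) = L m := rfl
    have hgm_lb : (q m:ℝ) * ((q m:ℝ)/2 - 3) ≤ g z m := by
      have h1 := hrdiv m le_rfl
      have h3 : ((a (m+1)/4)/a m)/2 ≤ ‖1 - z/(a m:ℂ)‖ := by
        have := hlbj m; linarith
      have hxpos : (0:ℝ) < ((a (m+1)/4)/a m)/2 := by positivity
      have h4 : Real.log (((a (m+1)/4)/a m)/2) ≤ Real.log (‖1 - z/(a m:ℂ)‖) :=
        Real.log_le_log hxpos h3
      have h5 : Real.log (((a (m+1)/4)/a m)/2)
          = Real.log (a (m+1)) - Real.log 4 - Real.log (a m) - Real.log 2 := by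
        rw [Real.log_div (ne_of_gt (by positivity)) (by norm_num),
            Real.log_div (ne_of_gt (by positivity)) (hapos m).ne',
            Real.log_div ham1.ne' (by norm_num)]
        try ring
      have h6 : (q m:ℝ)/2 - 3 ≤ Real.log (‖1 - z/(a m:ℂ)‖) := by
        rw [h5, hLm1, hLmm] at h4
        have := hLhalf m
        linarith
      rw [hgdef]
      exact mul_le_mul_of_nonneg_left h6 hqmpos
    have hgj_ub : ∀ j, j ≤ m → g z j ≤ (q j:ℝ) * (q m:ℝ) := by
      intro j hj
      have h1 : (a (m+1)/4)/a j ≤ a (m+1)/4 := div_le_self (by linarith) (by linarith [ha2 j])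
      have h2 : 1 + (a (m+1)/4)/a j ≤ a (m+1) := by
        have := ha2 (m+1)
        linarith
      have h5 : Real.log (‖1 - z/(a j:ℂ)‖) ≤ (q m:ℝ) := by
        calc Real.log (‖1 - z/(a j:ℂ)‖)
            ≤ Real.log (a (m+1)) := Real.log_le_log (hfacpos j) (le_trans (hub j) h2)
        _ = (q m:ℝ) := hLm1
      rw [hgdef]
      exact mul_le_mul_of_nonneg_left h5 (by positivity)
    -- sums
    have hSsplit : ∑ j ∈ range (m+2), g z j = (∑ j ∈ range (m+1), g z j) + g z (m+1) :=
      Finset.sum_range_succ _ _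
    have hSsplit2 : ∑ j ∈ range (m+1), g z j = (∑ j ∈ range m, g z j) + g z m :=
      Finset.sum_range_succ _ _
    have hSub : ∑ j ∈ range (m+1), g z j ≤ ((q m:ℝ) + (q m:ℝ)/100) * (q m:ℝ) := by
      calc ∑ j ∈ range (m+1), g z j ≤ ∑ j ∈ range (m+1), (q j:ℝ) * (q m:ℝ) :=
            Finset.sum_le_sum (fun j hj => hgj_ub j (Nat.le_of_lt_succ (Finset.mem_range.mp hj)))
      _ = (∑ j ∈ range (m+1), (q j:ℝ)) * (q m:ℝ) := by rw [← Finset.sum_mul]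
      _ ≤ ((q m:ℝ) + (q m:ℝ)/100) * (q m:ℝ) := by
            apply mul_le_mul_of_nonneg_right _ hqmpos
            rw [Finset.sum_range_succ]
            linarith [hsumlt m]
    have hSzero : 0 ≤ ∑ j ∈ range m, g z j :=
      Finset.sum_nonneg (fun j hj => hterm_nonneg j (by exact Nat.le_of_lt_succ (Nat.lt_succ_of_lt (Finset.mem_range.mp hj))))
    -- exp formula
    have hlogr : Real.log (a (m+1)/4) = (q m:ℝ) - Real.log 4 := by
      rw [Real.log_div ham1.ne' (by norm_num), hLm1]
    have hfz : ‖f z‖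
        = Real.exp ((Real.log (a (m+1)/4) + Real.log (a (m+1)/4))
            + ((∑ j ∈ range (m+2), g z j) + t)) := by
      have hsq : (a (m+1)/4)^2
          = Real.exp (Real.log (a (m+1)/4) + Real.log (a (m+1)/4)) := by
        rw [Real.exp_add, Real.exp_log hrpos]; ring
      rw [heq, hz, hsq, ← Real.exp_add]
    constructor
    · -- upper : ≤ a (m+2) / 8
      have hS : ∑ j ∈ range (m+2), g z j
          ≤ ((q m:ℝ) + (q m:ℝ)/100) * (q m:ℝ) + (q (m+1):ℝ) * (1/4) := by
        rw [hSsplit]; linarith [hSub, hgtop_ub]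
      have hA : (Real.log (a (m+1)/4) + Real.log (a (m+1)/4))
          + ((∑ j ∈ range (m+2), g z j) + t) ≤ (q (m+1):ℝ) - 3 := by
        rw [hlogr]
        nlinarith [habs'.2, hqm]
      have hfin : Real.exp ((q (m+1):ℝ) - 3) * 8 ≤ Real.exp ((q (m+1):ℝ)) := by
        have e : Real.exp ((q (m+1):ℝ)) = Real.exp ((q (m+1):ℝ) - 3) * Real.exp 3 := by
          rw [← Real.exp_add]; ring_nf
        rw [e]
        nlinarith [Real.exp_pos ((q (m+1):ℝ) - 3)]
      have ha2e : a (m+2) = Real.exp ((q (m+1):ℝ)) := harec (m+1)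
      rw [hfz, ha2e]
      rw [le_div_iff₀ (by norm_num : (0:ℝ) < 8)]
      calc Real.exp _ * 8 ≤ Real.exp ((q (m+1):ℝ) - 3) * 8 := by
            have := Real.exp_le_exp.mpr hA
            nlinarith [this]
      _ ≤ Real.exp ((q (m+1):ℝ)) := hfin
    · -- lower : 4 * a (m+1) ≤ abs (f z)
      have hS : (q m:ℝ) * ((q m:ℝ)/2 - 3) - (q (m+1):ℝ) * Real.log (4/3)
          ≤ ∑ j ∈ range (m+2), g z j := by
        rw [hSsplit, hSsplit2]
        linarith [hSzero, hgm_lb, hgtop_lb]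
      have hlog43q := mul_le_mul_of_nonneg_left log43 (show (0:ℝ) ≤ (q (m+1):ℝ) by positivity)
      have hqq : 1000 * (q m:ℝ) ≤ (q m:ℝ) * (q m:ℝ) :=
        mul_le_mul_of_nonneg_right hqm hqmpos
      have hlow : 4 * a (m+1) = Real.exp (Real.log 4 + (q m:ℝ)) := by
        rw [Real.exp_add, Real.exp_log (by norm_num : (0:ℝ) < 4), harec m]
      rw [hfz, hlow]
      apply Real.exp_le_exp.mpr
      rw [hlogr]
      nlinarith [habs'.1, hS, hlog43q, hqq]
  · -- CASE II : |z| = 4 * a k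
    intro k z hz
    have hak := hapos k
    have hrpos : (0:ℝ) < 4 * a k := by linarith
    have hqk := hqRt k
    have hqkpos : (0:ℝ) ≤ (q k:ℝ) := by positivity
    have hqlek := hqle k
    have hne : ∀ j, ‖z‖ ≠ a j := by
      intro j
      rw [hz]
      rcases le_or_gt j k with hj | hj
      · have h1 : a j ≤ a k := hamono hj
        intro hEq; linarith
      · have h1 : a (k+1) ≤ a j := hamono hj
        have h2 := h500a k
        intro hEq; linarith
    have hfacpos := hfacX z hne
    obtain ⟨t, ht, heq⟩ := hmaster k z (by rw [hz]; exact hrpos) (by rw [hz]) hne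
    have habs' := abs_le.mp ht
    have hgdef : ∀ j, g z j = (q j:ℝ) * Real.log (‖1 - z / (a j:ℂ)‖) :=
      fun j => rfl
    have hub : ∀ j, ‖1 - z / (a j:ℂ)‖ ≤ 1 + (4 * a k) / a j := by
      intro j; have := abs_one_sub_le (z / (a j:ℂ)); rwa [habs z j, hz] at this
    have hlbj : ∀ j, (4 * a k) / a j - 1 ≤ ‖1 - z / (a j:ℂ)‖ := by
      intro j; have := abs_one_sub_ge' (z / (a j:ℂ)); rwa [habs z j, hz] at this
    have hr4 : (4 * a k) / a k = 4 := by field_simp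
    have hterm_nonneg : ∀ j, j ≤ k → 0 ≤ g z j := by
      intro j hj
      have h1 : a j ≤ a k := hamono hj
      have h2 : (2:ℝ) ≤ (4 * a k) / a j := by
        rw [le_div_iff₀ (hapos j)]; linarith
      have h3 : (1:ℝ) ≤ ‖1 - z / (a j:ℂ)‖ := by
        have := hlbj j; linarith
      rw [hgdef]
      exact mul_nonneg (by positivity) (Real.log_nonneg h3)
    have hgk_lb : (q k:ℝ) * Real.log 3 ≤ g z k := by
      have h3 : (3:ℝ) ≤ ‖1 - z / (a k:ℂ)‖ := by
        have := hlbj k; rw [hr4] at this; linarith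
      have h4 : Real.log 3 ≤ Real.log (‖1 - z / (a k:ℂ)‖) :=
        Real.log_le_log (by norm_num) h3
      rw [hgdef]
      exact mul_le_mul_of_nonneg_left h4 hqkpos
    have hgk_ub : g z k ≤ (q k:ℝ) * 4 := by
      have h3 : ‖1 - z / (a k:ℂ)‖ ≤ 5 := by
        have := hub k; rw [hr4] at this; linarith
      have h4 : Real.log (‖1 - z / (a k:ℂ)‖) ≤ 4 := by
        calc Real.log (‖1 - z / (a k:ℂ)‖)
            ≤ Real.log 5 := Real.log_le_log (hfacpos k) h3
        _ ≤ 4 := by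
            have := Real.log_le_sub_one_of_pos (show (0:ℝ) < 5 by norm_num); linarith
      rw [hgdef]
      exact mul_le_mul_of_nonneg_left h4 hqkpos
    have hLk1 : Real.log (a (k+1)) = (q k:ℝ) := hLs k
    have hgj_ub : ∀ j, j < k → g z j ≤ (q j:ℝ) * (q k:ℝ) := by
      intro j hj
      have h1 : (4 * a k)/a j ≤ 4 * a k := div_le_self (by linarith) (by linarith [ha2 j])
      have h2 : 1 + (4 * a k)/a j ≤ a (k+1) := by
        have h3 := h500a k
        have h4 := ha2 k
        linarith
      have h5 : Real.log (‖1 - z/(a j:ℂ)‖) ≤ (q k:ℝ) := by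
        calc Real.log (‖1 - z/(a j:ℂ)‖)
            ≤ Real.log (a (k+1)) := Real.log_le_log (hfacpos j) (le_trans (hub j) h2)
        _ = (q k:ℝ) := hLk1
      rw [hgdef]
      exact mul_le_mul_of_nonneg_left h5 (by positivity)
    have hSsplit : ∑ j ∈ range (k+1), g z j = (∑ j ∈ range k, g z j) + g z k :=
      Finset.sum_range_succ _ _
    have hSub : ∑ j ∈ range k, g z j ≤ ((q k:ℝ)/100) * (q k:ℝ) := by
      calc ∑ j ∈ range k, g z j ≤ ∑ j ∈ range k, (q j:ℝ) * (q k:ℝ) :=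
            Finset.sum_le_sum (fun j hj => hgj_ub j (Finset.mem_range.mp hj))
      _ = (∑ j ∈ range k, (q j:ℝ)) * (q k:ℝ) := by rw [← Finset.sum_mul]
      _ ≤ ((q k:ℝ)/100) * (q k:ℝ) := mul_le_mul_of_nonneg_right (hsumlt k) hqkpos
    have hSzero : 0 ≤ ∑ j ∈ range k, g z j :=
      Finset.sum_nonneg (fun j hj => hterm_nonneg j (Nat.le_of_lt (Finset.mem_range.mp hj)))
    have hlogr : Real.log (4 * a k) = Real.log 4 + L k :=
      Real.log_mul (by norm_num) (hapos k).ne'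
    have hfz : ‖f z‖
        = Real.exp ((Real.log (4 * a k) + Real.log (4 * a k))
            + ((∑ j ∈ range (k+1), g z j) + t)) := by
      have hsq : (4 * a k)^2
          = Real.exp (Real.log (4 * a k) + Real.log (4 * a k)) := by
        rw [Real.exp_add, Real.exp_log hrpos]; ring
      rw [heq, hz, hsq, ← Real.exp_add]
    constructor
    · -- lower : 4 * a (k+1) ≤ abs (f z)
      have hS : (q k:ℝ) * Real.log 3 ≤ ∑ j ∈ range (k+1), g z j := by
        rw [hSsplit]; linarith [hSzero, hgk_lb]
      have hlog3q := mul_le_mul_of_nonneg_left log3_lb hqkpos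
      have hlow : 4 * a (k+1) = Real.exp (Real.log 4 + (q k:ℝ)) := by
        rw [Real.exp_add, Real.exp_log (by norm_num : (0:ℝ) < 4), harec k]
      rw [hfz, hlow]
      apply Real.exp_le_exp.mpr
      rw [hlogr]
      have hLk0 : 0 ≤ L k := by linarith [hL500 k]
      nlinarith [habs'.1, hS, hlog3q]
    · -- upper : ≤ a (k+2) / 4
      have hS : ∑ j ∈ range (k+1), g z j ≤ ((q k:ℝ)/100) * (q k:ℝ) + (q k:ℝ) * 4 := by
        rw [hSsplit]; linarith [hSub, hgk_ub]
      have hA : (Real.log (4 * a k) + Real.log (4 * a k))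
          + ((∑ j ∈ range (k+1), g z j) + t) ≤ (q (k+1):ℝ) - 2 := by
        rw [hlogr]
        have hLhk := hLhalf k
        nlinarith [habs'.2, hS]
      have hfin : Real.exp ((q (k+1):ℝ) - 2) * 4 ≤ Real.exp ((q (k+1):ℝ)) := by
        have e : Real.exp ((q (k+1):ℝ)) = Real.exp ((q (k+1):ℝ) - 2) * Real.exp 2 := by
          rw [← Real.exp_add]; ring_nf
        rw [e]
        nlinarith [Real.exp_pos ((q (k+1):ℝ) - 2)]
      have ha2e : a (k+2) = Real.exp ((q (k+1):ℝ)) := harec (k+1)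
      rw [hfz, ha2e]
      rw [le_div_iff₀ (by norm_num : (0:ℝ) < 4)]
      calc Real.exp _ * 4 ≤ Real.exp ((q (k+1):ℝ) - 2) * 4 := by
            have := Real.exp_le_exp.mpr hA
            nlinarith [this]
      _ ≤ Real.exp ((q (k+1):ℝ)) := hfin
end
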